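/- arXiv:2410.12752 — 10 statements merged into one kernel-verified Lean document; each statement's English description precedes it below -/
import Mathlib

section
/- Let M = (m_{ij}) be a k×k matrix over the polynomial ring ℂ[x_0, x_1, x_2, ...] where each entry m_{ij} = c_{ij} x_{t(i,j)} is a scalar multiple of a single variable. Suppose all diagonal coefficients c_{ii} are nonzero, and for all i, j with c_{ij} ≠ 0, every entry m_{lm} with l ≤ i and m ≥ j, (l,m) ≠ (i,j), satisfies either c_{lm} = 0 or t(i,j) < t(l,m). Then, with respect to the lexicographic-type total monomial order induced by the variable order x_0 ≺ x_1 ≺ x_2 ≺ ... (comparing monomials by their largest variable, then recursively), the smallest monomial appearing with nonzero coefficient in det(M) is the diagonal product m_{11} m_{22} ⋯ m_{kk}. -/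
/-- `MinLT m m'` : the monomial `m` is strictly smaller than `m'` in the total order
on monomials of ℂ[x_0, x_1, ...] obtained by comparing the largest variables first,
then recursively: there is a variable `v` with `m v < m' v` and `m w = m' w` for all
`w > v`. -/
def MinLT (m m' : ℕ →₀ ℕ) : Prop := ∃ v, m v < m' v ∧ ∀ w, v < w → m w = m' w

section Aux

variable {k : ℕ} (c : Fin k → Fin k → ℂ) (t : Fin k → Fin k → ℕ)

/-- there is an entry weakly up-right of the diagonal position `(j,j)` among the
positions `(σ j', j')`. -/
lemma exists_upright (σ : Equiv.Perm (Fin k)) (j : Fin k) :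
    ∃ j', j ≤ j' ∧ σ j' ≤ j := by
  by_contra h
  push_neg at h
  have hmap : ∀ x ∈ Finset.Ici j, σ x ∈ Finset.Ioi j := by
    intro x hx
    simp only [Finset.mem_Ici] at hx
    simp only [Finset.mem_Ioi]
    exact h x hx
  have hcard := Finset.card_le_card_of_injOn σ hmap (σ.injective.injOn)
  rw [Fin.card_Ici, Fin.card_Ioi] at hcard
  have := j.isLt
  omega

lemma minlt_main (hdiag : ∀ i, c i i ≠ 0)
    (hupright : ∀ i j, c i j ≠ 0 → ∀ l m, l ≤ i → j ≤ m → (l, m) ≠ (i, j) →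
      c l m = 0 ∨ t i j < t l m)
    (σ : Equiv.Perm (Fin k)) (hσ : σ ≠ 1) (hc : ∀ i, c (σ i) i ≠ 0) :
    MinLT (∑ i, Finsupp.single (t i i) 1) (∑ i, Finsupp.single (t (σ i) i) 1) := by
  classical
  set F : Finset (Fin k) := Finset.univ.filter (fun j => σ j ≠ j) with hF
  have hFne : F.Nonempty := by
    by_contra hne
    refine hσ (Equiv.ext fun x => ?_)
    rw [Equiv.Perm.one_apply]
    by_contra hx
    exact hne ⟨x, Finset.mem_filter.2 ⟨Finset.mem_univ x, hx⟩⟩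
  set u : ℕ := F.sup' hFne (fun j => t (σ j) j) with hu
  obtain ⟨j₀, hj₀F, hj₀⟩ := Finset.exists_mem_eq_sup' hFne (fun j => t (σ j) j)
  -- every diagonal variable at a moved index is strictly below u
  have key : ∀ j ∈ F, t j j < u := by
    intro j hj
    obtain ⟨j', hjj', hσj'⟩ := exists_upright σ j
    have hjF : σ j ≠ j := by simpa [hF] using hj
    have hj'F : j' ∈ F := by
      simp only [hF, Finset.mem_filter, Finset.mem_univ, true_and]
      intro hfix
      have h2 : j' = j := le_antisymm (hfix ▸ hσj') hjj'
      subst h2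
      exact hjF hfix
    have hne : (σ j', j') ≠ (j, j) := by
      intro hEq
      have h1 : σ j' = j := congrArg Prod.fst hEq
      have h2 : j' = j := congrArg Prod.snd hEq
      subst h2
      exact hjF h1
    rcases hupright j j (hdiag j) (σ j') j' hσj' hjj' hne with h0 | hlt
    · exact absurd h0 (hc j')
    · exact lt_of_lt_of_le hlt (Finset.le_sup' (fun j => t (σ j) j) hj'F)
  -- counting formula
  have happly : ∀ (f : Fin k → ℕ) (w : ℕ),
      (∑ i, Finsupp.single (f i) 1) w = (Finset.univ.filter (fun i => f i = w)).card := by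
    intro f w
    rw [Finsupp.finset_sum_apply]
    rw [Finset.card_filter]
    congr 1
    ext i
    simp [Finsupp.single_apply]
  refine ⟨u, ?_, ?_⟩
  · rw [happly, happly]
    apply Finset.card_lt_card
    constructor
    · intro i hi
      simp only [Finset.mem_filter, Finset.mem_univ, true_and] at hi ⊢
      have hiF : i ∉ F := fun h => absurd hi (Nat.ne_of_lt (key i h))
      have : σ i = i := by
        by_contra h
        exact hiF (by simp [hF, h])
      rw [this, hi]
    · intro hsub
      have hj₀mem : j₀ ∈ Finset.univ.filter (fun i => t (σ i) i = u) := by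
        simp [hj₀.symm]
        exact hu.symm
      have := hsub hj₀mem
      simp only [Finset.mem_filter, Finset.mem_univ, true_and] at this
      exact absurd this (Nat.ne_of_lt (key j₀ hj₀F))
  · intro w hw
    rw [happly, happly]
    congr 1
    ext i
    simp only [Finset.mem_filter, Finset.mem_univ, true_and]
    constructor
    · intro hi
      have hiF : i ∉ F := by
        intro h
        have := key i h
        omega
      have : σ i = i := by
        by_contra h
        exact hiF (by simp [hF, h])
      rw [this, hi]
    · intro hi
      have hiF : i ∉ F := by
        intro h
        have := Finset.le_sup' (fun j => t (σ j) j) h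
        change t (σ i) i ≤ u at this
        omega
      have hfix : σ i = i := by
        by_contra h
        exact hiF (by simp [hF, h])
      rw [hfix] at hi
      exact hi

lemma prod_CX (σ : Equiv.Perm (Fin k)) :
    (∏ i, (MvPolynomial.C (c (σ i) i) * MvPolynomial.X (t (σ i) i) : MvPolynomial ℕ ℂ))
      = MvPolynomial.monomial (∑ i, Finsupp.single (t (σ i) i) 1) (∏ i, c (σ i) i) := by
  rw [MvPolynomial.monomial_sum_index,
    show (MvPolynomial.C (∏ i, c (σ i) i) : MvPolynomial ℕ ℂ) = ∏ i, MvPolynomial.C (c (σ i) i)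
      from map_prod _ _ _,
    ← Finset.prod_mul_distrib]
  refine Finset.prod_congr rfl fun i _ => ?_
  rw [MvPolynomial.C_mul_monomial, mul_one, MvPolynomial.C_mul_X_eq_monomial]

end Aux

/-- for a k×k matrix whose entries are scalar multiples of single
variables, with nonzero diagonal coefficients, such that every nonzero entry to the
upper right of a nonzero entry carries a strictly larger variable, the smallest
monomial with nonzero coefficient in det(M) is the diagonal product. -/
theorem stmt_3 (k : ℕ) (c : Fin k → Fin k → ℂ) (t : Fin k → Fin k → ℕ)
    (hdiag : ∀ i, c i i ≠ 0)
    (hupright : ∀ i j, c i j ≠ 0 → ∀ l m, l ≤ i → j ≤ m → (l, m) ≠ (i, j) →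
      c l m = 0 ∨ t i j < t l m) :
    let M : Matrix (Fin k) (Fin k) (MvPolynomial ℕ ℂ) :=
      fun i j => MvPolynomial.C (c i j) * MvPolynomial.X (t i j)
    let D : ℕ →₀ ℕ := ∑ i, Finsupp.single (t i i) 1
    MvPolynomial.coeff D M.det ≠ 0 ∧
      ∀ m ∈ M.det.support, m ≠ D → MinLT D m := by
  intro M D
  classical
  have hdet : M.det = ∑ σ : Equiv.Perm (Fin k),
      Equiv.Perm.sign σ • MvPolynomial.monomial (∑ i, Finsupp.single (t (σ i) i) 1)
        (∏ i, c (σ i) i) := by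
    rw [Matrix.det_apply]
    apply Finset.sum_congr rfl
    intro σ _
    rw [prod_CX]
  have hcoeff : ∀ (m : ℕ →₀ ℕ), MvPolynomial.coeff m M.det =
      ∑ σ : Equiv.Perm (Fin k),
        (Equiv.Perm.sign σ : ℤ) • (if (∑ i, Finsupp.single (t (σ i) i) 1) = m
          then (∏ i, c (σ i) i) else 0) := by
    intro m
    rw [hdet, MvPolynomial.coeff_sum]
    apply Finset.sum_congr rfl
    intro σ _
    rw [MvPolynomial.coeff_smul, MvPolynomial.coeff_monomial, Units.smul_def]
  constructor
  · rw [hcoeff]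
    rw [Finset.sum_eq_single (1 : Equiv.Perm (Fin k))]
    · simp only [Equiv.Perm.one_apply, map_one, Units.val_one, one_smul]
      erw [if_pos rfl]
      exact Finset.prod_ne_zero_iff.2 (fun i _ => hdiag i)
    · intro σ _ hσ
      by_cases hc : ∏ i, c (σ i) i = 0
      · simp [hc]
      · have hc' : ∀ i, c (σ i) i ≠ 0 := fun i =>
          Finset.prod_ne_zero_iff.1 hc i (Finset.mem_univ i)
        obtain ⟨v, hv, -⟩ := minlt_main c t hdiag hupright σ hσ hc'
        have hne : (∑ i, Finsupp.single (t (σ i) i) 1) ≠ D := by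
          intro hEq
          rw [hEq] at hv
          exact lt_irrefl _ hv
        rw [if_neg hne, smul_zero]
    · intro h
      exact absurd (Finset.mem_univ _) h
  · intro m hm hmD
    rw [MvPolynomial.mem_support_iff, hcoeff] at hm
    obtain ⟨σ, -, hσ⟩ := Finset.exists_ne_zero_of_sum_ne_zero hm
    have hif : (if (∑ i, Finsupp.single (t (σ i) i) 1) = m
        then (∏ i, c (σ i) i) else 0) ≠ 0 := by
      intro h
      rw [h, smul_zero] at hσ
      exact hσ rfl
    by_cases hEq : (∑ i, Finsupp.single (t (σ i) i) 1) = m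
    · rw [if_pos hEq] at hif
      have hc' : ∀ i, c (σ i) i ≠ 0 := fun i =>
        Finset.prod_ne_zero_iff.1 hif i (Finset.mem_univ i)
      have hσ1 : σ ≠ 1 := by
        intro h
        apply hmD
        rw [← hEq, h]
        rfl
      have := minlt_main c t hdiag hupright σ hσ1 hc'
      rw [hEq] at this
      exact this
    · rw [if_neg hEq] at hif
      exact absurd rfl hif
end

section
/- For a strictly increasing sequence α = (α_1 < ... < α_n) of naturals, let Δ_0(α) be the n×n matrix whose j-th column has i-th entry binom(α_j, i-1) · x^{(α_j - i + 1)} (interpreted as 0 when α_j - i + 1 < 0 or i - 1 > α_j), with x^{(l)} formal variables. Then the diagonal product, namely c · x^{(α_1)} x^{(α_2 - 1)} ⋯ x^{(α_n - n + 1)} with c = Π_j binom(α_j, j-1) ≠ 0, is the smallest monomial (for the order x ≺ x' ≺ x'' ≺ ...) appearing with nonzero coefficient in det(Δ_0(α)). -/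
open MvPolynomial


lemma aux_mono {n : ℕ} {α : Fin n → ℕ} (hα : StrictMono α) :
    ∀ (d : ℕ) (i j : Fin n), (j : ℕ) = (i : ℕ) + d → α i + d ≤ α j := by
  intro d
  induction d with
  | zero => intro i j h; have : j = i := Fin.ext (by omega); simp [this]
  | succ d ih =>
    intro i j h
    have hlt : (i : ℕ) + d < n := by have := j.isLt; omega
    have h1 := ih i ⟨(i : ℕ) + d, hlt⟩ rfl
    have h2 : α ⟨(i : ℕ) + d, hlt⟩ < α j := hα (by simp [Fin.lt_def]; omega)
    omega

lemma aux_le {n : ℕ} {α : Fin n → ℕ} (hα : StrictMono α) (j : Fin n) : (j : ℕ) ≤ α j := by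
  have h0 : (0 : ℕ) < n := by have := j.isLt; omega
  have := aux_mono hα (j : ℕ) ⟨0, h0⟩ j (by simp)
  omega

lemma aux_count {n : ℕ} (f : Fin n → ℕ) (w : ℕ) :
    (∑ i : Fin n, Finsupp.single (f i) 1) w
      = (Finset.univ.filter (fun i => f i = w)).card := by
  rw [Finset.card_filter, Finsupp.finset_sum_apply]
  simp [Finsupp.single_apply]

lemma aux_minlt {n : ℕ} {α : Fin n → ℕ} (hα : StrictMono α) (σ : Equiv.Perm (Fin n))
    (hσ : σ ≠ 1) :
    ∃ v : ℕ, (∑ j : Fin n, Finsupp.single (α j - (j : ℕ)) 1) v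
        < (∑ j : Fin n, Finsupp.single (α j - ((σ j : Fin n) : ℕ)) 1) v ∧
      ∀ w, v < w → (∑ j : Fin n, Finsupp.single (α j - (j : ℕ)) 1) w
        = (∑ j : Fin n, Finsupp.single (α j - ((σ j : Fin n) : ℕ)) 1) w := by
  classical
  obtain ⟨i0, hi0⟩ : ∃ i, σ i ≠ i := by
    by_contra h
    push_neg at h
    exact hσ (Equiv.ext h)
  have hSne : (Finset.univ.filter (fun i : Fin n => σ i ≠ i)).Nonempty := ⟨i0, by simp [hi0]⟩
  set S := Finset.univ.filter (fun i : Fin n => σ i ≠ i) with hS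
  set k := S.max' hSne with hk
  have hkS : k ∈ S := S.max'_mem hSne
  have hkne : σ k ≠ k := by simpa [hS] using hkS
  have F1 : ∀ j : Fin n, k < j → σ j = j := by
    intro j hj
    by_contra h
    have : j ∈ S := by simp [hS, h]
    exact absurd (S.le_max' j this) (not_le.mpr hj)
  have F2 : σ k < k := by
    rcases lt_trichotomy (σ k) k with h | h | h
    · exact h
    · exact absurd h hkne
    · have := F1 (σ k) h
      exact absurd (σ.injective this) hkne
  set T := Finset.univ.filter (fun j : Fin n => j ≤ k) with hT
  have hkT : k ∈ T := by simp [hT]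
  set v := T.sup (fun j => α j - ((σ j : Fin n) : ℕ)) with hv
  have hvk : α k - ((σ k : Fin n) : ℕ) ≤ v := Finset.le_sup (f := fun j => α j - ((σ j : Fin n) : ℕ)) hkT
  have hsub : ∀ j : Fin n, j ≤ k → α j - ((σ j : Fin n) : ℕ) ≤ v := by
    intro j hj; exact Finset.le_sup (f := fun j => α j - ((σ j : Fin n) : ℕ)) (by simp [hT, hj])
  obtain ⟨j0, hj0T, hj0⟩ := Finset.exists_mem_eq_sup T ⟨k, hkT⟩ (fun j => α j - ((σ j : Fin n) : ℕ))
  have hj0k : j0 ≤ k := by simpa [hT] using hj0T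
  have hDmono : ∀ j : Fin n, j ≤ k → α j - (j : ℕ) ≤ α k - (k : ℕ) := by
    intro j hj
    have h1 := aux_mono hα ((k : ℕ) - (j : ℕ)) j k (by
      have : (j : ℕ) ≤ (k : ℕ) := hj
      omega)
    have h2 := aux_le hα j
    omega
  have hαk := aux_le hα k
  have hkk : (σ k : ℕ) < (k : ℕ) := F2
  have hvbig : α k - (k : ℕ) < v := by omega
  refine ⟨v, ?_, ?_⟩
  · rw [aux_count, aux_count]
    apply Finset.card_lt_card
    rw [Finset.ssubset_iff_of_subset]
    · refine ⟨j0, ?_, ?_⟩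
      · simp [hj0.symm, hv]
      · simp only [Finset.mem_filter, Finset.mem_univ, true_and]
        have := hDmono j0 hj0k
        omega
    · intro j hj
      simp only [Finset.mem_filter, Finset.mem_univ, true_and] at hj ⊢
      have hjk : k < j := by
        by_contra h
        have := hDmono j (not_lt.mp h)
        omega
      rw [F1 j hjk]; exact hj
  · intro w hw
    rw [aux_count, aux_count]
    congr 1
    ext j
    simp only [Finset.mem_filter, Finset.mem_univ, true_and]
    rcases le_or_gt j k with h | h
    · constructor
      · intro hj; exfalso; have := hDmono j h; omega
      · intro hj; exfalso; have := hsub j h; omega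
    · rw [F1 j h]

lemma aux_prod {n : ℕ} (α : Fin n → ℕ) (σ : Equiv.Perm (Fin n)) :
    (∏ i : Fin n, (MvPolynomial.C ((α i).choose ((σ i : Fin n) : ℕ) : ℂ)
        * MvPolynomial.X (α i - ((σ i : Fin n) : ℕ))))
      = MvPolynomial.C (∏ i : Fin n, ((α i).choose ((σ i : Fin n) : ℕ) : ℂ))
        * MvPolynomial.monomial (∑ i : Fin n, Finsupp.single (α i - ((σ i : Fin n) : ℕ)) 1) 1 := by
  have hX : ∀ e : ℕ, (MvPolynomial.X e : MvPolynomial ℕ ℂ)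
      = MvPolynomial.monomial (Finsupp.single e 1) 1 := fun e => by
    rw [← MvPolynomial.X_pow_eq_monomial, pow_one]
  simp_rw [hX]
  rw [Finset.prod_mul_distrib, map_prod, MvPolynomial.monomial_sum_one]

lemma aux_coeff_det {n : ℕ} (α : Fin n → ℕ) (m : ℕ →₀ ℕ) :
    MvPolynomial.coeff m (Matrix.det (Matrix.of fun i j : Fin n =>
        MvPolynomial.C ((α j).choose (i : ℕ) : ℂ) * MvPolynomial.X (α j - (i : ℕ)))) =
      ∑ σ : Equiv.Perm (Fin n), (Equiv.Perm.sign σ : ℂ) *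
        (if (∑ i : Fin n, Finsupp.single (α i - ((σ i : Fin n) : ℕ)) 1) = m
          then ∏ i : Fin n, ((α i).choose ((σ i : Fin n) : ℕ) : ℂ) else 0) := by
  rw [Matrix.det_apply, MvPolynomial.coeff_sum]
  simp only [Matrix.of_apply]
  apply Finset.sum_congr rfl
  intro σ _
  rw [MvPolynomial.coeff_smul, aux_prod α σ, MvPolynomial.coeff_C_mul,
    MvPolynomial.coeff_monomial]
  rcases eq_or_ne (∑ i : Fin n, Finsupp.single (α i - ((σ i : Fin n) : ℕ)) 1) m with h | h
  · simp [h, Units.smul_def, zsmul_eq_mul]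
  · simp [h, Units.smul_def, zsmul_eq_mul]


/-- for a strictly increasing α, the diagonal product
`(∏ binom(α_j, j-1)) x^{(α_1)} x^{(α_2 - 1)} ⋯ x^{(α_n - n + 1)}` (0-indexed here)
is the smallest monomial with nonzero coefficient of det Δ_0(α), where Δ_0(α) has
(i,j) entry binom(α_j, i-1) x^{(α_j - i + 1)}. Here x^{(l)} is the variable `X l`. -/
theorem stmt_4 (n : ℕ) (α : Fin n → ℕ) (hα : StrictMono α) :
    let Δ : Matrix (Fin n) (Fin n) (MvPolynomial ℕ ℂ) :=
      fun i j => MvPolynomial.C ((α j).choose (i : ℕ) : ℂ)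
        * MvPolynomial.X (α j - (i : ℕ))
    let D : ℕ →₀ ℕ := ∑ j : Fin n, Finsupp.single (α j - (j : ℕ)) 1
    MvPolynomial.coeff D Δ.det = ∏ j : Fin n, ((α j).choose (j : ℕ) : ℂ) ∧
    (∏ j : Fin n, ((α j).choose (j : ℕ) : ℂ)) ≠ 0 ∧
    ∀ m ∈ Δ.det.support, m ≠ D → MinLT D m := by
  intro Δ D
  have hD : D = ∑ j : Fin n, Finsupp.single (α j - (j : ℕ)) 1 := rfl
  have key : ∀ m : ℕ →₀ ℕ, MvPolynomial.coeff m Δ.det =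
      ∑ σ : Equiv.Perm (Fin n), (Equiv.Perm.sign σ : ℂ) *
        (if (∑ i : Fin n, Finsupp.single (α i - ((σ i : Fin n) : ℕ)) 1) = m
          then ∏ i : Fin n, ((α i).choose ((σ i : Fin n) : ℕ) : ℂ) else 0) :=
    fun m => aux_coeff_det α m
  refine ⟨?_, ?_, ?_⟩
  · rw [key D, Finset.sum_eq_single (1 : Equiv.Perm (Fin n))]
    · simp [hD]
    · intro σ _ hσ1
      obtain ⟨v, hv1, hv2⟩ := aux_minlt hα σ hσ1
      have hne : (∑ i : Fin n, Finsupp.single (α i - ((σ i : Fin n) : ℕ)) 1) ≠ D := by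
        intro h
        rw [h.trans hD] at hv1
        exact lt_irrefl _ hv1
      simp [hne]
    · simp
  · rw [Finset.prod_ne_zero_iff]
    intro j _
    exact Nat.cast_ne_zero.mpr (Nat.choose_pos (aux_le hα j)).ne'
  · intro m hm hmD
    have hc : MvPolynomial.coeff m Δ.det ≠ 0 := by
      simpa [MvPolynomial.mem_support_iff] using hm
    rw [key m] at hc
    obtain ⟨σ, -, hσ0⟩ := Finset.exists_ne_zero_of_sum_ne_zero hc
    by_cases hif : (∑ i : Fin n, Finsupp.single (α i - ((σ i : Fin n) : ℕ)) 1) = m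
    · have hσ1 : σ ≠ 1 := by
        rintro rfl
        apply hmD
        rw [← hif, hD]
        rfl
      obtain ⟨v, hv1, hv2⟩ := aux_minlt hα σ hσ1
      refine ⟨v, ?_, ?_⟩
      · rw [hD, ← hif]; exact hv1
      · intro w hw; rw [hD, ← hif]; exact hv2 w hw
    · simp [hif] at hσ0
end

section
/- The family of determinants { det Δ_0(α) : α a strictly increasing finite sequence of naturals } is a basis of the polynomial ring E = ℂ[x, x', x'', ...] as a ℂ-vector space. -/
open Finsupp AddMonoidAlgebra Equiv Finset

noncomputable section
namespace Stmt6Proof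



/-- the monomial exponent attached to a permutation term of the determinant -/
def mu {n : ℕ} (α : Fin n → ℕ) (σ : Equiv.Perm (Fin n)) : ℕ →₀ ℕ :=
  ∑ i : Fin n, Finsupp.single (α i - (σ i : ℕ)) 1

lemma pair_lt {w x y z : ℕ} (hwx : w < x) (hwy : w < y) (hwz : w < z) :
    toLex (Finsupp.single x 1 + Finsupp.single y 1)
      < toLex (Finsupp.single w 1 + Finsupp.single z 1) := by
  rw [Finsupp.Lex.lt_iff]
  refine ⟨w, fun j hj => ?_, ?_⟩
  · simp only [ofLex_toLex, Finsupp.add_apply, Finsupp.single_apply]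
    split_ifs <;> omega
  · simp only [ofLex_toLex, Finsupp.add_apply, Finsupp.single_apply]
    split_ifs <;> omega

lemma le_of_strictMono {n : ℕ} {α : Fin n → ℕ} (hα : StrictMono α) (i : Fin n) :
    (i : ℕ) ≤ α i := by
  obtain ⟨v, hv⟩ := i
  induction v with
  | zero => exact Nat.zero_le _
  | succ k ih =>
    have hk : k < n := by omega
    have h1 := ih hk
    have h2 : α ⟨k, hk⟩ < α ⟨k+1, hv⟩ := hα (by simp [Fin.lt_def])
    simp only [Fin.val_mk] at h1 ⊢
    omega





lemma toLex_add_lt_add_left {v a b : ℕ →₀ ℕ} (h : toLex a < toLex b) :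
    toLex (v + a) < toLex (v + b) := by
  rw [Finsupp.Lex.lt_iff] at h ⊢
  obtain ⟨i, h1, h2⟩ := h
  refine ⟨i, fun k hk => ?_, ?_⟩
  · simp only [ofLex_toLex, Finsupp.add_apply] at h1 ⊢
    rw [h1 k hk]
  · simp only [ofLex_toLex, Finsupp.add_apply] at h2 ⊢
    omega


lemma exists_swap {n : ℕ} {α : Fin n → ℕ} (hα : StrictMono α) (σ : Equiv.Perm (Fin n))
    (hval : ∀ i, (σ i : ℕ) ≤ α i) (hσ : σ ≠ 1) :
    ∃ σ' : Equiv.Perm (Fin n), (∀ i, (σ' i : ℕ) ≤ α i) ∧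
      (∑ i, (σ i : ℕ) * α i) < (∑ i, (σ' i : ℕ) * α i) ∧
      toLex (mu α σ') < toLex (mu α σ) := by
  classical
  have hne : ∃ j, σ j ≠ j := by
    by_contra h
    push_neg at h
    exact hσ (Equiv.ext h)
  set s : Finset (Fin n) := Finset.univ.filter (fun j => σ j ≠ j) with hs
  have hsne : s.Nonempty := by
    obtain ⟨j, hj⟩ := hne
    exact ⟨j, by simp [hs, hj]⟩
  set j := s.min' hsne with hjdef
  have hjmem : j ∈ s := Finset.min'_mem _ _
  have hj : σ j ≠ j := by simpa [hs] using hjmem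
  have hmin : ∀ x, x < j → σ x = x := by
    intro x hx
    by_contra hxx
    exact absurd (Finset.min'_le s x (by simp [hs, hxx])) hx.not_ge
  have hjlt : j < σ j := by
    rcases lt_trichotomy (σ j) j with h | h | h
    · exact absurd (σ.injective (hmin _ h)) hj
    · exact absurd h hj
    · exact h
  set t := σ.symm j with ht
  have hσt : σ t = j := σ.apply_symm_apply j
  have htj : j < t := by
    rcases lt_trichotomy t j with h | h | h
    · exact absurd ((hmin _ h).symm.trans hσt) h.ne
    · exact absurd (h ▸ hσt) hj
    · exact h
  have hσσ : σ t < σ j := hσt ▸ hjlt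
  have happ1 : (σ * Equiv.swap j t) j = σ t := by simp [Equiv.Perm.mul_apply]
  have happ2 : (σ * Equiv.swap j t) t = σ j := by simp [Equiv.Perm.mul_apply]
  have happ3 : ∀ x, x ≠ j → x ≠ t → (σ * Equiv.swap j t) x = σ x := by
    intro x h1 h2
    simp [Equiv.Perm.mul_apply, Equiv.swap_apply_of_ne_of_ne h1 h2]
  have hvj : (σ j : ℕ) ≤ α j := hval j
  have hvt : (σ t : ℕ) ≤ α t := hval t
  have hajt : α j < α t := hα htj
  have hstj : (σ t : ℕ) < (σ j : ℕ) := hσσ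
  refine ⟨σ * Equiv.swap j t, ?_, ?_, ?_⟩
  · -- validity
    intro x
    rcases eq_or_ne x j with rfl | h1
    · rw [happ1]; omega
    rcases eq_or_ne x t with rfl | h2
    · rw [happ2]; omega
    · rw [happ3 x h1 h2]; exact hval x
  · -- sums
    have hsplit : ∀ τ : Equiv.Perm (Fin n),
        (∑ i, (τ i : ℕ) * α i) =
          (∑ x ∈ Finset.univ \ {j, t}, (τ x : ℕ) * α x) + ((τ j : ℕ) * α j + (τ t : ℕ) * α t) := by
      intro τ
      rw [← Finset.sum_pair (f := fun x => (τ x : ℕ) * α x) htj.ne,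
        Finset.sum_sdiff (Finset.subset_univ _)]
    have hcong : (∑ x ∈ Finset.univ \ {j, t}, ((σ * Equiv.swap j t) x : ℕ) * α x)
        = ∑ x ∈ Finset.univ \ {j, t}, (σ x : ℕ) * α x :=
      Finset.sum_congr rfl (fun x hx => by
        rw [Finset.mem_sdiff, Finset.mem_insert, Finset.mem_singleton] at hx
        push_neg at hx
        rw [happ3 x hx.2.1 hx.2.2])
    rw [hsplit σ, hsplit (σ * Equiv.swap j t), happ1, happ2, hcong]
    have := mul_add_mul_lt_mul_add_mul (a := (σ t : ℕ)) (b := (σ j : ℕ))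
      (c := α j) (d := α t) hstj hajt
    omega
  · -- lex
    have hsplit : ∀ τ : Equiv.Perm (Fin n),
        mu α τ =
          (∑ x ∈ Finset.univ \ {j, t}, Finsupp.single (α x - (τ x : ℕ)) 1) +
            (Finsupp.single (α j - (τ j : ℕ)) 1 + Finsupp.single (α t - (τ t : ℕ)) 1) := by
      intro τ
      rw [mu, ← Finset.sum_pair (f := fun x => Finsupp.single (α x - (τ x : ℕ)) 1) htj.ne,
        Finset.sum_sdiff (Finset.subset_univ _)]
    have hcong : (∑ x ∈ Finset.univ \ {j, t}, Finsupp.single (α x - ((σ * Equiv.swap j t) x : ℕ)) 1)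
        = ∑ x ∈ Finset.univ \ {j, t}, Finsupp.single (α x - (σ x : ℕ)) 1 :=
      Finset.sum_congr rfl (fun x hx => by
        rw [Finset.mem_sdiff, Finset.mem_insert, Finset.mem_singleton] at hx
        push_neg at hx
        rw [happ3 x hx.2.1 hx.2.2])
    rw [hsplit σ, hsplit (σ * Equiv.swap j t), happ1, happ2, hcong]
    have key := pair_lt (w := α j - (σ j : ℕ)) (x := α j - (σ t : ℕ))
      (y := α t - (σ j : ℕ)) (z := α t - (σ t : ℕ)) (by omega) (by omega) (by omega)
    exact toLex_add_lt_add_left key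






lemma msum_le {n : ℕ} (α : Fin n → ℕ) (σ : Equiv.Perm (Fin n)) :
    (∑ i, (σ i : ℕ) * α i) ≤ n * (∑ i, α i) := by
  rw [Finset.mul_sum]
  exact Finset.sum_le_sum fun i _ => Nat.mul_le_mul_right _ (σ i).isLt.le

lemma mu_one_lt_aux {n : ℕ} {α : Fin n → ℕ} (hα : StrictMono α) :
    ∀ (k : ℕ) (σ : Equiv.Perm (Fin n)),
      n * (∑ i, α i) - (∑ i, (σ i : ℕ) * α i) ≤ k →
      (∀ i, (σ i : ℕ) ≤ α i) → σ ≠ 1 → toLex (mu α 1) < toLex (mu α σ) := by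
  intro k
  induction k with
  | zero =>
    intro σ hk hval hσ
    obtain ⟨σ', _, hlt, _⟩ := exists_swap hα σ hval hσ
    have := msum_le α σ'
    omega
  | succ k IH =>
    intro σ hk hval hσ
    obtain ⟨σ', hval', hlt, hlex⟩ := exists_swap hα σ hval hσ
    rcases eq_or_ne σ' 1 with rfl | hσ'
    · exact hlex
    · have hb := msum_le α σ'
      exact (IH σ' (by omega) hval' hσ').trans hlex

lemma mu_one_lt {n : ℕ} {α : Fin n → ℕ} (hα : StrictMono α) (σ : Equiv.Perm (Fin n))
    (hval : ∀ i, (σ i : ℕ) ≤ α i) (hσ : σ ≠ 1) : toLex (mu α 1) < toLex (mu α σ) :=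
  mu_one_lt_aux hα _ σ le_rfl hval hσ







def D : (ℕ →₀ ℕ) → WithBot (Lex (ℕ →₀ ℕ))ᵒᵈ :=
  fun m => ((OrderDual.toDual (toLex m) : (Lex (ℕ →₀ ℕ))ᵒᵈ) : WithBot (Lex (ℕ →₀ ℕ))ᵒᵈ)

lemma D_inj : Function.Injective D := fun a b h => by
  simpa [D] using h

lemma D_lt_iff {a b : ℕ →₀ ℕ} : D a < D b ↔ toLex b < toLex a := by
  rw [D, D, WithBot.coe_lt_coe]
  exact Iff.rfl

lemma bot_lt_D (a : ℕ →₀ ℕ) : ⊥ < D a := WithBot.bot_lt_coe _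

def poly {n : ℕ} (α : Fin n → ℕ) : MvPolynomial ℕ ℂ :=
  Matrix.det (fun i j : Fin n =>
    MvPolynomial.C ((α j).choose (i : ℕ) : ℂ) * MvPolynomial.X (α j - (i : ℕ)))

def coefσ {n : ℕ} (α : Fin n → ℕ) (σ : Equiv.Perm (Fin n)) : ℂ :=
  ((Equiv.Perm.sign σ : ℤ) : ℂ) * ∏ i, ((α i).choose (σ i : ℕ) : ℂ)

lemma prod_C_mul_X {ι : Type*} (s : Finset ι) (b : ι → ℂ) (d : ι → ℕ) :
    ∏ i ∈ s, (MvPolynomial.C (b i) * MvPolynomial.X (d i)) =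
      MvPolynomial.monomial (∑ i ∈ s, Finsupp.single (d i) 1) (∏ i ∈ s, b i) := by
  classical
  induction s using Finset.induction with
  | empty => simp [MvPolynomial.monomial_zero']
  | insert _ _ h ih =>
    rw [Finset.prod_insert h, Finset.sum_insert h, Finset.prod_insert h, ih,
      MvPolynomial.X, MvPolynomial.C_mul_monomial, mul_one, MvPolynomial.monomial_mul]

lemma poly_eq {n : ℕ} (α : Fin n → ℕ) :
    poly α = ∑ σ : Equiv.Perm (Fin n), MvPolynomial.monomial (mu α σ) (coefσ α σ) := by
  rw [poly]; refine (Matrix.det_apply' _).trans ?_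
  refine Finset.sum_congr rfl fun σ _ => ?_
  rw [prod_C_mul_X Finset.univ (fun i => ((α i).choose (σ i : ℕ) : ℂ))
    (fun i => α i - (σ i : ℕ)), ← map_intCast (MvPolynomial.C (σ := ℕ) (R := ℂ)),
    MvPolynomial.C_mul_monomial, mu, coefσ]

lemma coefσ_one_ne_zero {n : ℕ} {α : Fin n → ℕ} (hα : StrictMono α) :
    coefσ α 1 ≠ 0 := by
  rw [coefσ]
  simp only [map_one, Units.val_one, Int.cast_one, one_mul]
  rw [Finset.prod_ne_zero_iff]
  intro i _
  have := le_of_strictMono hα i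
  simp only [Equiv.Perm.one_apply]
  exact_mod_cast (Nat.choose_pos this).ne'

lemma valid_of_coefσ_ne_zero {n : ℕ} {α : Fin n → ℕ} {σ : Equiv.Perm (Fin n)}
    (h : coefσ α σ ≠ 0) : ∀ i, (σ i : ℕ) ≤ α i := by
  intro i
  by_contra hlt
  push_neg at hlt
  apply h
  rw [coefσ, Finset.prod_eq_zero (Finset.mem_univ i), mul_zero]
  rw [Nat.choose_eq_zero_of_lt hlt]
  exact Nat.cast_zero

lemma supDegree_poly {n : ℕ} {α : Fin n → ℕ} (hα : StrictMono α) :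
    supDegree D (poly α) = D (mu α 1) ∧
      leadingCoeff D (poly α) = ∏ i, ((α i).choose (i : ℕ) : ℂ) := by
  have hmax : ∀ σ ∈ (Finset.univ : Finset (Equiv.Perm (Fin n))), σ ≠ 1 →
      supDegree D (AddMonoidAlgebra.single (mu α σ) (coefσ α σ))
        < supDegree D (AddMonoidAlgebra.single (mu α 1) (coefσ α 1)) := by
    intro σ _ hσ
    rw [supDegree_single_ne_zero _ (coefσ_one_ne_zero hα), supDegree_single]
    split_ifs with h
    · exact bot_lt_D _
    · exact D_lt_iff.mpr (mu_one_lt hα σ (valid_of_coefσ_ne_zero h) hσ)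
  have key := supDegree_leadingCoeff_sum_eq (D := D)
    (f := fun σ : Equiv.Perm (Fin n) => AddMonoidAlgebra.single (mu α σ) (coefσ α σ))
    (Finset.mem_univ 1) hmax
  have hpoly : poly α = ∑ σ : Equiv.Perm (Fin n),
      AddMonoidAlgebra.single (mu α σ) (coefσ α σ) := by
    rw [poly_eq]
    exact Finset.sum_congr rfl fun σ _ => (MvPolynomial.single_eq_monomial _ _).symm
  rw [hpoly]
  rw [key.1, key.2, supDegree_single_ne_zero _ (coefσ_one_ne_zero hα),
    leadingCoeff_single D_inj]
  refine ⟨rfl, ?_⟩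
  rw [coefσ]
  simp [Equiv.Perm.one_apply]





/-- total weight of a monomial, with variable `k` having weight `k+1` -/

def wt : (ℕ →₀ ℕ) →+ ℕ :=
  Finsupp.liftAddHom fun k => AddMonoidHom.mulLeft (k + 1)

lemma wt_single (d : ℕ) : wt (Finsupp.single d 1) = d + 1 := by
  simp [wt, Finsupp.liftAddHom_apply_single]

lemma wt_mu {n : ℕ} {α : Fin n → ℕ} (hα : StrictMono α) (σ : Equiv.Perm (Fin n))
    (hval : ∀ i, (σ i : ℕ) ≤ α i) : wt (mu α σ) = wt (mu α 1) := by
  have hwt : ∀ τ : Equiv.Perm (Fin n), wt (mu α τ) = ∑ i, (α i - (τ i : ℕ) + 1) := by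
    intro τ
    rw [mu, map_sum]
    exact Finset.sum_congr rfl fun i _ => wt_single _
  have key : ∀ (τ : Equiv.Perm (Fin n)), (∀ i, (τ i : ℕ) ≤ α i) →
      (∑ i, (α i - (τ i : ℕ) + 1)) + ∑ i, (τ i : ℕ) = ∑ i, (α i + 1) := by
    intro τ hv
    rw [← Finset.sum_add_distrib]
    exact Finset.sum_congr rfl fun i _ => by have := hv i; omega
  have hval1 : ∀ i : Fin n, (((1 : Equiv.Perm (Fin n)) i : ℕ)) ≤ α i := by
    intro i
    rw [Equiv.Perm.one_apply]
    exact le_of_strictMono hα i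
  have h1 := key σ hval
  have h2 := key 1 hval1
  have h3 : ∑ i, (σ i : ℕ) = ∑ i, (((1 : Equiv.Perm (Fin n)) i : ℕ)) :=
    Equiv.sum_comp σ fun i : Fin n => ((i : ℕ))
  rw [hwt σ, hwt 1]
  omega

lemma term_le_wt (m : ℕ →₀ ℕ) (k : ℕ) : (k + 1) * m k ≤ wt m := by
  rcases eq_or_ne (m k) 0 with h | h
  · simp [h]
  · have hk : k ∈ m.support := Finsupp.mem_support_iff.mpr h
    have : wt m = ∑ j ∈ m.support, (j + 1) * m j := by
      rw [wt, Finsupp.liftAddHom_apply]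
      rfl
    rw [this]
    exact Finset.single_le_sum (f := fun j => (j + 1) * m j) (fun j _ => Nat.zero_le _) hk

lemma fib_finite (W : ℕ) : {m : ℕ →₀ ℕ | wt m = W}.Finite := by
  set b : ℕ →₀ ℕ := ∑ k ∈ Finset.range (W + 1), Finsupp.single k W with hb
  apply (Set.finite_Icc 0 b).subset
  intro m hm
  refine ⟨zero_le, ?_⟩
  rw [Finsupp.le_def]
  intro k
  have hterm := term_le_wt m k
  rw [Set.mem_setOf_eq.mp hm] at hterm
  have hbk : b k = if k < W + 1 then W else 0 := by
    rw [hb, Finsupp.finset_sum_apply]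
    simp only [Finsupp.single_apply]
    rw [Finset.sum_ite_eq' (Finset.range (W + 1)) k fun _ => W]
    simp [Finset.mem_range]
  rw [hbk]
  split_ifs with h
  · have h2 : m k ≤ (k + 1) * m k := Nat.le_mul_of_pos_left _ (Nat.succ_pos k)
    omega
  · rcases Nat.eq_zero_or_pos (m k) with h3 | h3
    · omega
    · have h2 : k + 1 ≤ (k + 1) * m k := Nat.le_mul_of_pos_right _ h3
      omega

def fib (W : ℕ) : Finset (ℕ →₀ ℕ) := (fib_finite W).toFinset

def meas (m : ℕ →₀ ℕ) : ℕ :=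
  ((fib (wt m)).filter fun m' => toLex m < toLex m').card

lemma meas_lt {m m' : ℕ →₀ ℕ} (hw : wt m' = wt m) (h : toLex m < toLex m') :
    meas m' < meas m := by
  rw [meas, meas, hw]
  apply Finset.card_lt_card
  rw [Finset.ssubset_iff_of_subset]
  · refine ⟨m', ?_, ?_⟩
    · rw [Finset.mem_filter]
      exact ⟨(fib_finite _).mem_toFinset.mpr hw, h⟩
    · rw [Finset.mem_filter]
      rintro ⟨-, habs⟩
      exact lt_irrefl _ habs
  · intro x hx
    rw [Finset.mem_filter] at hx ⊢
    exact ⟨hx.1, h.trans hx.2⟩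






lemma sum_single_ofFn {n : ℕ} (f : Fin n → ℕ) :
    ∑ i : Fin n, Finsupp.single (f i) 1 = Multiset.toFinsupp (↑(List.ofFn f) : Multiset ℕ) := by
  induction n with
  | zero => simp
  | succ n ih =>
    rw [List.ofFn_succ, Fin.sum_univ_succ, ih (fun i => f i.succ), ← Multiset.cons_coe,
      ← Multiset.singleton_add, map_add, Multiset.toFinsupp_singleton]

lemma mu_one_eq {n : ℕ} (α : Fin n → ℕ) :
    mu α 1 = Multiset.toFinsupp (↑(List.ofFn fun i : Fin n => α i - (i : ℕ)) : Multiset ℕ) := by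
  rw [mu, ← sum_single_ofFn]
  exact Finset.sum_congr rfl fun i _ => by rw [Equiv.Perm.one_apply]

lemma mono_sub {n : ℕ} {α : Fin n → ℕ} (hα : StrictMono α) :
    Monotone fun i : Fin n => α i - (i : ℕ) := by
  intro i j hij
  suffices H : ∀ d : ℕ, ∀ j : Fin n, (j : ℕ) = (i : ℕ) + d → α i + (j : ℕ) ≤ α j + (i : ℕ) by
    have hle : (i : ℕ) ≤ (j : ℕ) := Fin.le_def.mp hij
    have := H ((j : ℕ) - (i : ℕ)) j (by omega)
    show α i - (i : ℕ) ≤ α j - (j : ℕ)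
    omega
  intro d
  induction d with
  | zero =>
    intro j hj
    have : j = i := Fin.ext (by omega)
    subst this
    omega
  | succ d ihd =>
    intro j hj
    have hd : (i : ℕ) + d < n := by have := j.isLt; omega
    have h1 := ihd ⟨(i : ℕ) + d, hd⟩ rfl
    have h2 : α ⟨(i : ℕ) + d, hd⟩ < α j := hα (by rw [Fin.lt_def]; simp; omega)
    have h3 : ((⟨(i : ℕ) + d, hd⟩ : Fin n) : ℕ) = (i : ℕ) + d := rfl
    omega

/-- the index type of the theorem -/
def Idx := {s : Σ n : ℕ, Fin n → ℕ // StrictMono s.2}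

lemma lam_inj (a b : Idx) (h : mu a.1.2 1 = mu b.1.2 1) : a = b := by
  obtain ⟨⟨n, α⟩, hα⟩ := a
  obtain ⟨⟨n', α'⟩, hα'⟩ := b
  simp only at h hα hα' ⊢
  rw [mu_one_eq α, mu_one_eq α'] at h
  have hmult : (↑(List.ofFn fun i : Fin n => α i - (i : ℕ)) : Multiset ℕ)
      = ↑(List.ofFn fun i : Fin n' => α' i - (i : ℕ)) := Multiset.toFinsupp.injective h
  have hperm := Multiset.coe_eq_coe.mp hmult
  have hsorted1 : List.Pairwise (· ≤ ·) (List.ofFn fun i : Fin n => α i - (i : ℕ)) :=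
    (List.sortedLE_ofFn_iff.mpr (mono_sub hα)).pairwise
  have hsorted2 : List.Pairwise (· ≤ ·) (List.ofFn fun i : Fin n' => α' i - (i : ℕ)) :=
    (List.sortedLE_ofFn_iff.mpr (mono_sub hα')).pairwise
  have hlist := List.Perm.eq_of_pairwise' hsorted1 hsorted2 hperm
  have hn : n = n' := by
    have := congrArg List.length hlist
    simpa using this
  subst hn
  have hfun := List.ofFn_inj.mp hlist
  have hαα : α = α' := by
    funext i
    have h1 := congrFun hfun i
    have h2 := le_of_strictMono hα i
    have h3 := le_of_strictMono hα' i
    omega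
  subst hαα
  rfl

/-- construction of the inverse: sorted list of parts -/
def sortedList (m : ℕ →₀ ℕ) : List ℕ := Multiset.sort (Finsupp.toMultiset m) (· ≤ ·)

def invα (m : ℕ →₀ ℕ) : Fin (sortedList m).length → ℕ :=
  fun i => (sortedList m).get i + (i : ℕ)

lemma invα_strictMono (m : ℕ →₀ ℕ) : StrictMono (invα m) := by
  intro i j hij
  have h1 : (sortedList m).get i ≤ (sortedList m).get j :=
    (Multiset.pairwise_sort (s := Finsupp.toMultiset m) (r := (· ≤ ·))).sortedLE.monotone_get hij.le
  have h2 : (i : ℕ) < (j : ℕ) := hij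
  rw [invα, invα]
  omega

lemma mu_invα (m : ℕ →₀ ℕ) : mu (invα m) 1 = m := by
  rw [mu_one_eq]
  have hfn : (List.ofFn fun i => invα m i - (i : ℕ)) = List.ofFn (sortedList m).get := by
    refine congrArg List.ofFn (funext fun i => ?_)
    rw [invα]
    omega
  rw [hfn, List.ofFn_get, sortedList, Multiset.sort_eq, Finsupp.toMultiset_toFinsupp]




def F : Idx → MvPolynomial ℕ ℂ :=
  fun α => Matrix.det (fun i j : Fin α.1.1 =>
    MvPolynomial.C ((α.1.2 j).choose (i : ℕ) : ℂ)
      * MvPolynomial.X (α.1.2 j - (i : ℕ)))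

lemma F_eq (a : Idx) : F a = poly a.1.2 := rfl

lemma prod_choose_ne_zero {n : ℕ} {α : Fin n → ℕ} (hα : StrictMono α) :
    (∏ i, ((α i).choose (i : ℕ) : ℂ)) ≠ 0 := by
  have h := coefσ_one_ne_zero hα
  rw [coefσ] at h
  simp only [map_one, Units.val_one, Int.cast_one, one_mul, Equiv.Perm.one_apply] at h
  exact h

lemma F_ne_zero (a : Idx) : F a ≠ 0 := by
  have h := (supDegree_poly a.2).2
  rw [F_eq]
  intro habs
  rw [habs, leadingCoeff_zero] at h
  exact prod_choose_ne_zero a.2 h.symm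

lemma supDegree_F (a : Idx) : supDegree D (F a) = D (mu a.1.2 1) :=
  (supDegree_poly a.2).1

lemma supDegree_smul {c : ℂ} (hc : c ≠ 0) (p : MvPolynomial ℕ ℂ) :
    supDegree D (c • p) = supDegree D p := by
  rw [supDegree, supDegree]; congr 1; exact Finsupp.support_smul_eq hc

theorem li : LinearIndependent ℂ F := by
  rw [linearIndependent_iff]
  intro l hl
  by_contra hne
  apply absurd hl
  rw [Finsupp.linearCombination_apply, Finsupp.sum]
  apply sum_ne_zero_of_injOn_supDegree' (D := D)
  · obtain ⟨a, ha⟩ := Finsupp.support_nonempty_iff.mpr hne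
    exact ⟨a, ha, smul_ne_zero (Finsupp.mem_support_iff.mp ha) (F_ne_zero a)⟩
  · intro a ha b hb hab
    simp only [Function.comp_apply] at hab
    rw [supDegree_smul (Finsupp.mem_support_iff.mp ha), supDegree_smul
      (Finsupp.mem_support_iff.mp hb), supDegree_F, supDegree_F] at hab
    exact lam_inj a b (D_inj hab)

lemma coeff_lam (m : ℕ →₀ ℕ) :
    MvPolynomial.coeff m (poly (invα m)) = ∏ i, (((invα m) i).choose (i : ℕ) : ℂ) := by
  have h2 := (supDegree_poly (invα_strictMono m)).2
  rw [leadingCoeff, (supDegree_poly (invα_strictMono m)).1, mu_invα,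
    Function.leftInverse_invFun D_inj m] at h2
  exact h2

lemma monomial_mem :
    ∀ m : ℕ →₀ ℕ, (MvPolynomial.monomial m) 1 ∈ Submodule.span ℂ (Set.range F) := by
  suffices H : ∀ (k : ℕ) (m : ℕ →₀ ℕ), meas m = k →
      (MvPolynomial.monomial m) 1 ∈ Submodule.span ℂ (Set.range F) from fun m => H _ m rfl
  intro k
  induction k using Nat.strong_induction_on with
  | _ k IH =>
    intro m hk
    set a : Idx := ⟨⟨(sortedList m).length, invα m⟩, invα_strictMono m⟩ with hadef
    have hFa : F a ∈ Submodule.span ℂ (Set.range F) := Submodule.subset_span ⟨a, rfl⟩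
    have hcne : MvPolynomial.coeff m (F a) ≠ 0 := by
      rw [F_eq, coeff_lam m]
      exact prod_choose_ne_zero (invα_strictMono m)
    have hmem : m ∈ (F a).support := MvPolynomial.mem_support_iff.mpr hcne
    have hrest : ∀ m' ∈ (F a).support.erase m,
        (MvPolynomial.monomial m') (MvPolynomial.coeff m' (F a))
          ∈ Submodule.span ℂ (Set.range F) := by
      intro m' hm'
      have hm'supp := Finset.mem_of_mem_erase hm'
      have hm'ne : m' ≠ m := Finset.ne_of_mem_erase hm'
      have hsub : (F a).support ⊆ Finset.univ.biUnion
          (fun σ : Equiv.Perm (Fin (sortedList m).length) =>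
            ((MvPolynomial.monomial (mu (invα m) σ)) (coefσ (invα m) σ)).support) := by
        rw [F_eq, poly_eq]
        exact MvPolynomial.support_sum
      obtain ⟨σ, -, hσm⟩ := Finset.mem_biUnion.mp (hsub hm'supp)
      have hcσ : coefσ (invα m) σ ≠ 0 := by
        intro habs
        rw [habs] at hσm
        simp [MvPolynomial.support_monomial] at hσm
      have hm'eq : m' = mu (invα m) σ := by
        rw [MvPolynomial.support_monomial, if_neg hcσ] at hσm
        exact Finset.mem_singleton.mp hσm
      have hσ1 : σ ≠ 1 := by
        intro habs
        rw [habs, mu_invα] at hm'eq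
        exact hm'ne hm'eq
      have hlt : toLex m < toLex m' := by
        rw [hm'eq]
        conv_lhs => rw [← mu_invα m]
        exact mu_one_lt (invα_strictMono m) σ (valid_of_coefσ_ne_zero hcσ) hσ1
      have hwt : wt m' = wt m := by
        rw [hm'eq, wt_mu (invα_strictMono m) σ (valid_of_coefσ_ne_zero hcσ), mu_invα]
      have hmeas : meas m' < k := hk ▸ meas_lt hwt hlt
      have hIH := IH _ hmeas m' rfl
      have : (MvPolynomial.monomial m') (MvPolynomial.coeff m' (F a))
          = MvPolynomial.coeff m' (F a) • (MvPolynomial.monomial m') 1 := by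
        rw [MvPolynomial.smul_monomial, smul_eq_mul, mul_one]
      rw [this]
      exact Submodule.smul_mem _ _ hIH
    have hdecomp : (MvPolynomial.monomial m) (MvPolynomial.coeff m (F a))
        = F a - ∑ m' ∈ (F a).support.erase m,
            (MvPolynomial.monomial m') (MvPolynomial.coeff m' (F a)) := by
      have := Finset.add_sum_erase (F a).support
        (fun v => (MvPolynomial.monomial v) (MvPolynomial.coeff v (F a))) hmem
      beta_reduce at this
      rw [MvPolynomial.support_sum_monomial_coeff] at this
      linear_combination this
    have hmono : (MvPolynomial.monomial m) (MvPolynomial.coeff m (F a))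
        ∈ Submodule.span ℂ (Set.range F) := by
      rw [hdecomp]
      exact Submodule.sub_mem _ hFa (Submodule.sum_mem _ hrest)
    have hscale : (MvPolynomial.monomial m) (1 : ℂ)
        = (MvPolynomial.coeff m (F a))⁻¹ • (MvPolynomial.monomial m) (MvPolynomial.coeff m (F a)) := by
      rw [MvPolynomial.smul_monomial, smul_eq_mul, inv_mul_cancel₀ hcne]
    rw [hscale]
    exact Submodule.smul_mem _ _ hmono

theorem span_top : Submodule.span ℂ (Set.range F) = ⊤ := by
  rw [eq_top_iff]
  rintro p -
  have hp : p = ∑ v ∈ p.support, (MvPolynomial.monomial v) (MvPolynomial.coeff v p) :=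
    (MvPolynomial.support_sum_monomial_coeff p).symm
  rw [hp]
  refine Submodule.sum_mem _ fun v _ => ?_
  have : (MvPolynomial.monomial v) (MvPolynomial.coeff v p)
      = MvPolynomial.coeff v p • (MvPolynomial.monomial v) 1 := by
    rw [MvPolynomial.smul_monomial, smul_eq_mul, mul_one]
  rw [this]
  exact Submodule.smul_mem _ _ (monomial_mem v)



end Stmt6Proof
end


open Stmt6Proof in
/-- the family { det Δ_0(α) }, indexed by strictly increasing finite
sequences α of naturals, is a basis of E = ℂ[x, x', x'', ...] (formalized as the
multivariate polynomial ring with variables `X l` = x^{(l)}). -/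
theorem stmt_6 :
    let f : {s : Σ n : ℕ, Fin n → ℕ // StrictMono s.2} → MvPolynomial ℕ ℂ :=
      fun α => Matrix.det (fun i j : Fin α.1.1 =>
        MvPolynomial.C ((α.1.2 j).choose (i : ℕ) : ℂ)
          * MvPolynomial.X (α.1.2 j - (i : ℕ)))
    LinearIndependent ℂ f ∧ Submodule.span ℂ (Set.range f) = ⊤ := by
  intro f
  exact ⟨li, span_top⟩
end

section
/- For every natural number p, the determinants det Δ_0(α), as α ranges over strictly increasing sequences with weight w(α) = Σ (α_i - i + 2) = p, form a basis of the subspace E_p ⊂ ℂ[x, x', x'', ...] spanned by the monomials of weight p. -/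
open MvPolynomial Finset Equiv

namespace Stmt7


/-- weight of a monomial exponent -/
def wt (m : ℕ →₀ ℕ) : ℕ := m.sum fun a e => (a + 1) * e

/-- base-B encoding of a monomial exponent -/
def phi (B : ℕ) (m : ℕ →₀ ℕ) : ℕ := m.sum fun a e => e * B ^ a

/-- exponent finsupp of ∏ X (a j) -/
noncomputable def mexp {n : ℕ} (a : Fin n → ℕ) : ℕ →₀ ℕ := ∑ j, Finsupp.single (a j) 1

lemma wt_mexp {n : ℕ} (a : Fin n → ℕ) : wt (mexp a) = ∑ j, (a j + 1) := by
  rw [wt, mexp, ← Finsupp.sum_finset_sum_index (by simp) (by intros; ring)]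
  simp [Finsupp.sum_single_index, Nat.add_comm]

lemma phi_mexp (B : ℕ) {n : ℕ} (a : Fin n → ℕ) : phi B (mexp a) = ∑ j, B ^ (a j) := by
  rw [phi, mexp, ← Finsupp.sum_finset_sum_index (by simp) (by intros; ring)]
  simp [Finsupp.sum_single_index]

lemma prod_CX {ι : Type*} (s : Finset ι) (c : ι → ℂ) (a : ι → ℕ) :
    (∏ j ∈ s, (C (c j) * X (a j) : MvPolynomial ℕ ℂ)) =
      monomial (∑ j ∈ s, Finsupp.single (a j) 1) (∏ j ∈ s, c j) := by
  classical
  induction s using Finset.induction_on with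
  | empty => simp [monomial_zero']
  | @insert _ _ h ih =>
      rw [Finset.prod_insert h, Finset.prod_insert h, Finset.sum_insert h, ih]
      rw [show (C (c _) * X (a _) : MvPolynomial ℕ ℂ) = monomial (Finsupp.single (a _) 1) (c _) by
        rw [← C_mul_X_pow_eq_monomial, pow_one]]
      rw [monomial_mul]

lemma det_expand {n : ℕ} (α : Fin n → ℕ) :
    Matrix.det (fun i j : Fin n =>
        (C ((α j).choose (i : ℕ) : ℂ) * X (α j - (i : ℕ)) : MvPolynomial ℕ ℂ)) =
      ∑ σ : Perm (Fin n), (monomial (mexp fun j => α j - σ j))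
        (((Equiv.Perm.sign σ : ℤ) : ℂ) * ∏ j, ((α j).choose (σ j) : ℂ)) := by
  refine (Matrix.det_apply _).trans ?_
  refine Finset.sum_congr rfl fun σ _ => ?_
  rw [prod_CX, mexp, Units.smul_def, smul_monomial, zsmul_eq_mul]



lemma le_of_strictMono {n : ℕ} {f : Fin n → ℕ} (hf : StrictMono f) (j : Fin n) :
    (j : ℕ) ≤ f j := by
  obtain ⟨k, hk⟩ := j
  induction k with
  | zero => exact Nat.zero_le _
  | succ m ih =>
      have hm : m < n := by omega
      have h1 : f ⟨m, hm⟩ < f ⟨m + 1, hk⟩ := hf (by simp [Fin.lt_def])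
      have h2 := ih hm
      simpa using Nat.lt_of_le_of_lt h2 h1

lemma perm_eq_one_of_strictMono {n : ℕ} {σ : Perm (Fin n)}
    (h : StrictMono (σ : Fin n → Fin n)) : σ = 1 := by
  have hle : ∀ i : Fin n, (i : ℕ) ≤ (σ i : ℕ) :=
    le_of_strictMono (fun i j hij => by exact_mod_cast h hij)
  have hsum : ∑ i : Fin n, ((σ i : ℕ)) = ∑ i : Fin n, (i : ℕ) :=
    Equiv.sum_comp σ (fun i => (i : ℕ))
  have := (Finset.sum_eq_sum_iff_of_le (fun i _ => hle i)).1 hsum.symm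
  ext i
  exact ((this i (mem_univ i)).symm : ((σ i : ℕ)) = i)

lemma key_lt {n B : ℕ} (hB : 2 ≤ B) {α : Fin n → ℕ} (hα : StrictMono α)
    {σ : Perm (Fin n)} (hσ : σ ≠ 1) (hle : ∀ j, (σ j : ℕ) ≤ α j) :
    ∑ j : Fin n, B ^ (α j - (j : ℕ)) < ∑ j : Fin n, B ^ (α j - (σ j : ℕ)) := by
  set x : Fin n → ℕ := fun j => B ^ (α j)
  set y : Fin n → ℕ := fun i => B ^ (n - (i : ℕ))
  have hB1 : 1 < B := hB
  have hAnti : Antivary x y := by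
    intro i j hy
    have : n - (i : ℕ) < n - (j : ℕ) := (Nat.pow_lt_pow_iff_right hB1).1 hy
    have hji : (j : ℕ) < (i : ℕ) := by omega
    exact Nat.pow_le_pow_right (by omega) (le_of_lt (hα (by exact_mod_cast hji)))
  have hNot : ¬ Antivary x (y ∘ σ) := by
    intro h
    apply hσ
    apply perm_eq_one_of_strictMono
    intro i j hij
    rcases lt_trichotomy (σ i) (σ j) with h1 | h1 | h1
    · exact h1
    · exact absurd (σ.injective h1) (ne_of_lt hij)
    · exfalso
      have hy : y (σ i) < y (σ j) := by
        have : (σ j : ℕ) < (σ i : ℕ) := h1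
        have hlt : n - (σ i : ℕ) < n - (σ j : ℕ) := by
          have := (σ i).isLt; have := (σ j).isLt; omega
        exact Nat.pow_lt_pow_right hB1 hlt
      have hx : x j ≤ x i := h hy
      have : α j ≤ α i := (Nat.pow_le_pow_iff_right hB1).1 hx
      exact absurd (hα hij) (not_lt.2 this)
  have hmain : ∑ i, x i * y i < ∑ i, x i * y (σ i) :=
    (Antivary.sum_mul_lt_sum_mul_comp_perm_iff hAnti).2 hNot
  have e1 : ∀ j : Fin n, x j * y j = B ^ (α j - (j : ℕ)) * B ^ n := by
    intro j
    have h1 : (j : ℕ) ≤ α j := le_of_strictMono hα j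
    have h2 : (j : ℕ) < n := j.isLt
    simp only [x, y, ← pow_add]
    congr 1
    omega
  have e2 : ∀ j : Fin n, x j * y (σ j) = B ^ (α j - (σ j : ℕ)) * B ^ n := by
    intro j
    have h1 : (σ j : ℕ) ≤ α j := hle j
    have h2 : (σ j : ℕ) < n := (σ j).isLt
    simp only [x, y, ← pow_add]
    congr 1
    omega
  rw [Finset.sum_congr rfl (fun j _ => e1 j), Finset.sum_congr rfl (fun j _ => e2 j),
    ← Finset.sum_mul, ← Finset.sum_mul] at hmain
  exact Nat.lt_of_mul_lt_mul_right hmain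




lemma multiset_map_eq_sum {ι : Type*} (s : Finset ι) (a : ι → ℕ) :
    Multiset.map a s.val = ∑ j ∈ s, ({a j} : Multiset ℕ) := by
  classical
  induction s using Finset.induction_on with
  | empty => simp
  | @insert _ _ h ih => simp_all [Finset.sum_insert h]

lemma toMultiset_mexp {n : ℕ} (a : Fin n → ℕ) :
    Finsupp.toMultiset (mexp a) = ↑(List.ofFn a) := by
  rw [mexp, map_sum]
  have : ∀ j : Fin n, Finsupp.toMultiset (Finsupp.single (a j) 1) = {a j} := by
    simp [Finsupp.toMultiset_single]
  rw [Finset.sum_congr rfl (fun j _ => this j), ← multiset_map_eq_sum,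
    List.ofFn_eq_map]
  rfl

lemma strictMono_step {n : ℕ} {f : Fin n → ℕ} (hf : StrictMono f) :
    ∀ (jv : ℕ) (hj : jv < n) (i : Fin n), (i : ℕ) ≤ jv →
      f i + (jv - (i : ℕ)) ≤ f ⟨jv, hj⟩ := by
  intro jv
  induction jv with
  | zero =>
      intro hj i hi
      have hi0 : (i : ℕ) = 0 := by omega
      have : i = ⟨0, hj⟩ := Fin.ext (by simp [hi0])
      subst this
      simp [hi0]
  | succ m ih =>
      intro hj i hi
      rcases Nat.lt_or_ge (i : ℕ) (m + 1) with h | h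
      · have him : (i : ℕ) ≤ m := by omega
        have hm : m < n := by omega
        have h1 := ih hm i him
        have h2 : f ⟨m, hm⟩ < f ⟨m + 1, hj⟩ := hf (by simp [Fin.lt_def])
        omega
      · have hieq : (i : ℕ) = m + 1 := by omega
        have : i = ⟨m + 1, hj⟩ := Fin.ext (by simp [hieq])
        subst this
        simp [hieq]

lemma monotone_dia {n : ℕ} {f : Fin n → ℕ} (hf : StrictMono f) :
    Monotone (fun j : Fin n => f j - (j : ℕ)) := by
  intro i j hij
  have h := strictMono_step hf (j : ℕ) j.isLt i (Fin.le_def.1 hij)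
  have hj : (⟨(j : ℕ), j.isLt⟩ : Fin n) = j := Fin.ext rfl
  rw [hj] at h
  simp only []
  omega

lemma sorted_ofFn {n : ℕ} {f : Fin n → ℕ} (hf : Monotone f) :
    (List.ofFn f).Pairwise (· ≤ ·) := by
  exact List.pairwise_ofFn.2 fun i j h => hf h.le

lemma toMultiset_inj {f g : ℕ →₀ ℕ} (h : Finsupp.toMultiset f = Finsupp.toMultiset g) :
    f = g := by
  classical
  ext a
  rw [← Finsupp.count_toMultiset, h, Finsupp.count_toMultiset]

lemma mexp_dia_inj {n n' : ℕ} {α : Fin n → ℕ} {β : Fin n' → ℕ}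
    (hα : StrictMono α) (hβ : StrictMono β)
    (h : mexp (fun j => α j - (j : ℕ)) = mexp (fun j => β j - (j : ℕ))) :
    (⟨n, α⟩ : Σ k : ℕ, Fin k → ℕ) = ⟨n', β⟩ := by
  have hm := congrArg Finsupp.toMultiset h
  rw [toMultiset_mexp, toMultiset_mexp] at hm
  have hperm : (List.ofFn fun j : Fin n => α j - (j : ℕ)).Perm
      (List.ofFn fun j : Fin n' => β j - (j : ℕ)) := Multiset.coe_eq_coe.1 hm
  have heq := List.Perm.eq_of_pairwise' (sorted_ofFn (monotone_dia hα))
    (sorted_ofFn (monotone_dia hβ)) hperm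
  have hn : n = n' := by
    have := congrArg List.length heq
    simpa using this
  subst hn
  have hfun := List.ofFn_inj.1 heq
  have hab : α = β := by
    funext j
    have h0 := congrFun hfun j
    have h1 := le_of_strictMono hα j
    have h2 := le_of_strictMono hβ j
    omega
  rw [hab]

lemma map_toMultiset_sum (g : ℕ → ℕ) (m : ℕ →₀ ℕ) :
    ((Finsupp.toMultiset m).map g).sum = m.sum fun a e => e * g a := by
  classical
  induction m using Finsupp.induction with
  | zero => simp
  | single_add a b f ha hb ih =>
      rw [Finsupp.toMultiset_add, Multiset.map_add, Multiset.sum_add, ih,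
        Finsupp.toMultiset_single, Finsupp.sum_add_index (by simp) (by intros; ring)]
      simp [Finsupp.sum_single_index, Multiset.map_nsmul, Multiset.nsmul_singleton,
        Multiset.sum_replicate, smul_eq_mul, mul_comm]

lemma mexp_dia_surj (m : ℕ →₀ ℕ) :
    ∃ (n : ℕ) (α : Fin n → ℕ), StrictMono α ∧
      mexp (fun j => α j - (j : ℕ)) = m ∧
      (∑ j : Fin n, (α j - (j : ℕ) + 1)) = m.sum fun a e => (a + 1) * e := by
  classical
  set l : List ℕ := Multiset.sort (Finsupp.toMultiset m) (· ≤ ·) with hl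
  have hsorted : l.Pairwise (· ≤ ·) := Multiset.pairwise_sort _ _
  have h2 : (l : Multiset ℕ) = Finsupp.toMultiset m := Multiset.sort_eq _ _
  refine ⟨l.length, fun j => l.get j + (j : ℕ), ?_, ?_, ?_⟩
  · intro i j hij
    have h3 : l.get i ≤ l.get j := hsorted.rel_get_of_lt hij
    have h4 : (i : ℕ) < (j : ℕ) := hij
    show l.get i + (i : ℕ) < l.get j + (j : ℕ)
    omega
  · have hd : (fun j : Fin l.length => l.get j + (j : ℕ) - (j : ℕ)) = fun j => l.get j := by
      funext j; omega
    rw [hd]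
    apply toMultiset_inj
    rw [toMultiset_mexp, List.ofFn_get, h2]
  · have hd : ∀ j : Fin l.length, l.get j + (j : ℕ) - (j : ℕ) + 1 = l.get j + 1 := by
      intro j; omega
    rw [Finset.sum_congr rfl fun j _ => hd j]
    have h1 : (∑ j : Fin l.length, (l.get j + 1)) = ((l.map (· + 1)).sum) := by
      rw [← List.sum_ofFn]
      congr 1
      apply List.ext_get (by simp)
      intro i h1 h2
      simp [List.get_ofFn]
    rw [h1]
    have h3 := map_toMultiset_sum (· + 1) m
    rw [← h2] at h3
    rw [show ((l.map (· + 1)).sum) = ((l : Multiset ℕ).map (· + 1)).sum from rfl, h3]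
    exact Finsupp.sum_congr fun a _ => mul_comm _ _


lemma wt_shuffle {n : ℕ} {α : Fin n → ℕ} (hα : StrictMono α) (σ : Equiv.Perm (Fin n))
    (hadm : ∀ j, (σ j : ℕ) ≤ α j) :
    (∑ j : Fin n, (α j - (σ j : ℕ) + 1)) = ∑ j : Fin n, (α j - (j : ℕ) + 1) := by
  have h1 : ∑ j : Fin n, ((α j - (σ j : ℕ) + 1) + (σ j : ℕ)) = ∑ j : Fin n, (α j + 1) :=
    Finset.sum_congr rfl fun j _ => by have := hadm j; omega
  have h2 : ∑ j : Fin n, ((α j - (j : ℕ) + 1) + (j : ℕ)) = ∑ j : Fin n, (α j + 1) :=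
    Finset.sum_congr rfl fun j _ => by have := le_of_strictMono hα j; omega
  have h3 : ∑ j : Fin n, ((σ j : ℕ)) = ∑ j : Fin n, (j : ℕ) := Equiv.sum_comp σ _
  rw [Finset.sum_add_distrib] at h1 h2
  omega

lemma phi_le_bound {p : ℕ} {m : ℕ →₀ ℕ} (h : (m.sum fun a e => (a + 1) * e) = p) :
    phi (p + 2) m ≤ p * (p + 2) ^ p := by
  classical
  have hterm : ∀ a ∈ m.support, (a + 1) * m a ≤ p := by
    intro a ha
    rw [← h, Finsupp.sum]
    exact Finset.single_le_sum (f := fun a => (a + 1) * m a) (fun _ _ => Nat.zero_le _) ha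
  rw [phi, Finsupp.sum]
  calc ∑ a ∈ m.support, m a * (p + 2) ^ a
      ≤ ∑ a ∈ m.support, ((a + 1) * m a) * (p + 2) ^ (p - 1) := by
        refine Finset.sum_le_sum fun a ha => ?_
        have h1 : (a + 1) * m a ≤ p := hterm a ha
        have h2 : m a ≠ 0 := Finsupp.mem_support_iff.1 ha
        have h2' : 1 ≤ m a := Nat.one_le_iff_ne_zero.2 h2
        have h3 : a ≤ p - 1 := by
          have h6 : a + 1 ≤ (a + 1) * m a := Nat.le_mul_of_pos_right _ (by omega)
          omega
        have h4 : (p + 2) ^ a ≤ (p + 2) ^ (p - 1) := Nat.pow_le_pow_right (by omega) h3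
        have h5 : m a ≤ (a + 1) * m a := Nat.le_mul_of_pos_left _ (by omega)
        exact Nat.mul_le_mul h5 h4
    _ = (∑ a ∈ m.support, (a + 1) * m a) * (p + 2) ^ (p - 1) := by
        rw [Finset.sum_mul]
    _ ≤ p * (p + 2) ^ p := by
        rw [show (∑ a ∈ m.support, (a + 1) * m a) = p from by rw [← h]; rfl]
        exact Nat.mul_le_mul_left _ (Nat.pow_le_pow_right (by omega) (by omega))

/-- the index type -/
def Idx (p : ℕ) := {s : Σ n : ℕ, Fin n → ℕ //
    StrictMono s.2 ∧ (∑ i, (s.2 i - (i : ℕ) + 1)) = p}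

/-- coefficient of the σ-term of the determinant -/
noncomputable def cc {n : ℕ} (α : Fin n → ℕ) (σ : Equiv.Perm (Fin n)) : ℂ :=
  ((Equiv.Perm.sign σ : ℤ) : ℂ) * ∏ j, ((α j).choose ((σ j : ℕ)) : ℂ)

lemma det_expand' {n : ℕ} (α : Fin n → ℕ) :
    Matrix.det (fun i j : Fin n =>
        (C ((α j).choose (i : ℕ) : ℂ) * X (α j - (i : ℕ)) : MvPolynomial ℕ ℂ)) =
      ∑ σ : Equiv.Perm (Fin n),
        (monomial (mexp fun j => α j - (σ j : ℕ))) (cc α σ) :=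
  det_expand α

lemma adm_of_cc_ne {n : ℕ} {α : Fin n → ℕ} {σ : Equiv.Perm (Fin n)}
    (h : cc α σ ≠ 0) : ∀ j, (σ j : ℕ) ≤ α j := by
  intro j
  by_contra hlt
  apply h
  rw [cc]
  have : ((α j).choose ((σ j : ℕ)) : ℂ) = 0 := by
    rw [Nat.choose_eq_zero_of_lt (by omega)]
    simp
  rw [Finset.prod_eq_zero (Finset.mem_univ j) this, mul_zero]

lemma cc_one {n : ℕ} (α : Fin n → ℕ) :
    cc α 1 = ∏ j : Fin n, ((α j).choose (j : ℕ) : ℂ) := by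
  simp [cc, Equiv.Perm.one_apply]

lemma cc_one_ne {n : ℕ} {α : Fin n → ℕ} (hα : StrictMono α) : cc α 1 ≠ 0 := by
  rw [cc_one]
  refine Finset.prod_ne_zero_iff.2 fun j _ => ?_
  have h := Nat.choose_pos (le_of_strictMono hα j)
  exact Nat.cast_ne_zero.2 (Nat.pos_iff_ne_zero.mp h)
lemma span_step (p : ℕ) (f : Idx p → MvPolynomial ℕ ℂ)
    (hf : ∀ β : Idx p, f β = ∑ σ : Equiv.Perm (Fin β.1.1),
      (monomial (mexp fun j => β.1.2 j - (σ j : ℕ))) (cc β.1.2 σ))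
    (m : ℕ →₀ ℕ) (hm : (m.sum fun a e => (a + 1) * e) = p)
    (hnext : ∀ m' : ℕ →₀ ℕ, (m'.sum fun a e => (a + 1) * e) = p →
      phi (p + 2) m < phi (p + 2) m' →
      (monomial m' 1 : MvPolynomial ℕ ℂ) ∈ Submodule.span ℂ (Set.range f)) :
    (monomial m 1 : MvPolynomial ℕ ℂ) ∈ Submodule.span ℂ (Set.range f) := by
  obtain ⟨n, α, hsm, hmexp, hws⟩ := mexp_dia_surj m
  have hw : (∑ j : Fin n, (α j - (j : ℕ) + 1)) = p := by rw [hws, hm]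
  set β : Idx p := ⟨⟨n, α⟩, hsm, hw⟩ with hβ
  have hdet : f β = ∑ σ : Equiv.Perm (Fin n),
      (monomial (mexp fun j => α j - (σ j : ℕ))) (cc α σ) := hf β
  rw [← Finset.sum_erase_add _ _ (Finset.mem_univ (1 : Equiv.Perm (Fin n)))] at hdet
  have hT1 : (monomial (mexp fun j => α j - (((1 : Equiv.Perm (Fin n)) j : ℕ))))
      (cc α 1) = monomial m (cc α 1) :=
    congrArg (fun m' => (monomial m' (cc α 1) : MvPolynomial ℕ ℂ)) hmexp
  have hd0 : cc α 1 ≠ 0 := cc_one_ne hsm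
  have hrepr : (monomial m 1 : MvPolynomial ℕ ℂ)
      = (cc α 1)⁻¹ • (f β - ∑ σ ∈ (Finset.univ.erase (1 : Equiv.Perm (Fin n))),
          (monomial (mexp fun j => α j - (σ j : ℕ))) (cc α σ)) := by
    rw [hdet, hT1, add_sub_cancel_left, smul_monomial, smul_eq_mul, inv_mul_cancel₀ hd0]
  rw [hrepr]
  refine Submodule.smul_mem _ _ (Submodule.sub_mem _ (Submodule.subset_span ⟨β, rfl⟩) ?_)
  refine Submodule.sum_mem _ fun σ hσ => ?_
  have hσ1 : σ ≠ 1 := Finset.ne_of_mem_erase hσ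
  by_cases hc : cc α σ = 0
  · rw [hc, monomial_zero]; exact Submodule.zero_mem _
  · have hadm := adm_of_cc_ne hc
    have hwt' : ((mexp fun j => α j - (σ j : ℕ)).sum fun a e => (a + 1) * e) = p := by
      show wt _ = p
      rw [wt_mexp, wt_shuffle hsm σ hadm]
      exact hw
    have hphi : phi (p + 2) m < phi (p + 2) (mexp fun j => α j - (σ j : ℕ)) := by
      rw [← hmexp, phi_mexp, phi_mexp]
      exact key_lt (by omega) hsm hσ1 hadm
    rw [show (monomial (mexp fun j => α j - (σ j : ℕ))) (cc α σ)
        = cc α σ • (monomial (mexp fun j => α j - (σ j : ℕ))) 1 from by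
      rw [smul_monomial, smul_eq_mul, mul_one]]
    exact Submodule.smul_mem _ _ (hnext _ hwt' hphi)

lemma span_mem (p : ℕ) (f : Idx p → MvPolynomial ℕ ℂ)
    (hf : ∀ β : Idx p, f β = ∑ σ : Equiv.Perm (Fin β.1.1),
      (monomial (mexp fun j => β.1.2 j - (σ j : ℕ))) (cc β.1.2 σ)) :
    ∀ (k : ℕ) (m : ℕ →₀ ℕ), (m.sum fun a e => (a + 1) * e) = p →
      p * (p + 2) ^ p - phi (p + 2) m ≤ k →
      (monomial m 1 : MvPolynomial ℕ ℂ) ∈ Submodule.span ℂ (Set.range f) := by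
  intro k
  induction k with
  | zero =>
      intro m hm hk
      refine span_step p f hf m hm fun m' hm' hphi => ?_
      exfalso
      have h1 := phi_le_bound hm'
      omega
  | succ k ih =>
      intro m hm hk
      refine span_step p f hf m hm fun m' hm' hphi => ?_
      have h1 := phi_le_bound hm'
      exact ih m' hm' (by omega)

lemma mem_Ep (p : ℕ) (f : Idx p → MvPolynomial ℕ ℂ)
    (hf : ∀ β : Idx p, f β = ∑ σ : Equiv.Perm (Fin β.1.1),
      (monomial (mexp fun j => β.1.2 j - (σ j : ℕ))) (cc β.1.2 σ))
    (β : Idx p) :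
    f β ∈ Submodule.span ℂ
      {q : MvPolynomial ℕ ℂ | ∃ m : ℕ →₀ ℕ, (m.sum fun a e => (a + 1) * e) = p ∧
        q = MvPolynomial.monomial m 1} := by
  rw [hf β]
  refine Submodule.sum_mem _ fun σ _ => ?_
  by_cases hc : cc β.1.2 σ = 0
  · rw [hc, monomial_zero]; exact Submodule.zero_mem _
  · have hadm := adm_of_cc_ne hc
    have hwt : ((mexp fun j => β.1.2 j - (σ j : ℕ)).sum fun a e => (a + 1) * e) = p := by
      show wt _ = p
      rw [wt_mexp, wt_shuffle β.2.1 σ hadm]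
      exact β.2.2
    rw [show (monomial (mexp fun j => β.1.2 j - (σ j : ℕ))) (cc β.1.2 σ)
        = cc β.1.2 σ • (monomial (mexp fun j => β.1.2 j - (σ j : ℕ))) 1 from by
      rw [smul_monomial, smul_eq_mul, mul_one]]
    exact Submodule.smul_mem _ _ (Submodule.subset_span ⟨_, hwt, rfl⟩)

lemma indep (p : ℕ) (f : Idx p → MvPolynomial ℕ ℂ)
    (hf : ∀ β : Idx p, f β = ∑ σ : Equiv.Perm (Fin β.1.1),
      (monomial (mexp fun j => β.1.2 j - (σ j : ℕ))) (cc β.1.2 σ)) :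
    LinearIndependent ℂ f := by
  rw [linearIndependent_iff]
  intro l hl
  by_contra hne
  have hsupp : l.support.Nonempty := Finsupp.support_nonempty_iff.2 hne
  obtain ⟨β0, hβ0, hmin⟩ := Finset.exists_min_image l.support
    (fun β : Idx p => phi (p + 2) (mexp fun j => β.1.2 j - (j : ℕ))) hsupp
  set m0 : ℕ →₀ ℕ := mexp fun j => β0.1.2 j - (j : ℕ) with hm0
  have core : ∀ β ∈ l.support, ∀ σ : Equiv.Perm (Fin β.1.1), σ ≠ 1 →
      mexp (fun j => β.1.2 j - (σ j : ℕ)) = m0 → cc β.1.2 σ = 0 := by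
    intro β hβ σ hσ1 hmeq
    by_contra hc
    have hadm := adm_of_cc_ne hc
    have h2 : phi (p + 2) (mexp fun j => β.1.2 j - (j : ℕ))
        < phi (p + 2) (mexp fun j => β.1.2 j - (σ j : ℕ)) := by
      rw [phi_mexp, phi_mexp]
      exact key_lt (by omega) β.2.1 hσ1 hadm
    have h3 := hmin β hβ
    rw [hmeq] at h2
    omega
  have coeffβ : ∀ β ∈ l.support, β ≠ β0 → MvPolynomial.coeff m0 (f β) = 0 := by
    intro β hβ hne'
    rw [hf β, MvPolynomial.coeff_sum]
    refine Finset.sum_eq_zero fun σ _ => ?_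
    rw [MvPolynomial.coeff_monomial]
    by_cases hmeq : mexp (fun j => β.1.2 j - (σ j : ℕ)) = m0
    · rw [if_pos hmeq]
      by_cases hσ1 : σ = 1
      · exfalso
        apply hne'
        subst hσ1
        have heq : mexp (fun j => β.1.2 j - (j : ℕ))
            = mexp (fun j => β0.1.2 j - (j : ℕ)) := hmeq
        exact Subtype.ext (mexp_dia_inj β.2.1 β0.2.1 heq)
      · exact core β hβ σ hσ1 hmeq
    · rw [if_neg hmeq]
  have h1cond : mexp (fun j => β0.1.2 j - (((1 : Equiv.Perm (Fin β0.1.1)) j : ℕ))) = m0 :=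
    hm0.symm
  have coeffβ0 : MvPolynomial.coeff m0 (f β0) = cc β0.1.2 1 := by
    rw [hf β0, MvPolynomial.coeff_sum]
    rw [Finset.sum_eq_single (1 : Equiv.Perm (Fin β0.1.1))]
    · rw [MvPolynomial.coeff_monomial, if_pos h1cond]
    · intro σ _ hσ1
      rw [MvPolynomial.coeff_monomial]
      by_cases hmeq : mexp (fun j => β0.1.2 j - (σ j : ℕ)) = m0
      · rw [if_pos hmeq, core β0 hβ0 σ hσ1 hmeq]
      · rw [if_neg hmeq]
    · intro h
      exact absurd (Finset.mem_univ _) h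
  have hc := congrArg (MvPolynomial.coeff m0) hl
  rw [Finsupp.linearCombination_apply, Finsupp.sum, MvPolynomial.coeff_sum,
    MvPolynomial.coeff_zero] at hc
  have hc2 : ∑ β ∈ l.support, l β * MvPolynomial.coeff m0 (f β) = 0 := by
    rw [← hc]
    exact Finset.sum_congr rfl fun β _ => by rw [MvPolynomial.coeff_smul, smul_eq_mul]
  rw [Finset.sum_eq_single_of_mem β0 hβ0
    (fun β hβ hne' => by rw [coeffβ β hβ hne', mul_zero]), coeffβ0] at hc2
  have := mul_eq_zero.1 hc2
  rcases this with h | h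
  · exact Finsupp.mem_support_iff.1 hβ0 h
  · exact cc_one_ne β0.2.1 h
end Stmt7

/-- for each p, the determinants det Δ_0(α), over strictly increasing
sequences α of weight w(α) = p, form a basis of the span E_p of monomials of
weight p (the variable x^{(a)} = `X a` having weight a + 1). -/
theorem stmt_7 (p : ℕ) :
    let Ep : Submodule ℂ (MvPolynomial ℕ ℂ) :=
      Submodule.span ℂ
        {q | ∃ m : ℕ →₀ ℕ, (m.sum fun a e => (a + 1) * e) = p ∧
          q = MvPolynomial.monomial m 1}
    let f : {s : Σ n : ℕ, Fin n → ℕ //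
        StrictMono s.2 ∧ (∑ i, (s.2 i - (i : ℕ) + 1)) = p} → MvPolynomial ℕ ℂ :=
      fun α => Matrix.det (fun i j : Fin α.1.1 =>
        MvPolynomial.C ((α.1.2 j).choose (i : ℕ) : ℂ)
          * MvPolynomial.X (α.1.2 j - (i : ℕ)))
    LinearIndependent ℂ f ∧ Submodule.span ℂ (Set.range f) = Ep := by
  intro Ep f
  have hf : ∀ β : Stmt7.Idx p, f β = ∑ σ : Equiv.Perm (Fin β.1.1),
      (MvPolynomial.monomial (Stmt7.mexp fun j => β.1.2 j - (σ j : ℕ))) (Stmt7.cc β.1.2 σ) :=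
    fun β => Stmt7.det_expand' β.1.2
  refine ⟨Stmt7.indep p f hf, le_antisymm (Submodule.span_le.2 ?_) (Submodule.span_le.2 ?_)⟩
  · rintro q ⟨β, rfl⟩
    exact Stmt7.mem_Ep p f hf β
  · rintro q ⟨m, hm, rfl⟩
    exact Stmt7.span_mem p f hf (p * (p + 2) ^ p) m hm (Nat.sub_le _ _)
end

section
/- Let N ≥ 1 and d ≥ 1. The number of N-tuples of strictly increasing sequences (α^1, α^2, ..., α^N), with α^j of length n_j ≥ 0, satisfying s_{j+1} ≤ α^j_1 < α^j_2 < ... < α^j_{n_j} ≤ d - 1 for each j (where s_{j+1} = n_N + n_{N-1} + ... + n_{j+1}, and s_{N+1} = 0), equals (N+1)^d. -/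
open Finset

section Aux

lemma len_le {n d : ℕ} {f : Fin n → ℕ} (hf : StrictMono f) (hd : ∀ i, f i < d) : n ≤ d := by
  have h1 : (univ.image f).card = n := by
    rw [Finset.card_image_of_injective _ hf.injective, card_univ, Fintype.card_fin]
  have h2 : univ.image f ⊆ Finset.range d := by
    intro x hx
    obtain ⟨i, _, rfl⟩ := Finset.mem_image.1 hx
    exact Finset.mem_range.2 (hd i)
  calc n = (univ.image f).card := h1.symm
    _ ≤ (Finset.range d).card := Finset.card_le_card h2
    _ = d := Finset.card_range d

def seqEquiv (n d : ℕ) :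
    {f : Fin n → ℕ // StrictMono f ∧ ∀ i, f i < d} ≃
      {s // s ∈ (Finset.range d).powersetCard n} where
  toFun f := ⟨univ.image f.1, by
    rw [Finset.mem_powersetCard]
    constructor
    · intro x hx
      obtain ⟨i, _, rfl⟩ := Finset.mem_image.1 hx
      exact Finset.mem_range.2 (f.2.2 i)
    · rw [Finset.card_image_of_injective _ f.2.1.injective, card_univ, Fintype.card_fin]⟩
  invFun s := ⟨s.1.orderEmbOfFin (Finset.mem_powersetCard.1 s.2).2, by
    refine ⟨(s.1.orderEmbOfFin _).strictMono, fun i => ?_⟩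
    exact Finset.mem_range.1 ((Finset.mem_powersetCard.1 s.2).1
      (Finset.orderEmbOfFin_mem s.1 (Finset.mem_powersetCard.1 s.2).2 i))⟩
  left_inv f := by
    apply Subtype.ext
    have := Finset.orderEmbOfFin_unique
      (s := univ.image f.1) (f := f.1)
      (by rw [Finset.card_image_of_injective _ f.2.1.injective, card_univ, Fintype.card_fin])
      (fun i => Finset.mem_image_of_mem _ (mem_univ i)) f.2.1
    exact this.symm
  right_inv s := by
    apply Subtype.ext
    have h := Finset.range_orderEmbOfFin s.1 (Finset.mem_powersetCard.1 s.2).2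
    rw [← Finset.coe_inj, Finset.coe_image, Finset.coe_univ, Set.image_univ, h]

lemma card_seq (n d : ℕ) :
    Nat.card {f : Fin n → ℕ // StrictMono f ∧ ∀ i, f i < d} = d.choose n := by
  rw [Nat.card_congr (seqEquiv n d), Nat.card_eq_fintype_card, Fintype.card_coe,
    Finset.card_powersetCard, Finset.card_range]

instance finite_seq (n d : ℕ) : Finite {f : Fin n → ℕ // StrictMono f ∧ ∀ i, f i < d} :=
  Finite.of_equiv _ (seqEquiv n d).symm

lemma S_ext {x y : Σ n : ℕ, Fin n → ℕ} (h : x.1 = y.1)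
    (h2 : ∀ i, x.2 i = y.2 (Fin.cast h i)) : x = y := by
  obtain ⟨n, v⟩ := x
  obtain ⟨m, w⟩ := y
  dsimp at h
  subst h
  exact congrArg (Sigma.mk n) (funext h2)

lemma S_snd {x y : Σ n : ℕ, Fin n → ℕ} (h : x = y) (i : Fin x.1) :
    x.2 i = y.2 (Fin.cast (congrArg Sigma.fst h) i) := by
  subst h; rfl

lemma sum_filter_castSucc (N : ℕ) (g : Fin (N+1) → ℕ) (j : Fin N) :
    ∑ t ∈ univ.filter (fun t => j.castSucc < t), g t
      = (∑ t ∈ univ.filter (fun t => j < t), g t.castSucc) + g (Fin.last N) := by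
  rw [Finset.sum_filter, Finset.sum_filter, Fin.sum_univ_castSucc]
  simp [Fin.castSucc_lt_castSucc_iff, Fin.castSucc_lt_last]

lemma sum_filter_last (N : ℕ) (g : Fin (N+1) → ℕ) :
    ∑ t ∈ univ.filter (fun t => Fin.last N < t), g t = 0 := by
  rw [Finset.sum_filter]
  exact Finset.sum_eq_zero fun t _ => if_neg (not_lt.2 (Fin.le_last t))

def sigmaNatFin (d : ℕ) (X : ℕ → Type*) (h : ∀ n, X n → n < d + 1) :
    (Σ n : ℕ, X n) ≃ Σ k : Fin (d+1), X k where
  toFun x := ⟨⟨x.1, h x.1 x.2⟩, x.2⟩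
  invFun x := ⟨x.1.1, x.2⟩
  left_inv x := rfl
  right_inv x := rfl

lemma card_sigma' {ι : Type*} [Fintype ι] (X : ι → Type*) [∀ i, Finite (X i)] :
    Nat.card (Σ i, X i) = ∑ i, Nat.card (X i) := by
  letI : ∀ i, Fintype (X i) := fun i => Fintype.ofFinite (X i)
  rw [Nat.card_eq_fintype_card, Fintype.card_sigma]
  exact Finset.sum_congr rfl fun i _ => (Nat.card_eq_fintype_card).symm

end Aux

def Cnd (N d : ℕ) (α : Fin N → Σ n : ℕ, Fin n → ℕ) : Prop :=
  (∀ j, StrictMono (α j).2) ∧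
  (∀ j (i : Fin (α j).1),
    (∑ t ∈ Finset.univ.filter (fun t => j < t), (α t).1) ≤ (α j).2 i) ∧
  (∀ j (i : Fin (α j).1), (α j).2 i < d)

section Main

variable {N d k : ℕ}

/-- gluing a sequence of length k (shifted up by nothing) with a shifted tuple -/
def glue (k : ℕ) (f : Fin k → ℕ) (γ : Fin N → Σ n : ℕ, Fin n → ℕ) :
    Fin (N+1) → Σ n : ℕ, Fin n → ℕ :=
  fun t => Fin.lastCases ⟨k, f⟩ (fun j => ⟨(γ j).1, fun i => (γ j).2 i + k⟩) t

lemma glue_last (f : Fin k → ℕ) (γ : Fin N → Σ n : ℕ, Fin n → ℕ) :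
    glue k f γ (Fin.last N) = ⟨k, f⟩ := by simp [glue]

lemma glue_cast (f : Fin k → ℕ) (γ : Fin N → Σ n : ℕ, Fin n → ℕ) (j : Fin N) :
    glue k f γ j.castSucc = ⟨(γ j).1, fun i => (γ j).2 i + k⟩ := by simp [glue]

/-- the tail of a tuple, shifted down by k -/
def split2 (k : ℕ) (α : Fin (N+1) → Σ n : ℕ, Fin n → ℕ) :
    Fin N → Σ n : ℕ, Fin n → ℕ :=
  fun j => ⟨(α j.castSucc).1, fun i => (α j.castSucc).2 i - k⟩

lemma cnd_lower {α : Fin (N+1) → Σ n : ℕ, Fin n → ℕ} (hc : Cnd (N+1) d α)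
    (hk : (α (Fin.last N)).1 = k) (j : Fin N) (i : Fin (α j.castSucc).1) :
    (∑ t ∈ univ.filter (fun t => j < t), (α t.castSucc).1) + k ≤ (α j.castSucc).2 i := by
  have h := hc.2.1 j.castSucc i
  rw [sum_filter_castSucc N (fun t => (α t).1) j, hk] at h
  exact h

lemma split2_cnd {α : Fin (N+1) → Σ n : ℕ, Fin n → ℕ} (hc : Cnd (N+1) d α)
    (hk : (α (Fin.last N)).1 = k) : Cnd N (d - k) (split2 k α) := by
  refine ⟨fun j a b hab => ?_, fun j i => ?_, fun j i => ?_⟩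
  · show (α j.castSucc).2 a - k < (α j.castSucc).2 b - k
    have h1 := cnd_lower hc hk j a
    have h2 := hc.1 j.castSucc hab
    omega
  · show (∑ t ∈ univ.filter (fun t => j < t), (α t.castSucc).1) ≤ (α j.castSucc).2 i - k
    have h1 := cnd_lower hc hk j i
    omega
  · show (α j.castSucc).2 i - k < d - k
    have h1 := cnd_lower hc hk j i
    have h2 := hc.2.2 j.castSucc i
    omega

lemma glue_cnd {f : Fin k → ℕ} {γ : Fin N → Σ n : ℕ, Fin n → ℕ}
    (hf : StrictMono f ∧ ∀ i, f i < d) (hγ : Cnd N (d - k) γ) :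
    Cnd (N+1) d (glue k f γ) := by
  refine ⟨fun t => ?_, fun t => ?_, fun t => ?_⟩
  · induction t using Fin.lastCases with
    | last => rw [glue_last]; exact hf.1
    | cast j =>
      rw [glue_cast]
      intro a b hab
      exact Nat.add_lt_add_right (hγ.1 j hab) k
  · induction t using Fin.lastCases with
    | last =>
      intro i
      rw [sum_filter_last N (fun t => (glue k f γ t).1)]
      exact Nat.zero_le _
    | cast j =>
      have key : (∑ t ∈ univ.filter (fun t => j.castSucc < t), (glue k f γ t).1)
          = (∑ t ∈ univ.filter (fun t => j < t), (γ t).1) + k := by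
        rw [sum_filter_castSucc N (fun t => (glue k f γ t).1) j,
          Finset.sum_congr rfl (fun t _ => congrArg Sigma.fst (glue_cast f γ t)),
          congrArg Sigma.fst (glue_last f γ)]
      rw [key, glue_cast]
      intro i
      show (∑ t ∈ univ.filter (fun t => j < t), (γ t).1) + k ≤ (γ j).2 i + k
      exact Nat.add_le_add_right (hγ.2.1 j i) k
  · induction t using Fin.lastCases with
    | last => rw [glue_last]; exact hf.2
    | cast j =>
      rw [glue_cast]
      intro i
      show (γ j).2 i + k < d
      have h1 := hγ.2.2 j i
      omega

def fiberEquiv (N d k : ℕ) :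
    {x : {α : Fin (N+1) → Σ n : ℕ, Fin n → ℕ // Cnd (N+1) d α} //
        (x.1 (Fin.last N)).1 = k} ≃
      ({f : Fin k → ℕ // StrictMono f ∧ ∀ i, f i < d} ×
        {α : Fin N → Σ n : ℕ, Fin n → ℕ // Cnd N (d - k) α}) where
  toFun x :=
    (⟨fun i => (x.1.1 (Fin.last N)).2 (Fin.cast x.2.symm i),
      fun a b hab => x.1.2.1 (Fin.last N)
        (show (Fin.cast x.2.symm a).1 < (Fin.cast x.2.symm b).1 from hab),
      fun i => x.1.2.2.2 (Fin.last N) _⟩,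
     ⟨split2 k x.1.1, split2_cnd x.1.2 x.2⟩)
  invFun y :=
    ⟨⟨glue k y.1.1 y.2.1, glue_cnd y.1.2 y.2.2⟩,
      congrArg Sigma.fst (glue_last y.1.1 y.2.1)⟩
  left_inv x := by
    apply Subtype.ext
    apply Subtype.ext
    funext t
    show glue k (fun i => (x.1.1 (Fin.last N)).2 (Fin.cast x.2.symm i))
      (split2 k x.1.1) t = x.1.1 t
    induction t using Fin.lastCases with
    | last =>
      rw [glue_last]
      exact S_ext x.2.symm (fun i => rfl)
    | cast j =>
      rw [glue_cast]
      refine S_ext rfl (fun i => ?_)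
      show (x.1.1 j.castSucc).2 i - k + k = (x.1.1 j.castSucc).2 (Fin.cast rfl i)
      have h1 := cnd_lower x.1.2 x.2 j i
      have : (x.1.1 j.castSucc).2 (Fin.cast rfl i) = (x.1.1 j.castSucc).2 i := rfl
      omega
  right_inv y := by
    refine Prod.ext ?_ ?_
    · apply Subtype.ext
      funext i
      exact S_snd (glue_last y.1.1 y.2.1) _
    · apply Subtype.ext
      funext j
      show (⟨(glue k y.1.1 y.2.1 j.castSucc).1,
        fun i => (glue k y.1.1 y.2.1 j.castSucc).2 i - k⟩ : Σ n : ℕ, Fin n → ℕ) = y.2.1 j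
      rw [glue_cast]
      refine S_ext rfl (fun i => ?_)
      show (y.2.1 j).2 i + k - k = (y.2.1 j).2 i
      omega

end Main

lemma key_card (N : ℕ) : ∀ d : ℕ,
    Nat.card {α : Fin N → Σ n : ℕ, Fin n → ℕ // Cnd N d α} = (N + 1) ^ d := by
  induction N with
  | zero =>
    intro d
    haveI : Unique {α : Fin 0 → Σ n : ℕ, Fin n → ℕ // Cnd 0 d α} :=
      ⟨⟨⟨fun j => j.elim0, fun j => j.elim0, fun j => j.elim0, fun j => j.elim0⟩⟩,
        fun x => Subtype.ext (funext fun j => j.elim0)⟩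
    simp [Nat.card_unique]
  | succ N ih =>
    intro d
    haveI : ∀ kk : ℕ, Finite {α : Fin N → Σ n : ℕ, Fin n → ℕ // Cnd N (d - kk) α} := by
      intro kk
      refine Nat.finite_of_card_ne_zero ?_
      rw [ih (d - kk)]
      positivity
    have e : {α : Fin (N+1) → Σ n : ℕ, Fin n → ℕ // Cnd (N+1) d α} ≃
        Σ kk : Fin (d+1), ({f : Fin (kk : ℕ) → ℕ // StrictMono f ∧ ∀ i, f i < d} ×
          {α : Fin N → Σ n : ℕ, Fin n → ℕ // Cnd N (d - (kk : ℕ)) α}) :=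
      ((Equiv.sigmaFiberEquiv
          (fun x : {α : Fin (N+1) → Σ n : ℕ, Fin n → ℕ // Cnd (N+1) d α} =>
            (x.1 (Fin.last N)).1)).symm.trans
        (Equiv.sigmaCongrRight (fun n => fiberEquiv N d n))).trans
        (sigmaNatFin d _ (fun n x => Nat.lt_succ_of_le (len_le x.1.2.1 x.1.2.2)))
    rw [Nat.card_congr e, card_sigma']
    have hterm : ∀ kk : Fin (d+1),
        Nat.card ({f : Fin (kk : ℕ) → ℕ // StrictMono f ∧ ∀ i, f i < d} ×
          {α : Fin N → Σ n : ℕ, Fin n → ℕ // Cnd N (d - (kk : ℕ)) α})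
          = d.choose kk * (N + 1) ^ (d - (kk : ℕ)) := by
      intro kk
      rw [Nat.card_prod, card_seq, ih]
    rw [Finset.sum_congr rfl (fun kk _ => hterm kk)]
    rw [Fin.sum_univ_eq_sum_range (fun kk => d.choose kk * (N + 1) ^ (d - kk)) (d+1)]
    have h2 : (N + 1 + 1) ^ d = (1 + (N + 1)) ^ d := by ring
    rw [h2, add_pow]
    refine Finset.sum_congr rfl fun kk hk => ?_
    simp [one_pow, mul_comm]

/-- the number of N-tuples of strictly increasing sequences
(α^1, ..., α^N) with all entries of α^j at least s_{j+1} = Σ_{t > j} n_t and all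
entries at most d - 1 equals (N+1)^d. -/
theorem stmt_8 (N d : ℕ) (hN : 1 ≤ N) (hd : 1 ≤ d) :
    {α : Fin N → Σ n : ℕ, Fin n → ℕ |
        (∀ j, StrictMono (α j).2) ∧
        (∀ j (i : Fin (α j).1),
          (∑ t ∈ Finset.univ.filter (fun t => j < t), (α t).1) ≤ (α j).2 i) ∧
        (∀ j (i : Fin (α j).1), (α j).2 i ≤ d - 1)}.ncard
      = (N + 1) ^ d := by
  have hset : {α : Fin N → Σ n : ℕ, Fin n → ℕ |
        (∀ j, StrictMono (α j).2) ∧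
        (∀ j (i : Fin (α j).1),
          (∑ t ∈ Finset.univ.filter (fun t => j < t), (α t).1) ≤ (α j).2 i) ∧
        (∀ j (i : Fin (α j).1), (α j).2 i ≤ d - 1)} = {α | Cnd N d α} := by
    ext α
    simp only [Set.mem_setOf_eq, Cnd]
    refine and_congr_right fun _ => and_congr_right fun _ => ?_
    constructor
    · intro h j i; have := h j i; omega
    · intro h j i; have := h j i; omega
  rw [hset, ← Nat.card_coe_set_eq]
  exact key_card N d
end

section
/- There is an explicit bijection between the set {0, 1, ..., N}^d of d-tuples and the set of elements of B^{N+} with all entries at most d-1: given u ∈ {0,...,N}^d, for j = N down to 1, let α^j record (with appropriate relabeling after removing larger letters) the positions of the letter j; this assignment is a bijection. -/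
open Finset

namespace Stmt9

variable {N d : ℕ}

def A (u : Fin d → Fin (N + 1)) (j : Fin N) : ℕ :=
  (Finset.univ.filter (fun i' : Fin d => (j : ℕ) + 1 < (u i' : ℕ))).card

def B (u : Fin d → Fin (N + 1)) (j : Fin N) (i : Fin d) : ℕ :=
  (Finset.univ.filter (fun i' : Fin d => i' < i ∧ (u i' : ℕ) ≤ (j : ℕ) + 1)).card

def f (u : Fin d → Fin (N + 1)) (j : Fin N) (i : Fin d) : ℕ := A u j + B u j i

def P (u : Fin d → Fin (N + 1)) (j : Fin N) : Finset (Fin d) :=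
  Finset.univ.filter (fun i => (u i : ℕ) = (j : ℕ) + 1)

def D (u : Fin d → Fin (N + 1)) (j : Fin N) : Finset (Fin d) :=
  Finset.univ.filter (fun i => (u i : ℕ) ≤ (j : ℕ) + 1)

def T (u : Fin d → Fin (N + 1)) (j : Fin N) : Finset ℕ := (P u j).image (f u j)

def Phi (u : Fin d → Fin (N + 1)) (j : Fin N) : Σ n : ℕ, Fin n → ℕ :=
  ⟨(T u j).card, ⇑((T u j).orderEmbOfFin rfl)⟩

lemma P_subset_D (u : Fin d → Fin (N + 1)) (j : Fin N) : P u j ⊆ D u j := by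
  intro i hi
  simp only [P, D, mem_filter, mem_univ, true_and] at *
  omega

lemma strictMonoOn_f (u : Fin d → Fin (N + 1)) (j : Fin N) :
    StrictMonoOn (f u j) ↑(D u j) := by
  intro i hi i' hi' hlt
  simp only [coe_filter, Set.mem_setOf_eq, D, mem_coe, mem_filter] at hi hi'
  have hss : (Finset.univ.filter (fun i'' : Fin d => i'' < i ∧ (u i'' : ℕ) ≤ (j : ℕ) + 1)) ⊂
      (Finset.univ.filter (fun i'' : Fin d => i'' < i' ∧ (u i'' : ℕ) ≤ (j : ℕ) + 1)) := by
    refine Finset.ssubset_iff_of_subset ?_ |>.2 ⟨i, ?_, ?_⟩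
    · intro x hx
      simp only [mem_filter, mem_univ, true_and] at *
      exact ⟨lt_trans hx.1 hlt, hx.2⟩
    · simp only [mem_filter, mem_univ, true_and]
      exact ⟨hlt, hi.2⟩
    · simp only [mem_filter, mem_univ, true_and, not_and]
      intro h; exact absurd h (lt_irrefl i)
  have := Finset.card_lt_card hss
  simp only [f, B]
  omega

lemma injOn_f (u : Fin d → Fin (N + 1)) (j : Fin N) : Set.InjOn (f u j) ↑(D u j) :=
  (strictMonoOn_f u j).injOn

lemma card_T (u : Fin d → Fin (N + 1)) (j : Fin N) : (T u j).card = (P u j).card := by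
  refine Finset.card_image_of_injOn ?_
  exact (injOn_f u j).mono (by exact_mod_cast P_subset_D u j)

lemma filter_gt_eq_biUnion (u : Fin d → Fin (N + 1)) (j : Fin N) :
    Finset.univ.filter (fun i' : Fin d => (j : ℕ) + 1 < (u i' : ℕ)) =
      (Finset.univ.filter (fun t : Fin N => j < t)).biUnion (fun t => P u t) := by
  ext i
  simp only [mem_filter, mem_univ, true_and, mem_biUnion, P]
  constructor
  · intro h
    have h2 : (u i : ℕ) ≤ N := Nat.lt_succ_iff.1 (u i).2
    refine ⟨⟨(u i : ℕ) - 1, by omega⟩, ?_, by simp; omega⟩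
    simp only [Fin.lt_def]
    omega
  · rintro ⟨t, ht, ht2⟩
    simp only [Fin.lt_def] at ht
    omega

lemma A_eq_sum (u : Fin d → Fin (N + 1)) (j : Fin N) :
    A u j = ∑ t ∈ Finset.univ.filter (fun t : Fin N => j < t), (P u t).card := by
  rw [A, filter_gt_eq_biUnion]
  refine Finset.card_biUnion ?_
  intro t _ t' _ hne
  refine Finset.disjoint_left.2 ?_
  intro i hi hi'
  simp only [P, mem_filter, mem_univ, true_and] at hi hi'
  exact hne (Fin.ext (by omega))

lemma mem_T_iff (u : Fin d → Fin (N + 1)) (j : Fin N) {i : Fin d} (hi : i ∈ D u j) :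
    (u i : ℕ) = (j : ℕ) + 1 ↔ f u j i ∈ T u j := by
  constructor
  · intro h
    exact Finset.mem_image_of_mem _ (by simp [P, h])
  · intro h
    obtain ⟨i₀, hi₀, hfi₀⟩ := Finset.mem_image.1 h
    have : i₀ = i := injOn_f u j (by exact_mod_cast P_subset_D u j hi₀) (by exact_mod_cast hi) hfi₀
    subst this
    simp only [P, mem_filter, mem_univ, true_and] at hi₀
    exact hi₀

lemma f_le (u : Fin d → Fin (N + 1)) (j : Fin N) {i : Fin d} (hi : i ∈ P u j) :
    f u j i ≤ d - 1 := by
  simp only [P, mem_filter, mem_univ, true_and] at hi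
  have hdisj : Disjoint (Finset.univ.filter (fun i' : Fin d => (j : ℕ) + 1 < (u i' : ℕ)))
      (Finset.univ.filter (fun i' : Fin d => i' < i ∧ (u i' : ℕ) ≤ (j : ℕ) + 1)) := by
    refine Finset.disjoint_left.2 ?_
    intro x hx hx'
    simp only [mem_filter, mem_univ, true_and] at hx hx'
    omega
  have hsub : (Finset.univ.filter (fun i' : Fin d => (j : ℕ) + 1 < (u i' : ℕ))) ∪
      (Finset.univ.filter (fun i' : Fin d => i' < i ∧ (u i' : ℕ) ≤ (j : ℕ) + 1)) ⊆
      Finset.univ.erase i := by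
    intro x hx
    simp only [mem_union, mem_filter, mem_univ, true_and] at hx
    refine Finset.mem_erase.2 ⟨?_, mem_univ x⟩
    rcases hx with hx | hx
    · rintro rfl; omega
    · exact ne_of_lt hx.1
  have := Finset.card_le_card hsub
  rw [Finset.card_union_of_disjoint hdisj] at this
  have hce : (Finset.univ.erase i).card = d - 1 := by
    rw [Finset.card_erase_of_mem (mem_univ i), Finset.card_univ, Fintype.card_fin]
  simp only [f, A, B]
  omega

lemma strictMono_Phi (u : Fin d → Fin (N + 1)) (j : Fin N) : StrictMono (Phi u j).2 :=
  ((T u j).orderEmbOfFin rfl).strictMono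

lemma range_Phi (u : Fin d → Fin (N + 1)) (j : Fin N) :
    Set.range (Phi u j).2 = ↑(T u j) := Finset.range_orderEmbOfFin _ _

lemma coe_T (u : Fin d → Fin (N + 1)) (j : Fin N) :
    (↑(T u j) : Set ℕ) = {v : ℕ | ∃ i : Fin d, (u i : ℕ) = (j : ℕ) + 1 ∧
      v = (Finset.univ.filter (fun i' : Fin d => (j : ℕ) + 1 < (u i' : ℕ))).card
        + (Finset.univ.filter (fun i' : Fin d => i' < i ∧ (u i' : ℕ) ≤ (j : ℕ) + 1)).card} := by
  ext v
  simp only [T, coe_image, Set.mem_image, mem_coe, P, mem_filter, mem_univ, true_and,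
    Set.mem_setOf_eq, f, A, B]
  constructor
  · rintro ⟨i, hi, rfl⟩; exact ⟨i, hi, rfl⟩
  · rintro ⟨i, hi, rfl⟩; exact ⟨i, hi, rfl⟩

lemma Phi_fst (u : Fin d → Fin (N + 1)) (t : Fin N) : (Phi u t).1 = (P u t).card :=
  card_T u t

lemma lower_bound (u : Fin d → Fin (N + 1)) (j : Fin N) (i : Fin (Phi u j).1) :
    (∑ t ∈ Finset.univ.filter (fun t : Fin N => j < t), (Phi u t).1) ≤ (Phi u j).2 i := by
  have hmem : (Phi u j).2 i ∈ T u j := Finset.orderEmbOfFin_mem _ _ _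
  obtain ⟨i₀, hi₀, hfi₀⟩ := Finset.mem_image.1 hmem
  calc ∑ t ∈ Finset.univ.filter (fun t : Fin N => j < t), (Phi u t).1
      = ∑ t ∈ Finset.univ.filter (fun t : Fin N => j < t), (P u t).card := by
        refine Finset.sum_congr rfl fun t _ => Phi_fst u t
    _ = A u j := (A_eq_sum u j).symm
    _ ≤ f u j i₀ := Nat.le_add_right _ _
    _ = (Phi u j).2 i := hfi₀

lemma upper_bound (u : Fin d → Fin (N + 1)) (j : Fin N) (i : Fin (Phi u j).1) :
    (Phi u j).2 i ≤ d - 1 := by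
  have hmem : (Phi u j).2 i ∈ T u j := Finset.orderEmbOfFin_mem _ _ _
  obtain ⟨i₀, hi₀, hfi₀⟩ := Finset.mem_image.1 hmem
  rw [← hfi₀]
  exact f_le u j hi₀

lemma A_eq_card_compl (u : Fin d → Fin (N + 1)) (j : Fin N) :
    A u j = d - (D u j).card := by
  have h := Finset.card_filter_add_card_filter_not
    (s := (Finset.univ : Finset (Fin d))) (p := fun i => (u i : ℕ) ≤ (j : ℕ) + 1)
  have h2 : (Finset.univ.filter (fun i : Fin d => ¬ (u i : ℕ) ≤ (j : ℕ) + 1)).card = A u j := by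
    rw [A]; congr 1; ext i; simp only [mem_filter, mem_univ, true_and, not_le]
  rw [Finset.card_univ, Fintype.card_fin] at h
  have hD : (D u j).card ≤ d := by
    calc (D u j).card ≤ (Finset.univ : Finset (Fin d)).card := Finset.card_le_card (by simp [D])
    _ = d := by simp
  simp only [D] at *
  omega

lemma B_eq_filter_D (u : Fin d → Fin (N + 1)) (j : Fin N) (i : Fin d) :
    B u j i = ((D u j).filter (fun i' => i' < i)).card := by
  rw [B, D]; congr 1
  rw [Finset.filter_filter]
  congr 1; ext i'; constructor <;> (intro h; exact ⟨h.2, h.1⟩)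

lemma f_eq_of_D (u : Fin d → Fin (N + 1)) (j : Fin N) (i : Fin d) :
    f u j i = (d - (D u j).card) + ((D u j).filter (fun i' => i' < i)).card := by
  rw [f, A_eq_card_compl, B_eq_filter_D]

lemma D_eq_compl_biUnion (u : Fin d → Fin (N + 1)) (j : Fin N) :
    D u j = Finset.univ \ (Finset.univ.filter (fun t : Fin N => j < t)).biUnion (fun t => P u t) := by
  rw [← filter_gt_eq_biUnion]
  ext i
  simp only [D, mem_filter, mem_univ, true_and, mem_sdiff]
  omega

lemma P_eq_filter (u : Fin d → Fin (N + 1)) (j : Fin N) :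
    P u j = (D u j).filter (fun i => f u j i ∈ T u j) := by
  ext i
  simp only [P, mem_filter, mem_univ, true_and]
  constructor
  · intro h
    have hiD : i ∈ D u j := P_subset_D u j (by simp [P, h])
    exact ⟨hiD, (mem_T_iff u j hiD).1 h⟩
  · rintro ⟨hiD, hT⟩
    exact (mem_T_iff u j hiD).2 hT

lemma T_eq_of_Phi_eq {u u' : Fin d → Fin (N + 1)} {t : Fin N} (h : Phi u t = Phi u' t) :
    T u t = T u' t := by
  have : (↑(T u t) : Set ℕ) = ↑(T u' t) := by
    rw [← range_Phi u t, ← range_Phi u' t, h]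
  exact_mod_cast Finset.coe_injective this

lemma P_eq_of_Phi_eq {u u' : Fin d → Fin (N + 1)} (h : Phi u = Phi u') :
    ∀ t : Fin N, P u t = P u' t := by
  suffices H : ∀ s : ℕ, ∀ t : Fin N, N - s ≤ (t : ℕ) → P u t = P u' t by
    intro t; exact H N t (by omega)
  intro s
  induction s with
  | zero => intro t ht; exact absurd ht (by have := t.2; omega)
  | succ s ih =>
    intro t ht
    by_cases hcase : N - s ≤ (t : ℕ)
    · exact ih t hcase
    · have hD : D u t = D u' t := by
        rw [D_eq_compl_biUnion, D_eq_compl_biUnion]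
        congr 1
        refine Finset.biUnion_congr rfl ?_
        intro t' ht'
        simp only [mem_filter, mem_univ, true_and, Fin.lt_def] at ht'
        exact ih t' (by omega)
      have hf : f u t = f u' t := by
        funext i
        rw [f_eq_of_D, f_eq_of_D, hD]
      have hT : T u t = T u' t := T_eq_of_Phi_eq (congrFun h t)
      rw [P_eq_filter, P_eq_filter, hD, hf, hT]

lemma injective_Phi : Function.Injective (Phi (N := N) (d := d)) := by
  intro u u' h
  have hP := P_eq_of_Phi_eq h
  funext i
  have hcases : ∀ x : Fin (N + 1), (x : ℕ) = 0 ∨ ∃ t : Fin N, (x : ℕ) = (t : ℕ) + 1 := by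
    intro x
    rcases Nat.eq_zero_or_pos (x : ℕ) with h0 | h0
    · exact Or.inl h0
    · exact Or.inr ⟨⟨(x : ℕ) - 1, by have := x.2; omega⟩, by simp; omega⟩
  have key : (u i : ℕ) = (u' i : ℕ) := by
    rcases hcases (u i) with h0 | ⟨t, htv⟩
    · rcases hcases (u' i) with h0' | ⟨t', htv'⟩
      · omega
      · have : i ∈ P u' t' := by simp [P, htv']
        rw [← hP t'] at this
        simp only [P, mem_filter, mem_univ, true_and] at this
        omega
    · have : i ∈ P u t := by simp [P, htv]
      rw [hP t] at this
      simp only [P, mem_filter, mem_univ, true_and] at this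
      omega
  exact Fin.ext key
/-! ### Inverse construction -/

def Vals (α : Fin N → Σ n : ℕ, Fin n → ℕ) (t : Fin N) : Finset ℕ :=
  Finset.univ.image (α t).2

def shift (α : Fin N → Σ n : ℕ, Fin n → ℕ) (t : Fin N) : ℕ :=
  ∑ t' ∈ Finset.univ.filter (fun t' => t < t'), (α t').1

def tIdx (hN : 0 < N) (s : ℕ) : Fin N := ⟨N - 1 - s, by omega⟩

def PstepOf (hN : 0 < N) (α : Fin N → Σ n : ℕ, Fin n → ℕ) (s : ℕ)
    (U : Finset (Fin d)) : Finset (Fin d) :=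
  ((Finset.univ : Finset (Fin ((Finset.univ \ U).card))).filter
    (fun x : Fin ((Finset.univ \ U).card) =>
      (x : ℕ) + shift α (tIdx hN s) ∈ Vals α (tIdx hN s))).image
    ⇑((Finset.univ \ U).orderEmbOfFin rfl)

def Uacc (hN : 0 < N) (α : Fin N → Σ n : ℕ, Fin n → ℕ) : ℕ → Finset (Fin d)
  | 0 => ∅
  | s + 1 => Uacc hN α s ∪ PstepOf hN α s (Uacc hN α s)

def Pstep (hN : 0 < N) (α : Fin N → Σ n : ℕ, Fin n → ℕ) (s : ℕ) : Finset (Fin d) :=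
  PstepOf hN α s (Uacc hN α s)

lemma Uacc_zero (hN : 0 < N) (α : Fin N → Σ n : ℕ, Fin n → ℕ) :
    Uacc (d := d) hN α 0 = ∅ := rfl

lemma Uacc_succ (hN : 0 < N) (α : Fin N → Σ n : ℕ, Fin n → ℕ) (s : ℕ) :
    Uacc (d := d) hN α (s + 1) = Uacc hN α s ∪ Pstep hN α s := rfl

lemma Pstep_subset (hN : 0 < N) (α : Fin N → Σ n : ℕ, Fin n → ℕ) (s : ℕ) :
    Pstep (d := d) hN α s ⊆ Finset.univ \ Uacc hN α s := by
  intro x hx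
  obtain ⟨y, _, rfl⟩ := Finset.mem_image.1 hx
  exact Finset.orderEmbOfFin_mem _ rfl y

lemma Uacc_mono (hN : 0 < N) (α : Fin N → Σ n : ℕ, Fin n → ℕ) {s s' : ℕ} (h : s ≤ s') :
    Uacc (d := d) hN α s ⊆ Uacc hN α s' := by
  induction s' with
  | zero => simp_all
  | succ s' ih =>
    rcases Nat.lt_or_ge s (s' + 1) with h' | h'
    · exact (ih (by omega)).trans (by rw [Uacc_succ]; exact Finset.subset_union_left)
    · have : s = s' + 1 := by omega
      subst this; exact subset_refl _

lemma mem_Uacc (hN : 0 < N) (α : Fin N → Σ n : ℕ, Fin n → ℕ) (s : ℕ) (i : Fin d) :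
    i ∈ Uacc hN α s ↔ ∃ s' < s, i ∈ Pstep hN α s' := by
  induction s with
  | zero => simp [Uacc_zero]
  | succ s ih =>
    rw [Uacc_succ, Finset.mem_union, ih]
    constructor
    · rintro (⟨s', hs', h⟩ | h)
      · exact ⟨s', by omega, h⟩
      · exact ⟨s, by omega, h⟩
    · rintro ⟨s', hs', h⟩
      rcases Nat.lt_or_ge s' s with h' | h'
      · exact Or.inl ⟨s', h', h⟩
      · have : s' = s := by omega
        subst this; exact Or.inr h

lemma Pstep_disj (hN : 0 < N) (α : Fin N → Σ n : ℕ, Fin n → ℕ) {s s' : ℕ} (h : s' < s) :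
    Disjoint (Pstep (d := d) hN α s') (Pstep hN α s) := by
  refine Finset.disjoint_left.2 fun i hi hi' => ?_
  have h1 : i ∈ Uacc hN α s := (mem_Uacc hN α s i).2 ⟨s', h, hi⟩
  have h2 := Pstep_subset hN α s hi'
  simp only [Finset.mem_sdiff] at h2
  exact h2.2 h1

noncomputable def psi (hN : 0 < N) (α : Fin N → Σ n : ℕ, Fin n → ℕ) (i : Fin d) :
    Fin (N + 1) :=
  if h : ((Finset.range N).filter (fun s => i ∈ Pstep hN α s)).Nonempty
  then ⟨N - ((Finset.range N).filter (fun s => i ∈ Pstep hN α s)).min' h, by omega⟩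
  else 0

lemma psi_eq_iff (hN : 0 < N) (α : Fin N → Σ n : ℕ, Fin n → ℕ) {s : ℕ} (hs : s < N)
    (i : Fin d) : (psi hN α i : ℕ) = N - s ↔ i ∈ Pstep hN α s := by
  unfold psi
  by_cases h : ((Finset.range N).filter (fun s => i ∈ Pstep hN α s)).Nonempty
  · rw [dif_pos h]
    set s₀ := ((Finset.range N).filter (fun s => i ∈ Pstep hN α s)).min' h with hs₀
    have hmem := Finset.min'_mem _ h
    rw [← hs₀] at hmem
    simp only [Finset.mem_filter, Finset.mem_range] at hmem
    constructor
    · intro hv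
      simp only at hv
      have : s₀ = s := by omega
      rw [← this]; exact hmem.2
    · intro hi
      have hle : s₀ ≤ s := Finset.min'_le _ s (by simp [Finset.mem_filter, hs, hi])
      have : s₀ = s := by
        by_contra hne
        have hlt : s₀ < s := by omega
        exact (Finset.disjoint_left.1 (Pstep_disj hN α hlt)) hmem.2 hi
      simp only [Fin.val_mk]
      rw [← hs₀, this]
  · rw [dif_neg h]
    simp only [Fin.val_zero]
    constructor
    · intro hv; omega
    · intro hi
      exact absurd ⟨s, by simp [Finset.mem_filter, hs, hi]⟩ h

lemma psi_cases (hN : 0 < N) (α : Fin N → Σ n : ℕ, Fin n → ℕ) (i : Fin d) :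
    ((psi hN α i : ℕ) = 0 ∧ ∀ s < N, i ∉ Pstep hN α s) ∨
      ∃ s < N, i ∈ Pstep hN α s ∧ (psi hN α i : ℕ) = N - s := by
  unfold psi
  by_cases h : ((Finset.range N).filter (fun s => i ∈ Pstep hN α s)).Nonempty
  · rw [dif_pos h]
    right
    set s₀ := ((Finset.range N).filter (fun s => i ∈ Pstep hN α s)).min' h with hs₀
    have hmem := Finset.min'_mem _ h
    rw [← hs₀] at hmem
    simp only [Finset.mem_filter, Finset.mem_range] at hmem
    exact ⟨s₀, hmem.1, hmem.2, rfl⟩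
  · rw [dif_neg h]
    left
    refine ⟨rfl, fun s hs hi => ?_⟩
    exact absurd ⟨s, by simp [Finset.mem_filter, hs, hi]⟩ h

lemma mem_Uacc_iff_psi (hN : 0 < N) (α : Fin N → Σ n : ℕ, Fin n → ℕ) {s : ℕ} (hs : s ≤ N)
    (i : Fin d) : i ∈ Uacc hN α s ↔ N - s < (psi hN α i : ℕ) := by
  constructor
  · intro h
    obtain ⟨s', hs', hmem⟩ := (mem_Uacc hN α s i).1 h
    have hs'N : s' < N := by omega
    have := (psi_eq_iff hN α hs'N i).2 hmem
    omega
  · intro h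
    rcases psi_cases hN α i with ⟨h0, _⟩ | ⟨s', hs', hmem, hval⟩
    · omega
    · have : s' < s := by omega
      exact (mem_Uacc hN α s i).2 ⟨s', this, hmem⟩
def Sig (α : Fin N → Σ n : ℕ, Fin n → ℕ) (s : ℕ) : ℕ :=
  ∑ t ∈ Finset.univ.filter (fun t : Fin N => N - s ≤ (t : ℕ)), (α t).1

lemma shift_tIdx (hN : 0 < N) (α : Fin N → Σ n : ℕ, Fin n → ℕ) {s : ℕ} (hs : s < N) :
    shift α (tIdx hN s) = Sig α s := by
  unfold shift Sig
  congr 1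
  ext t'
  simp only [Finset.mem_filter, Finset.mem_univ, true_and, Fin.lt_def, tIdx]
  omega

lemma tIdx_eq (hN : 0 < N) (t : Fin N) : tIdx hN (N - 1 - (t : ℕ)) = t := by
  apply Fin.ext
  show N - 1 - (N - 1 - (t : ℕ)) = (t : ℕ)
  have := t.2; omega

variable {α : Fin N → Σ n : ℕ, Fin n → ℕ}

lemma vals_bound (hN : 0 < N) (hd : 0 < d)
    (h2 : ∀ t (x : Fin (α t).1), shift α t ≤ (α t).2 x)
    (h3 : ∀ t (x : Fin (α t).1), (α t).2 x ≤ d - 1)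
    {s : ℕ} (hs : s < N) {v : ℕ} (hv : v ∈ Vals α (tIdx hN s)) :
    Sig α s ≤ v ∧ v < d := by
  obtain ⟨x, _, rfl⟩ := Finset.mem_image.1 hv
  constructor
  · rw [← shift_tIdx hN α hs]; exact h2 _ x
  · have := h3 (tIdx hN s) x; omega

lemma card_Pstep_aux (hN : 0 < N) (hd : 0 < d)
    (h1 : ∀ t, StrictMono (α t).2)
    (h2 : ∀ t (x : Fin (α t).1), shift α t ≤ (α t).2 x)
    (h3 : ∀ t (x : Fin (α t).1), (α t).2 x ≤ d - 1)
    {s : ℕ} (hs : s < N) (hU : (Uacc (d := d) hN α s).card = Sig α s) :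
    (Pstep (d := d) hN α s).card = (α (tIdx hN s)).1 := by
  have hUd : (Uacc (d := d) hN α s).card ≤ d := by
    refine le_trans (Finset.card_le_univ _) (by simp)
  have hSd : Sig α s ≤ d := by rw [← hU]; exact hUd
  have hc : (Finset.univ \ Uacc (d := d) hN α s).card = d - Sig α s := by
    rw [Finset.card_sdiff_of_subset (Finset.subset_univ _), Finset.card_univ, Fintype.card_fin, hU]
  have hv : (Vals α (tIdx hN s)).card = (α (tIdx hN s)).1 := by
    rw [Vals, Finset.card_image_of_injective _ (h1 _).injective, Finset.card_univ,
      Fintype.card_fin]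
  rw [Pstep, PstepOf,
    Finset.card_image_of_injective _ (Finset.orderEmbOfFin _ rfl).injective, ← hv]
  refine Finset.card_bij (fun x _ => (x : ℕ) + shift α (tIdx hN s)) ?_ ?_ ?_
  · intro x hx
    exact (Finset.mem_filter.1 hx).2
  · intro x hx y hy hxy
    have hxy' : (x : ℕ) + shift α (tIdx hN s) = (y : ℕ) + shift α (tIdx hN s) := hxy
    exact Fin.ext (by omega)
  · intro v hvv
    obtain ⟨hv1, hv2⟩ := vals_bound hN hd h2 h3 hs hvv
    refine ⟨⟨v - Sig α s, by rw [hc]; omega⟩, ?_, ?_⟩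
    · simp only [Finset.mem_filter, Finset.mem_univ, true_and]
      show (v - Sig α s) + shift α (tIdx hN s) ∈ Vals α (tIdx hN s)
      rw [shift_tIdx hN α hs, Nat.sub_add_cancel hv1]
      exact hvv
    · show (v - Sig α s) + shift α (tIdx hN s) = v
      rw [shift_tIdx hN α hs]; omega

lemma card_Uacc (hN : 0 < N) (hd : 0 < d)
    (h1 : ∀ t, StrictMono (α t).2)
    (h2 : ∀ t (x : Fin (α t).1), shift α t ≤ (α t).2 x)
    (h3 : ∀ t (x : Fin (α t).1), (α t).2 x ≤ d - 1) :
    ∀ s, s ≤ N → (Uacc (d := d) hN α s).card = Sig α s := by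
  intro s
  induction s with
  | zero =>
    intro _
    rw [Uacc_zero, Finset.card_empty, Sig]
    symm
    rw [Finset.filter_false_of_mem, Finset.sum_empty]
    intro t _
    have := t.2; omega
  | succ s ih =>
    intro hs1
    have hs : s < N := by omega
    have ihU := ih (by omega)
    have hdisj : Disjoint (Uacc (d := d) hN α s) (Pstep hN α s) := by
      refine Finset.disjoint_left.2 fun i hiU hiP => ?_
      exact (Finset.mem_sdiff.1 (Pstep_subset hN α s hiP)).2 hiU
    rw [Uacc_succ, Finset.card_union_of_disjoint hdisj, ihU,
      card_Pstep_aux hN hd h1 h2 h3 hs ihU]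
    have hins : Finset.univ.filter (fun t : Fin N => N - (s + 1) ≤ (t : ℕ)) =
        insert (tIdx hN s) (Finset.univ.filter (fun t : Fin N => N - s ≤ (t : ℕ))) := by
      ext t
      simp only [Finset.mem_insert, Finset.mem_filter, Finset.mem_univ, true_and,
        Fin.ext_iff, tIdx]
      have := t.2; omega
    have hnot : tIdx hN s ∉ Finset.univ.filter (fun t : Fin N => N - s ≤ (t : ℕ)) := by
      simp only [Finset.mem_filter, Finset.mem_univ, true_and, tIdx]
      omega
    have hSig : Sig α (s + 1) = (α (tIdx hN s)).1 + Sig α s := by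
      unfold Sig
      rw [hins, Finset.sum_insert hnot]
    omega

lemma P_psi (hN : 0 < N) (α : Fin N → Σ n : ℕ, Fin n → ℕ) (t : Fin N) :
    P (psi (d := d) hN α) t = Pstep hN α (N - 1 - (t : ℕ)) := by
  have ht := t.2
  have hs : N - 1 - (t : ℕ) < N := by omega
  ext i
  simp only [P, Finset.mem_filter, Finset.mem_univ, true_and]
  have h := psi_eq_iff hN α hs i
  have hv : N - (N - 1 - (t : ℕ)) = (t : ℕ) + 1 := by omega
  rw [hv] at h
  exact h

lemma D_psi (hN : 0 < N) (α : Fin N → Σ n : ℕ, Fin n → ℕ) (t : Fin N) :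
    D (psi (d := d) hN α) t = Finset.univ \ Uacc hN α (N - 1 - (t : ℕ)) := by
  have ht := t.2
  ext i
  simp only [D, Finset.mem_filter, Finset.mem_univ, true_and, Finset.mem_sdiff]
  have h := mem_Uacc_iff_psi hN α (s := N - 1 - (t : ℕ)) (by omega) i
  constructor
  · intro hle hmem
    have := h.1 hmem
    omega
  · intro hmem
    by_contra hgt
    exact hmem (h.2 (by omega))

lemma filter_lt_orderEmb (S : Finset (Fin d)) (x : Fin S.card) :
    (S.filter (fun i' => i' < S.orderEmbOfFin rfl x)).card = (x : ℕ) := by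
  have himg : S.filter (fun i' => i' < S.orderEmbOfFin rfl x) =
      (Finset.univ.filter (fun y : Fin S.card => y < x)).image ⇑(S.orderEmbOfFin rfl) := by
    ext i'
    simp only [Finset.mem_filter, Finset.mem_univ, true_and, Finset.mem_image]
    constructor
    · rintro ⟨hi', hlt⟩
      have hr : i' ∈ Set.range ⇑(S.orderEmbOfFin rfl) := by
        rw [Finset.range_orderEmbOfFin]; exact_mod_cast hi'
      obtain ⟨y, rfl⟩ := hr
      exact ⟨y, by rwa [OrderEmbedding.lt_iff_lt] at hlt, rfl⟩
    · rintro ⟨y, hy, rfl⟩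
      exact ⟨Finset.orderEmbOfFin_mem _ rfl y, by rwa [OrderEmbedding.lt_iff_lt]⟩
  rw [himg, Finset.card_image_of_injective _ (S.orderEmbOfFin rfl).injective]
  rw [show Finset.univ.filter (fun y : Fin S.card => y < x) = Finset.Iio x from by
    ext y; simp]
  exact Fin.card_Iio x

lemma T_psi (hN : 0 < N) (hd : 0 < d)
    (h1 : ∀ t, StrictMono (α t).2)
    (h2 : ∀ t (x : Fin (α t).1), shift α t ≤ (α t).2 x)
    (h3 : ∀ t (x : Fin (α t).1), (α t).2 x ≤ d - 1)
    (t : Fin N) : T (psi (d := d) hN α) t = Vals α t := by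
  have ht := t.2
  set s := N - 1 - (t : ℕ) with hsdef
  have hs : s < N := by omega
  have hUc := card_Uacc hN hd h1 h2 h3 s (by omega)
  have hSd : Sig α s ≤ d := by
    rw [← hUc]; exact le_trans (Finset.card_le_univ _) (by simp)
  have hc : (Finset.univ \ Uacc (d := d) hN α s).card = d - Sig α s := by
    rw [Finset.card_sdiff_of_subset (Finset.subset_univ _), Finset.card_univ, Fintype.card_fin, hUc]
  have htI : tIdx hN s = t := tIdx_eq hN t
  have hfval : ∀ x : Fin ((Finset.univ \ Uacc (d := d) hN α s).card),
      f (psi hN α) t ((Finset.univ \ Uacc (d := d) hN α s).orderEmbOfFin rfl x) =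
        Sig α s + (x : ℕ) := by
    intro x
    rw [f_eq_of_D, D_psi hN α t, ← hsdef, filter_lt_orderEmb]
    omega
  rw [T, P_psi hN α t, ← hsdef, Pstep, PstepOf, Finset.image_image]
  ext v
  simp only [Finset.mem_image, Finset.mem_filter, Finset.mem_univ, true_and,
    Function.comp]
  constructor
  · rintro ⟨x, hx, rfl⟩
    rw [hfval x]
    rw [shift_tIdx hN α hs, htI] at hx
    rwa [Nat.add_comm]
  · intro hv
    have hb : Sig α s ≤ v ∧ v < d := by
      refine vals_bound hN hd h2 h3 hs ?_
      rw [htI]; exact hv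
    refine ⟨⟨v - Sig α s, by rw [hc]; omega⟩, ?_, ?_⟩
    · show (v - Sig α s) + shift α (tIdx hN s) ∈ Vals α (tIdx hN s)
      rw [shift_tIdx hN α hs, Nat.sub_add_cancel hb.1, htI]
      exact hv
    · rw [hfval]
      show Sig α s + (v - Sig α s) = v
      omega

lemma sigma_eq {S : Finset ℕ} {m : ℕ} {g : Fin m → ℕ} (hc : S.card = m)
    (hg : ∀ x, g x ∈ S) (hmono : StrictMono g) :
    (⟨S.card, ⇑(S.orderEmbOfFin rfl)⟩ : Σ n : ℕ, Fin n → ℕ) = ⟨m, g⟩ := by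
  subst hc
  rw [Finset.orderEmbOfFin_unique (s := S) rfl hg hmono]

lemma Phi_psi (hN : 0 < N) (hd : 0 < d)
    (h1 : ∀ t, StrictMono (α t).2)
    (h2 : ∀ t (x : Fin (α t).1), shift α t ≤ (α t).2 x)
    (h3 : ∀ t (x : Fin (α t).1), (α t).2 x ≤ d - 1)
    (t : Fin N) : Phi (psi (d := d) hN α) t = α t := by
  have key : ∀ S : Finset ℕ, S = Vals α t →
      (⟨S.card, ⇑(S.orderEmbOfFin rfl)⟩ : Σ n : ℕ, Fin n → ℕ) = α t := by
    rintro S rfl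
    have hc : (Vals α t).card = (α t).1 := by
      rw [Vals, Finset.card_image_of_injective _ (h1 t).injective, Finset.card_univ,
        Fintype.card_fin]
    exact sigma_eq hc (fun x => Finset.mem_image_of_mem _ (Finset.mem_univ x)) (h1 t)
  exact key _ (T_psi hN hd h1 h2 h3 t)
end Stmt9

/-- the explicit bijection between {0, ..., N}^d and the elements of
B^{N+} with all entries ≤ d - 1: for u ∈ {0,...,N}^d and the letter j+1
(j : Fin N), the sequence α^{j+1} = Φ(u) j lists, in increasing order, the values
#{i' : u_{i'} > j+1} + #{i' < i : u_{i'} ≤ j+1} over positions i with u_i = j+1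
(this is the paper's "remove larger letters and relabel" construction). -/
theorem stmt_9 (N d : ℕ) (hN : 1 ≤ N) (hd : 1 ≤ d) :
    ∃ Φ : (Fin d → Fin (N + 1)) → (Fin N → Σ n : ℕ, Fin n → ℕ),
      Set.BijOn Φ Set.univ
        {α : Fin N → Σ n : ℕ, Fin n → ℕ |
          (∀ j, StrictMono (α j).2) ∧
          (∀ j (i : Fin (α j).1),
            (∑ t ∈ Finset.univ.filter (fun t => j < t), (α t).1) ≤ (α j).2 i) ∧
          (∀ j (i : Fin (α j).1), (α j).2 i ≤ d - 1)} ∧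
      (∀ u, ∀ j : Fin N, StrictMono (Φ u j).2) ∧
      ∀ u, ∀ j : Fin N,
        Set.range (Φ u j).2 =
          {v : ℕ | ∃ i : Fin d, (u i : ℕ) = (j : ℕ) + 1 ∧
            v = (Finset.univ.filter
                  (fun i' : Fin d => (j : ℕ) + 1 < (u i' : ℕ))).card
              + (Finset.univ.filter
                  (fun i' : Fin d => i' < i ∧ (u i' : ℕ) ≤ (j : ℕ) + 1)).card} := by
  refine ⟨Stmt9.Phi, ⟨?_, ?_, ?_⟩, fun u j => Stmt9.strictMono_Phi u j, fun u j => ?_⟩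
  · intro u _
    exact ⟨fun j => Stmt9.strictMono_Phi u j, fun j i => Stmt9.lower_bound u j i,
      fun j i => Stmt9.upper_bound u j i⟩
  · exact fun u _ u' _ h => Stmt9.injective_Phi h
  · intro α hα
    obtain ⟨h1, h2, h3⟩ := hα
    exact ⟨Stmt9.psi hN α, Set.mem_univ _,
      funext fun t => Stmt9.Phi_psi hN hd h1 h2 h3 t⟩
  · rw [Stmt9.range_Phi, Stmt9.coe_T]
end

section
/- The map τ⁺ sending an N-tuple (α^1, ..., α^N) ∈ B^{N+} to the N-tuple of sequences (a^j_i)_{j,i} with a^j_i = α^j_i - s_{j+1} - i + 1 is a bijection from B^{N+} onto the set A^N of N-tuples of weakly increasing finite sequences of naturals. -/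
private lemma smono_gap {n : ℕ} {f : Fin n → ℕ} (hf : StrictMono f) :
    ∀ (k : ℕ) (i j : Fin n), (j : ℕ) = (i : ℕ) + k → f i + k ≤ f j := by
  intro k
  induction k with
  | zero =>
    intro i j h
    have : i = j := Fin.ext (by omega)
    subst this; omega
  | succ k ih =>
    intro i j h
    have hlt : (i : ℕ) + k < n := by
      have := j.isLt; omega
    have h1 := ih i ⟨(i : ℕ) + k, hlt⟩ rfl
    have h2 : f ⟨(i : ℕ) + k, hlt⟩ < f j := hf (by simp [Fin.lt_def]; omega)
    omega

private lemma smono_bound {n : ℕ} {f : Fin n → ℕ} (hf : StrictMono f) {s : ℕ}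
    (hs : ∀ i, s ≤ f i) (i : Fin n) : s + (i : ℕ) ≤ f i := by
  have h0 : (0 : ℕ) < n := i.pos
  have := smono_gap hf (i : ℕ) ⟨0, h0⟩ i (by simp)
  have := hs ⟨0, h0⟩
  omega

/-- the map τ⁺ with (τ⁺ α)^j_i = α^j_i - s_{j+1} - i + 1 (here
0-indexed: α^j_i - s_{j+1} - i, with s_{j+1} = Σ_{t > j} n_t) is a bijection from
B^{N+} onto the set A^N of N-tuples of weakly increasing finite sequences. -/
theorem stmt_10 (N : ℕ) :
    Set.BijOn
      (fun α : Fin N → Σ n : ℕ, Fin n → ℕ =>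
        fun j => (⟨(α j).1, fun i =>
          (α j).2 i - (∑ t ∈ Finset.univ.filter (fun t => j < t), (α t).1)
            - (i : ℕ)⟩ : Σ n : ℕ, Fin n → ℕ))
      {α : Fin N → Σ n : ℕ, Fin n → ℕ |
        (∀ j, StrictMono (α j).2) ∧
        ∀ j (i : Fin (α j).1),
          (∑ t ∈ Finset.univ.filter (fun t => j < t), (α t).1) ≤ (α j).2 i}
      {a : Fin N → Σ n : ℕ, Fin n → ℕ | ∀ j, Monotone (a j).2} := by
  classical
  apply Set.InvOn.bijOn (f' := fun a : Fin N → Σ n : ℕ, Fin n → ℕ =>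
      fun j => (⟨(a j).1, fun i =>
        (a j).2 i + (∑ t ∈ Finset.univ.filter (fun t => j < t), (a t).1)
          + (i : ℕ)⟩ : Σ n : ℕ, Fin n → ℕ))
  · constructor
    · -- LeftInvOn
      intro α hα
      obtain ⟨hsm, hb⟩ := hα
      funext j
      have hbd : ∀ i : Fin (α j).1,
          (∑ t ∈ Finset.univ.filter (fun t => j < t), (α t).1) + (i : ℕ) ≤ (α j).2 i :=
        smono_bound (hsm j) (hb j)
      show (⟨(α j).1, fun i =>
          ((α j).2 i - (∑ t ∈ Finset.univ.filter (fun t => j < t), (α t).1) - (i : ℕ))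
            + (∑ t ∈ Finset.univ.filter (fun t => j < t), (α t).1) + (i : ℕ)⟩
          : Σ n : ℕ, Fin n → ℕ) = α j
      have : (fun i : Fin (α j).1 =>
          ((α j).2 i - (∑ t ∈ Finset.univ.filter (fun t => j < t), (α t).1) - (i : ℕ))
            + (∑ t ∈ Finset.univ.filter (fun t => j < t), (α t).1) + (i : ℕ)) = (α j).2 := by
        funext i
        have := hbd i
        omega
      rw [this]
    · -- RightInvOn
      intro a _
      funext j
      show (⟨(a j).1, fun i =>
          ((a j).2 i + (∑ t ∈ Finset.univ.filter (fun t => j < t), (a t).1) + (i : ℕ))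
            - (∑ t ∈ Finset.univ.filter (fun t => j < t), (a t).1) - (i : ℕ)⟩
          : Σ n : ℕ, Fin n → ℕ) = a j
      have : (fun i : Fin (a j).1 =>
          ((a j).2 i + (∑ t ∈ Finset.univ.filter (fun t => j < t), (a t).1) + (i : ℕ))
            - (∑ t ∈ Finset.univ.filter (fun t => j < t), (a t).1) - (i : ℕ)) = (a j).2 := by
        funext i; omega
      rw [this]
  · -- MapsTo f
    intro α hα
    obtain ⟨hsm, hb⟩ := hα
    intro j
    show Monotone fun i : Fin (α j).1 =>
      (α j).2 i - (∑ t ∈ Finset.univ.filter (fun t => j < t), (α t).1) - (i : ℕ)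
    intro i i' h
    have hbd : ∀ i : Fin (α j).1,
        (∑ t ∈ Finset.univ.filter (fun t => j < t), (α t).1) + (i : ℕ) ≤ (α j).2 i :=
      smono_bound (hsm j) (hb j)
    have h1 := hbd i
    have h2 := hbd i'
    have hle : (i : ℕ) ≤ (i' : ℕ) := h
    have hgap := smono_gap (hsm j) ((i' : ℕ) - (i : ℕ)) i i' (by omega)
    simp only
    omega
  · -- MapsTo g
    intro a ha
    constructor
    · intro j
      show StrictMono fun i : Fin (a j).1 =>
        (a j).2 i + (∑ t ∈ Finset.univ.filter (fun t => j < t), (a t).1) + (i : ℕ)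
      intro i i' h
      have hle := (ha j) h.le
      have hlt : (i : ℕ) < (i' : ℕ) := h
      simp only
      omega
    · intro j i
      show (∑ t ∈ Finset.univ.filter (fun t => j < t), (a t).1) ≤
        (a j).2 i + (∑ t ∈ Finset.univ.filter (fun t => j < t), (a t).1) + (i : ℕ)
      exact le_trans (Nat.le_add_left _ _) (Nat.le_add_right _ _)
end

section
/- For each strictly increasing sequence α = (α_1 < ... < α_n) of naturals, the product of the diagonal entries of the matrix Δ_1(α) is a nonzero scalar multiple of (y')^{α_n - α_{n-1} - 1} (y'')^{α_{n-1} - α_{n-2} - 1} ⋯ (y^{(n-1)})^{α_2 - α_1 - 1} (y^{(n)})^{α_1}; in particular the variable y = y^{(0)} does not divide this diagonal monomial. -/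
open Finset MvPolynomial

lemma aux_wfilter {k : ℕ} {α : ℕ → ℕ} (hmono : ∀ i j, i ≤ j → j ≤ k → α i ≤ α j)
    {x t : ℕ} (ht : t ≤ k + 1) (h1 : ∀ j < t, α j < x) (h2 : t ≤ k → x ≤ α t) :
    (Finset.range (k+1)).filter (fun j => α j < x) = Finset.range t := by
  ext j
  simp only [Finset.mem_filter, Finset.mem_range]
  constructor
  · rintro ⟨hj, hjx⟩
    by_contra hjt
    push_neg at hjt
    have htk : t ≤ k := by omega
    have := hmono t j hjt (by omega)
    have := h2 htk
    omega
  · intro hjt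
    exact ⟨by omega, h1 j hjt⟩

lemma aux_wrev {k : ℕ} {α : ℕ → ℕ} (hmono : ∀ i j, i ≤ j → j ≤ k → α i ≤ α j)
    {x t : ℕ} (ht : t ≤ k)
    (h : ((Finset.range (k+1)).filter (fun j => α j < x)).card = t) :
    (∀ j < t, α j < x) ∧ x ≤ α t := by
  constructor
  · intro j hjt
    by_contra hx
    push_neg at hx
    have hsub : (Finset.range (k+1)).filter (fun l => α l < x) ⊆ Finset.range j := by
      intro l hl
      simp only [Finset.mem_filter, Finset.mem_range] at hl ⊢
      by_contra hlj
      push_neg at hlj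
      have := hmono j l hlj (by omega)
      omega
    have := Finset.card_le_card hsub
    rw [h, Finset.card_range] at this
    omega
  · by_contra hx
    push_neg at hx
    have hsub : Finset.range (t+1) ⊆ (Finset.range (k+1)).filter (fun l => α l < x) := by
      intro l hl
      simp only [Finset.mem_filter, Finset.mem_range] at hl ⊢
      exact ⟨by omega, lt_of_le_of_lt (hmono l t (by omega) ht) hx⟩
    have := Finset.card_le_card hsub
    rw [h, Finset.card_range] at this
    omega

/-- for α = (α_1 < ... < α_n) (0-indexed: α 0 < ... < α (n-1)), the
product of the diagonal entries of Δ_1(α) — whose rows are indexed by the elements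
of {0, ..., α_{n-1}} not of the form α_j, in increasing order, and whose i-th
column is the column of type n + i in the variable y, so that the (i,i) entry is
binom(n+i, r_i) y^{(n+i-r_i)} — is a nonzero scalar multiple of
(y^{(n)})^{α_0} ∏_{j<n-1} (y^{(n-1-j)})^{α_{j+1}-α_j-1}; in particular y = y^{(0)}
does not divide it. Variables: `X l` = y^{(l)}. -/
theorem stmt_13 (n : ℕ) (hn : 1 ≤ n) (α : ℕ → ℕ)
    (hα : ∀ i j, i < j → j ≤ n - 1 → α i < α j)
    (R : Finset ℕ)
    (hR : R = Finset.range (α (n - 1) + 1) \ (Finset.range n).image α)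
    (hcard : R.card = α (n - 1) + 1 - n) :
    ∃ c : ℂ, c ≠ 0 ∧
      (∏ i : Fin (α (n - 1) + 1 - n),
          (MvPolynomial.C (((n + (i : ℕ)).choose (R.orderEmbOfFin hcard i)) : ℂ)
            * MvPolynomial.X (n + (i : ℕ) - R.orderEmbOfFin hcard i)
            : MvPolynomial ℕ ℂ))
        = MvPolynomial.C c
          * (MvPolynomial.X n ^ α 0
            * ∏ j ∈ Finset.range (n - 1),
                MvPolynomial.X (n - 1 - j) ^ (α (j + 1) - α j - 1)) ∧
      ¬ (MvPolynomial.X 0 : MvPolynomial ℕ ℂ) ∣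
          ∏ i : Fin (α (n - 1) + 1 - n),
            (MvPolynomial.C (((n + (i : ℕ)).choose (R.orderEmbOfFin hcard i)) : ℂ)
              * MvPolynomial.X (n + (i : ℕ) - R.orderEmbOfFin hcard i)) := by
  obtain ⟨k, rfl⟩ : ∃ k, n = k + 1 := ⟨n - 1, by omega⟩
  clear hn
  rw [show k + 1 - 1 = k from rfl] at hα hR
  show ∃ c : ℂ, c ≠ 0 ∧
      (∏ i : Fin (α k + 1 - (k + 1)),
          (MvPolynomial.C (((k + 1 + (i : ℕ)).choose (R.orderEmbOfFin hcard i)) : ℂ)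
            * MvPolynomial.X (k + 1 + (i : ℕ) - R.orderEmbOfFin hcard i)
            : MvPolynomial ℕ ℂ))
        = MvPolynomial.C c
          * (MvPolynomial.X (k + 1) ^ α 0
            * ∏ j ∈ Finset.range k,
                MvPolynomial.X (k - j) ^ (α (j + 1) - α j - 1)) ∧
      ¬ (MvPolynomial.X 0 : MvPolynomial ℕ ℂ) ∣
          ∏ i : Fin (α k + 1 - (k + 1)),
            (MvPolynomial.C (((k + 1 + (i : ℕ)).choose (R.orderEmbOfFin hcard i)) : ℂ)
              * MvPolynomial.X (k + 1 + (i : ℕ) - R.orderEmbOfFin hcard i))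
  -- basic monotonicity facts
  have hsmono : ∀ i j, i < j → j ≤ k → α i < α j := fun i j h hj => hα i j h hj
  have hmono : ∀ i j, i ≤ j → j ≤ k → α i ≤ α j := by
    intro i j hij hjk
    rcases eq_or_lt_of_le hij with rfl | h
    · exact le_rfl
    · exact (hsmono i j h hjk).le
  -- membership in R
  have hmemR : ∀ x, x ∈ R ↔ (x ≤ α k ∧ ∀ j, j ≤ k → α j ≠ x) := by
    intro x
    rw [hR]
    simp only [Finset.mem_sdiff, Finset.mem_range, Finset.mem_image, not_exists, not_and]
    constructor
    · rintro ⟨h1, h2⟩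
      exact ⟨by omega, fun j hj => h2 j (by omega)⟩
    · rintro ⟨h1, h2⟩
      exact ⟨by omega, fun j hj => h2 j (by omega)⟩
  set m := α k + 1 - (k + 1) with hm
  have hER : ∀ i : Fin m, (R.orderEmbOfFin hcard i : ℕ) ∈ R :=
    fun i => R.orderEmbOfFin_mem hcard i
  have hinjE : Function.Injective (fun j : Fin m => (R.orderEmbOfFin hcard j : ℕ)) :=
    fun a b h => (R.orderEmbOfFin hcard).injective h
  have himgR : Finset.image (fun i : Fin m => (R.orderEmbOfFin hcard i : ℕ)) Finset.univ
      = R := by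
    ext x
    simp only [Finset.mem_image, Finset.mem_univ, true_and]
    constructor
    · rintro ⟨i, rfl⟩
      exact hER i
    · intro hx
      have hx' : x ∈ Set.range (R.orderEmbOfFin hcard) := by
        rw [Finset.range_orderEmbOfFin]
        exact_mod_cast hx
      obtain ⟨i, rfl⟩ := hx'
      exact ⟨i, rfl⟩
  -- the weight function
  set W : ℕ → ℕ := fun x => ((Finset.range (k+1)).filter (fun j => α j < x)).card with hW
  have hWlt : ∀ x ∈ R, W x < k + 1 := by
    intro x hx
    obtain ⟨hxle, hxne⟩ := (hmemR x).mp hx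
    have hsub : (Finset.range (k+1)).filter (fun j => α j < x) ⊆
        (Finset.range (k+1)).erase k := by
      intro j hj
      simp only [Finset.mem_filter, Finset.mem_range, Finset.mem_erase] at hj ⊢
      refine ⟨fun hjk => ?_, hj.1⟩
      subst hjk
      omega
    have := Finset.card_le_card hsub
    rw [Finset.card_erase_of_mem (by simp), Finset.card_range] at this
    simp only [hW]
    omega
  -- key position identity
  have hEi : ∀ i : Fin m,
      (R.orderEmbOfFin hcard i : ℕ) = (i : ℕ) + W (R.orderEmbOfFin hcard i) := by
    intro i
    obtain ⟨hxle, hxne⟩ := (hmemR _).mp (hER i)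
    have hA : ((Finset.range (α k + 1)).filter
        (fun y => y < (R.orderEmbOfFin hcard i : ℕ))).card
        = (R.orderEmbOfFin hcard i : ℕ) := by
      have heq : (Finset.range (α k + 1)).filter
          (fun y => y < (R.orderEmbOfFin hcard i : ℕ))
          = Finset.range (R.orderEmbOfFin hcard i : ℕ) := by
        ext y
        simp only [Finset.mem_filter, Finset.mem_range]
        omega
      rw [heq, Finset.card_range]
    have hsubset : (Finset.range (k+1)).image α ⊆ Finset.range (α k + 1) := by
      intro y hy
      simp only [Finset.mem_image, Finset.mem_range] at hy ⊢
      obtain ⟨j, hj, rfl⟩ := hy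
      have := hmono j k (by omega) le_rfl
      omega
    have hunion : R ∪ (Finset.range (k+1)).image α = Finset.range (α k + 1) := by
      rw [hR]
      exact Finset.sdiff_union_of_subset hsubset
    have hdisj : Disjoint R ((Finset.range (k+1)).image α) := by
      rw [hR]; exact Finset.sdiff_disjoint
    have hsplit : ((Finset.range (α k + 1)).filter
          (fun y => y < (R.orderEmbOfFin hcard i : ℕ))).card
        = (R.filter (fun y => y < (R.orderEmbOfFin hcard i : ℕ))).card
          + (((Finset.range (k+1)).image α).filter
              (fun y => y < (R.orderEmbOfFin hcard i : ℕ))).card := by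
      rw [← hunion, Finset.filter_union]
      exact Finset.card_union_of_disjoint (Finset.disjoint_filter_filter hdisj)
    have himgcount : (((Finset.range (k+1)).image α).filter
          (fun y => y < (R.orderEmbOfFin hcard i : ℕ))).card
        = W (R.orderEmbOfFin hcard i) := by
      rw [Finset.filter_image]
      rw [Finset.card_image_of_injOn]
      intro a ha b hb hab
      simp only [Finset.coe_filter, Finset.mem_range, Set.mem_setOf_eq] at ha hb
      by_contra hne
      rcases Nat.lt_or_ge a b with h | h
      · have := hsmono a b h (by omega); omega
      · have := hsmono b a (by omega) (by omega); omega
    have hRcount : (R.filter (fun y => y < (R.orderEmbOfFin hcard i : ℕ))).card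
        = (i : ℕ) := by
      have himg : R.filter (fun y => y < (R.orderEmbOfFin hcard i : ℕ))
          = (Finset.Iio i).image (fun j : Fin m => (R.orderEmbOfFin hcard j : ℕ)) := by
        ext y
        simp only [Finset.mem_filter, Finset.mem_image, Finset.mem_Iio]
        constructor
        · rintro ⟨hyR, hyx⟩
          have hy : y ∈ Set.range (R.orderEmbOfFin hcard) := by
            rw [Finset.range_orderEmbOfFin]
            exact_mod_cast hyR
          obtain ⟨j, rfl⟩ := hy
          exact ⟨j, (R.orderEmbOfFin hcard).lt_iff_lt.mp hyx, rfl⟩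
        · rintro ⟨j, hji, rfl⟩
          exact ⟨hER j, (R.orderEmbOfFin hcard).lt_iff_lt.mpr hji⟩
      rw [himg, Finset.card_image_of_injective _ hinjE, Fin.card_Iio]
    omega
  -- the constant
  have hchoose_pos : ∀ i : Fin m, 0 < (k + 1 + (i : ℕ)).choose (R.orderEmbOfFin hcard i) := by
    intro i
    apply Nat.choose_pos
    have h1 := hEi i
    have h2 := hWlt _ (hER i)
    omega
  set c : ℂ := ∏ i : Fin m, (((k + 1 + (i : ℕ)).choose (R.orderEmbOfFin hcard i) : ℕ) : ℂ)
    with hc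
  have hc0 : c ≠ 0 := by
    rw [hc, Finset.prod_ne_zero_iff]
    intro i _
    exact_mod_cast (hchoose_pos i).ne'
  -- fibers of W on R
  have hfib0 : R.filter (fun x => W x = 0) = Finset.range (α 0) := by
    ext x
    simp only [Finset.mem_filter, Finset.mem_range]
    constructor
    · rintro ⟨hxR, hWx⟩
      have h2 := (aux_wrev hmono (Nat.zero_le k) hWx).2
      have h3 := ((hmemR x).mp hxR).2 0 (Nat.zero_le k)
      omega
    · intro hx
      have hx0k : α 0 ≤ α k := hmono 0 k (Nat.zero_le k) le_rfl
      refine ⟨(hmemR x).mpr ⟨by omega, fun j hj => ?_⟩, ?_⟩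
      · have := hmono 0 j (Nat.zero_le j) hj; omega
      · have hfil := aux_wfilter hmono (x := x) (t := 0) (by omega)
          (fun j hj => absurd hj (Nat.not_lt_zero j)) (fun _ => by omega)
        simp only [hW]
        rw [hfil, Finset.card_range]
  have hfibsucc : ∀ j, j < k →
      R.filter (fun x => W x = j + 1) = Finset.Ico (α j + 1) (α (j + 1)) := by
    intro j hj
    ext x
    simp only [Finset.mem_filter, Finset.mem_Ico]
    constructor
    · rintro ⟨hxR, hWx⟩
      obtain ⟨h1, h2⟩ := aux_wrev hmono (by omega) hWx
      have hne := ((hmemR x).mp hxR).2 (j + 1) (by omega)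
      have := h1 j (by omega)
      omega
    · rintro ⟨h1, h2⟩
      have hle : α (j + 1) ≤ α k := hmono (j + 1) k (by omega) le_rfl
      refine ⟨(hmemR x).mpr ⟨by omega, fun l hl => ?_⟩, ?_⟩
      · rcases Nat.lt_or_ge l (j + 1) with h | h
        · have := hmono l j (by omega) (by omega); omega
        · have := hmono (j + 1) l h hl; omega
      · have hfil := aux_wfilter hmono (x := x) (t := j + 1) (by omega)
          (fun l hl => lt_of_le_of_lt (hmono l j (by omega) (by omega)) (by omega))
          (fun _ => by omega)
        simp only [hW]
        rw [hfil, Finset.card_range]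
  -- the main computation
  have key : (∏ i : Fin m,
        (MvPolynomial.C (((k + 1 + (i : ℕ)).choose (R.orderEmbOfFin hcard i)) : ℂ)
          * MvPolynomial.X (k + 1 + (i : ℕ) - R.orderEmbOfFin hcard i)
          : MvPolynomial ℕ ℂ))
      = MvPolynomial.C c
        * (MvPolynomial.X (k + 1) ^ α 0
          * ∏ j ∈ Finset.range k,
              MvPolynomial.X (k - j) ^ (α (j + 1) - α j - 1)) := by
    rw [Finset.prod_mul_distrib, hc, map_prod]
    congr 1
    calc ∏ i : Fin m,
          (MvPolynomial.X (k + 1 + (i : ℕ) - R.orderEmbOfFin hcard i) : MvPolynomial ℕ ℂ)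
        = ∏ i : Fin m,
            (MvPolynomial.X (k + 1 - W (R.orderEmbOfFin hcard i)) : MvPolynomial ℕ ℂ) := by
          refine Finset.prod_congr rfl fun i _ => ?_
          have h1 := hEi i
          have h2 := hWlt _ (hER i)
          congr 1
          omega
      _ = ∏ x ∈ R, (MvPolynomial.X (k + 1 - W x) : MvPolynomial ℕ ℂ) := by
          conv_rhs => rw [← himgR]
          rw [Finset.prod_image fun a _ b _ h => hinjE h]
      _ = ∏ t ∈ Finset.range (k + 1), ∏ x ∈ R.filter (fun x => W x = t),
            (MvPolynomial.X (k + 1 - W x) : MvPolynomial ℕ ℂ) := by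
          rw [Finset.prod_fiberwise_of_maps_to (fun x hx => Finset.mem_range.mpr (hWlt x hx))]
      _ = ∏ t ∈ Finset.range (k + 1),
            (MvPolynomial.X (k + 1 - t) : MvPolynomial ℕ ℂ)
              ^ (R.filter (fun x => W x = t)).card := by
          refine Finset.prod_congr rfl fun t _ => ?_
          rw [← Finset.prod_const]
          refine Finset.prod_congr rfl fun x hx => ?_
          rw [(Finset.mem_filter.mp hx).2]
      _ = (∏ j ∈ Finset.range k,
            (MvPolynomial.X (k + 1 - (j + 1)) : MvPolynomial ℕ ℂ)
              ^ (R.filter (fun x => W x = j + 1)).card)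
          * (MvPolynomial.X (k + 1 - 0) : MvPolynomial ℕ ℂ)
              ^ (R.filter (fun x => W x = 0)).card := Finset.prod_range_succ' _ k
      _ = MvPolynomial.X (k + 1) ^ α 0
          * ∏ j ∈ Finset.range k,
              MvPolynomial.X (k - j) ^ (α (j + 1) - α j - 1) := by
          rw [mul_comm]
          congr 1
          · rw [hfib0, Finset.card_range, Nat.sub_zero]
          · refine Finset.prod_congr rfl fun j hj => ?_
            have hjk := Finset.mem_range.mp hj
            rw [hfibsucc j hjk, Nat.card_Ico,
              show k + 1 - (j + 1) = k - j from by omega,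
              show α (j + 1) - (α j + 1) = α (j + 1) - α j - 1 from by omega]
  refine ⟨c, hc0, key, ?_⟩
  rw [key]
  rintro ⟨q, hq⟩
  apply hc0
  have heval := congrArg (MvPolynomial.eval (fun i : ℕ => if i = 0 then (0 : ℂ) else 1)) hq
  simp only [map_mul, map_pow, map_prod, eval_C, eval_X, if_pos rfl, zero_mul] at heval
  rw [if_neg (by omega : ¬ (k + 1 = 0)), one_pow] at heval
  have hone : ∀ j ∈ Finset.range k,
      ((if k - j = 0 then (0 : ℂ) else 1)) ^ (α (j + 1) - α j - 1) = 1 := by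
    intro j hj
    rw [if_neg (by simp only [Finset.mem_range] at hj; omega), one_pow]
  rw [Finset.prod_congr rfl hone, Finset.prod_const_one, mul_one] at heval
  simpa using heval
end

section
/- For N-tuples α = (α^1, ..., α^N) ∈ B^{N+}, the determinant of the matrix Δ_0(α), whose (i, c)-entry for the column of type α^j_t in variable x_{0j} is binom(α^j_t, i-1) x_{0j}^{(α^j_t - i + 1)}, is weight-homogeneous: all its monomials have weight w(α) = Σ_{j=1}^N Σ_{i=1}^{n_j} (α^j_i - s_{j+1} - i + 2), where x_{0j}^{(a)} has weight a + 1. -/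
/-- for α = (α^1, ..., α^N) ∈ B^{N+}, the determinant of Δ_0(α) is
weight-homogeneous of weight w(α) = Σ_j Σ_i (α^j_i - s_{j+1} - i + 2) (1-indexed;
0-indexed "+1"), where the variable x_{0j}^{(a)} = `X (j, a)` has weight a + 1.
The matrix is indexed by pairs (j, i), a pair occupying row/column position
s_{j+1} + i, and the entry in the column of type α^j_t at row position q is
binom(α^j_t, q) x_{0j}^{(α^j_t - q)}. -/
theorem stmt_18 (N : ℕ) (n : Fin N → ℕ) (α : (j : Fin N) → Fin (n j) → ℕ)
    (hmono : ∀ j, StrictMono (α j))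
    (hbound : ∀ j i,
      (∑ t ∈ Finset.univ.filter (fun t => j < t), n t) ≤ α j i) :
    let sAbove : Fin N → ℕ :=
      fun j => ∑ t ∈ Finset.univ.filter (fun t => j < t), n t
    let pos : (Σ j : Fin N, Fin (n j)) → ℕ := fun r => sAbove r.1 + (r.2 : ℕ)
    let M : Matrix (Σ j : Fin N, Fin (n j)) (Σ j : Fin N, Fin (n j))
        (MvPolynomial (Fin N × ℕ) ℂ) :=
      fun r c => MvPolynomial.C ((α c.1 c.2).choose (pos r) : ℂ)
        * MvPolynomial.X (c.1, α c.1 c.2 - pos r)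
    ∀ m ∈ M.det.support,
      (m.sum fun p e => (p.2 + 1) * e)
        = ∑ j : Fin N, ∑ i : Fin (n j), (α j i - sAbove j - (i : ℕ) + 1) := by
  intro sAbove pos M
  classical
  set w : Fin N × ℕ → ℕ := fun p => p.2 + 1 with hw
  -- key: α j i ≥ pos ⟨j, i⟩
  have hpos : ∀ r : (Σ j : Fin N, Fin (n j)), pos r ≤ α r.1 r.2 := by
    rintro ⟨j, i⟩
    obtain ⟨k, hk⟩ := i
    induction k with
    | zero => simpa [pos, sAbove] using hbound j ⟨0, hk⟩
    | succ k ih =>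
        have h1 : α j ⟨k, Nat.lt_of_succ_lt hk⟩ < α j ⟨k + 1, hk⟩ :=
          hmono j (by simp [Fin.lt_def])
        have := ih (Nat.lt_of_succ_lt hk)
        simp only [pos] at this ⊢
        omega
  set W : ℕ := ∑ r : (Σ j : Fin N, Fin (n j)), (α r.1 r.2 + 1 - pos r) with hW
  have hhom : M.det.IsWeightedHomogeneous w W := by
    rw [Matrix.det_apply]
    apply MvPolynomial.IsWeightedHomogeneous.sum
    intro σ _
    have hprod : MvPolynomial.IsWeightedHomogeneous w (∏ r, M (σ r) r) W := by
      by_cases hall : ∀ r, pos (σ r) ≤ α r.1 r.2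
      · have := MvPolynomial.IsWeightedHomogeneous.prod Finset.univ
          (fun r => M (σ r) r) (fun r => α r.1 r.2 + 1 - pos (σ r))
          (w := w) (fun r _ => by
            have h0 := MvPolynomial.isWeightedHomogeneous_C (R := ℂ) w
              (((α r.1 r.2).choose (pos (σ r)) : ℂ))
            have hx := MvPolynomial.isWeightedHomogeneous_X ℂ w
              (r.1, α r.1 r.2 - pos (σ r))
            have := h0.mul hx
            have hwv : (0 : ℕ) + w (r.1, α r.1 r.2 - pos (σ r))
                = α r.1 r.2 + 1 - pos (σ r) := by
              simp only [hw]
              have := hall r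
              omega
            rwa [hwv] at this)
        have hWeq : (∑ r : (Σ j : Fin N, Fin (n j)), (α r.1 r.2 + 1 - pos (σ r))) = W := by
          rw [hW]
          have h1 : ∀ r : (Σ j : Fin N, Fin (n j)),
              (α r.1 r.2 + 1 - pos (σ r)) + pos (σ r) = α r.1 r.2 + 1 := fun r => by
            have := hall r; omega
          have h2 : ∀ r : (Σ j : Fin N, Fin (n j)),
              (α r.1 r.2 + 1 - pos r) + pos r = α r.1 r.2 + 1 := fun r => by
            have := hpos r; omega
          have e1 : (∑ r : (Σ j : Fin N, Fin (n j)), (α r.1 r.2 + 1 - pos (σ r)))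
              + ∑ r : (Σ j : Fin N, Fin (n j)), pos (σ r)
              = ∑ r : (Σ j : Fin N, Fin (n j)), (α r.1 r.2 + 1) := by
            rw [← Finset.sum_add_distrib]
            exact Finset.sum_congr rfl fun r _ => h1 r
          have e2 : (∑ r : (Σ j : Fin N, Fin (n j)), (α r.1 r.2 + 1 - pos r))
              + ∑ r : (Σ j : Fin N, Fin (n j)), pos r
              = ∑ r : (Σ j : Fin N, Fin (n j)), (α r.1 r.2 + 1) := by
            rw [← Finset.sum_add_distrib]
            exact Finset.sum_congr rfl fun r _ => h2 r
          have hperm : (∑ r : (Σ j : Fin N, Fin (n j)), pos (σ r))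
              = ∑ r : (Σ j : Fin N, Fin (n j)), pos r :=
            Equiv.sum_comp σ pos
          omega
        rwa [hWeq] at this
      · push_neg at hall
        obtain ⟨r, hr⟩ := hall
        have hz : M (σ r) r = 0 := by
          have : (α r.1 r.2).choose (pos (σ r)) = 0 :=
            Nat.choose_eq_zero_of_lt hr
          simp [M, this]
        have hz0 : (∏ c : (Σ j : Fin N, Fin (n j)), M (σ c) c) = 0 :=
          Finset.prod_eq_zero (Finset.mem_univ r) hz
        rw [hz0]
        exact MvPolynomial.isWeightedHomogeneous_zero ℂ w W
    -- now handle the sign smul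
    have hmem : (∏ r, M (σ r) r) ∈
        MvPolynomial.weightedHomogeneousSubmodule ℂ w W := hprod
    have : (Equiv.Perm.sign σ • ∏ r, M (σ r) r) ∈
        (MvPolynomial.weightedHomogeneousSubmodule ℂ w W).toAddSubgroup := by
      rw [Units.smul_def]
      exact zsmul_mem hmem _
    exact this
  intro m hm
  have hdeg := hhom (MvPolynomial.mem_support_iff.mp hm)
  rw [Finsupp.weight_apply] at hdeg
  have hlhs : (m.sum fun p e => (p.2 + 1) * e)
      = Finsupp.sum m fun i c => c • w i := by
    apply Finsupp.sum_congr
    intro p _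
    simp [hw, mul_comm]
  rw [hlhs, hdeg, hW]
  rw [Finset.sum_sigma']
  apply Finset.sum_congr rfl
  rintro ⟨j, i⟩ _
  have := hpos ⟨j, i⟩
  simp only [pos, sAbove] at this ⊢
  omega
end

section
/- The family { det Δ_0(α) : α ∈ B^{N+} } is a basis of the polynomial ring E = ℂ[x_{01}, ..., x_{0N}, x_{01}', ..., x_{0N}', ...] as a ℂ-vector space. -/
open Finset MvPolynomial

namespace Stmt19

variable {N : ℕ}

abbrev Mon (N : ℕ) := (Fin N × ℕ) →₀ ℕ

/-- order on variables: `v` smaller iff bigger `j`, or same `j` and smaller `l`. -/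
def vlt (v w : Fin N × ℕ) : Prop := w.1 < v.1 ∨ (v.1 = w.1 ∧ v.2 < w.2)

lemma vlt_irrefl (v : Fin N × ℕ) : ¬ vlt v v := by simp [vlt]

lemma vlt_ne {v w : Fin N × ℕ} (h : vlt v w) : v ≠ w := by
  rintro rfl; exact vlt_irrefl v h

lemma vlt_trans {u v w : Fin N × ℕ} (h1 : vlt u v) (h2 : vlt v w) : vlt u w := by
  obtain ⟨uj, ul⟩ := u; obtain ⟨vj, vl⟩ := v; obtain ⟨wj, wl⟩ := w
  simp only [vlt] at *
  rcases h1 with h1 | ⟨e1, h1⟩ <;> rcases h2 with h2 | ⟨e2, h2⟩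
  · exact Or.inl (h2.trans h1)
  · subst e2; exact Or.inl h1
  · subst e1; exact Or.inl h2
  · subst e1; exact Or.inr ⟨e2, h1.trans h2⟩

lemma vlt_trichot (v w : Fin N × ℕ) : vlt v w ∨ v = w ∨ vlt w v := by
  obtain ⟨vj, vl⟩ := v; obtain ⟨wj, wl⟩ := w
  rcases lt_trichotomy vj wj with h | h | h
  · exact Or.inr (Or.inr (Or.inl h))
  · subst h
    rcases lt_trichotomy vl wl with h | h | h
    · exact Or.inl (Or.inr ⟨rfl, h⟩)
    · subst h; exact Or.inr (Or.inl rfl)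
    · exact Or.inr (Or.inr (Or.inr ⟨rfl, h⟩))
  · exact Or.inl (Or.inl h)

/-- monomial order: `m` smaller than `m'` iff at the `vlt`-largest variable where
they differ, `m` has smaller exponent. -/
def MLt (m m' : Mon N) : Prop :=
  ∃ v, (∀ w, vlt v w → m w = m' w) ∧ m v < m' v

lemma MLt_irrefl (m : Mon N) : ¬ MLt m m := by
  rintro ⟨v, _, h⟩; exact lt_irrefl _ h

lemma MLt_trans {m1 m2 m3 : Mon N} (h1 : MLt m1 m2) (h2 : MLt m2 m3) : MLt m1 m3 := by
  obtain ⟨v1, ha1, hl1⟩ := h1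
  obtain ⟨v2, ha2, hl2⟩ := h2
  rcases vlt_trichot v1 v2 with h | rfl | h
  · exact ⟨v2, fun w hw => (ha1 w (vlt_trans h hw)).trans (ha2 w hw),
      by rw [ha1 v2 h]; exact hl2⟩
  · exact ⟨v1, fun w hw => (ha1 w hw).trans (ha2 w hw), hl1.trans hl2⟩
  · exact ⟨v1, fun w hw => (ha1 w hw).trans (ha2 w (vlt_trans h hw)),
      by rw [← ha2 v1 h]; exact hl1⟩

lemma MLt_ne {m m' : Mon N} (h : MLt m m') : m ≠ m' := by
  rintro rfl; exact MLt_irrefl m h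

/-- any nonempty finite set has a minimal element for a transitive irreflexive relation -/
lemma exists_minimal {A : Type*} (R : A → A → Prop)
    (htrans : ∀ {a b c}, R a b → R b c → R a c) (hirr : ∀ a, ¬ R a a) :
    ∀ (s : Finset A), s.Nonempty → ∃ a ∈ s, ∀ b ∈ s, ¬ R b a := by
  classical
  intro s
  induction s using Finset.strongInduction with
  | _ s ih =>
    rintro ⟨x, hx⟩
    by_cases hs' : (s.filter (fun y => R y x)).Nonempty
    · have hsub : s.filter (fun y => R y x) ⊂ s := by
        refine Finset.ssubset_iff_of_subset (Finset.filter_subset _ _) |>.mpr ?_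
        exact ⟨x, hx, by simp [hirr]⟩
      obtain ⟨a, ha, hmin⟩ := ih _ hsub hs'
      rw [Finset.mem_filter] at ha
      refine ⟨a, ha.1, fun b hb hR => ?_⟩
      exact hmin b (Finset.mem_filter.mpr ⟨hb, htrans hR ha.2⟩) hR
    · refine ⟨x, hx, fun b hb hR => ?_⟩
      exact hs' ⟨b, Finset.mem_filter.mpr ⟨hb, hR⟩⟩


variable (n : Fin N → ℕ)

abbrev Idx := Σ j : Fin N, Fin (n j)

def pos (c : Idx n) : ℕ := (∑ t ∈ Finset.univ.filter (fun t => c.1 < t), n t) + c.2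

lemma block_le {j' j : Fin N} (h : j' < j) :
    (∑ t ∈ Finset.univ.filter (fun t => j < t), n t) + n j ≤
      ∑ t ∈ Finset.univ.filter (fun t => j' < t), n t := by
  have hj : j ∉ Finset.univ.filter (fun t => j < t) := by simp
  have : (∑ t ∈ Finset.univ.filter (fun t => j < t), n t) + n j
      = ∑ t ∈ insert j (Finset.univ.filter (fun t => j < t)), n t := by
    rw [Finset.sum_insert hj, add_comm]
  rw [this]
  apply Finset.sum_le_sum_of_subset
  intro t ht
  simp only [Finset.mem_insert, Finset.mem_filter, Finset.mem_univ, true_and] at *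
  rcases ht with rfl | ht
  · exact h
  · exact h.trans ht

lemma pos_lt_of_fst_lt {c c' : Idx n} (h : c.1 < c'.1) : pos n c' < pos n c := by
  have h1 : pos n c' < (∑ t ∈ Finset.univ.filter (fun t => c'.1 < t), n t) + n c'.1 := by
    unfold pos; exact Nat.add_lt_add_left c'.2.2 _
  have h2 := block_le n h
  unfold pos
  omega

lemma pos_inj : Function.Injective (pos n) := by
  intro c c' h
  rcases lt_trichotomy c.1 c'.1 with hj | hj | hj
  · exact absurd h (by have := pos_lt_of_fst_lt n hj; omega)
  · obtain ⟨j, t⟩ := c; obtain ⟨j', t'⟩ := c'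
    cases (show j = j' from hj)
    unfold pos at h
    simp only at h
    have : (t : ℕ) = t' := by omega
    exact Sigma.ext rfl (heq_of_eq (Fin.ext this))
  · exact absurd h (by have := pos_lt_of_fst_lt n hj; omega)

lemma fst_le_of_pos_lt {c c' : Idx n} (h : pos n c < pos n c') : c'.1 ≤ c.1 := by
  by_contra hc
  push_neg at hc
  have := pos_lt_of_fst_lt n hc
  omega

variable (a : Idx n → ℕ)

noncomputable def pmono (σ : Equiv.Perm (Idx n)) : Mon N :=
  ∑ c : Idx n, Finsupp.single (c.1, a c - pos n (σ c)) 1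

lemma pmono_apply (σ : Equiv.Perm (Idx n)) (w : Fin N × ℕ) :
    pmono n a σ w = ∑ c : Idx n, (if (c.1, a c - pos n (σ c)) = w then 1 else 0) := by
  classical
  rw [pmono, Finset.sum_apply']
  exact Finset.sum_congr rfl fun c _ => Finsupp.single_apply

theorem key (ha : ∀ c, pos n c ≤ a c)
    (hblock : ∀ ⦃c c' : Idx n⦄, c.1 = c'.1 → pos n c < pos n c' → a c < a c') :
    ∀ (k : ℕ) (σ : Equiv.Perm (Idx n)),
      (Finset.univ.filter (fun c => σ c ≠ c)).card ≤ k →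
      (∀ c, pos n (σ c) ≤ a c) → σ ≠ 1 →
      MLt (pmono n a 1) (pmono n a σ) := by
  classical
  intro k
  induction k with
  | zero =>
    intro σ hcard _ hσ
    exfalso
    apply hσ
    apply Equiv.ext
    intro c
    show σ c = c
    by_contra hc
    have : c ∈ Finset.univ.filter (fun c => σ c ≠ c) := by simp [hc]
    have := Finset.card_pos.mpr ⟨c, this⟩
    omega
  | succ k ih =>
    intro σ hcard hv hσ
    set s := Finset.univ.filter (fun c => σ c ≠ c) with hs
    have hsne : s.Nonempty := by
      by_contra hemp
      apply hσ
      apply Equiv.ext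
      intro c
      show σ c = c
      by_contra hc
      exact hemp ⟨c, by simp [hs, hc]⟩
    obtain ⟨c0, hc0s, hmax⟩ := Finset.exists_max_image s (pos n) hsne
    have h0 : σ c0 ≠ c0 := (Finset.mem_filter.mp hc0s).2
    -- σ c0 is non-fixed
    have hσc0 : σ (σ c0) ≠ σ c0 := fun h => h0 (σ.injective h)
    have hσc0s : σ c0 ∈ s := by simp [hs, hσc0]
    have hq1 : pos n (σ c0) < pos n c0 :=
      lt_of_le_of_ne (hmax _ hσc0s) (fun h => h0 (pos_inj n h))
    set c1 := σ.symm c0 with hc1def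
    have hσc1 : σ c1 = c0 := σ.apply_symm_apply c0
    have hc1ne : c1 ≠ c0 := by
      intro h; rw [h] at hσc1; exact h0 hσc1
    have hc1s : c1 ∈ s := by
      rw [hs]
      simp only [Finset.mem_filter, Finset.mem_univ, true_and]
      rw [hσc1]
      exact Ne.symm hc1ne
    have hp1 : pos n c1 < pos n c0 :=
      lt_of_le_of_ne (hmax _ hc1s) (fun h => hc1ne (pos_inj n h))
    -- the modified permutation
    set σ' := σ * Equiv.swap c0 c1 with hσ'def
    have hσ'c0 : σ' c0 = c0 := by
      simp [hσ'def, Equiv.swap_apply_left, hσc1]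
    have hσ'c1 : σ' c1 = σ c0 := by
      simp [hσ'def, Equiv.swap_apply_right]
    have hσ'other : ∀ c, c ≠ c0 → c ≠ c1 → σ' c = σ c := by
      intro c h1 h2
      simp [hσ'def, Equiv.swap_apply_of_ne_of_ne h1 h2]
    have hv' : ∀ c, pos n (σ' c) ≤ a c := by
      intro c
      by_cases e0 : c = c0
      · rw [e0, hσ'c0]; exact ha c0
      by_cases e1 : c = c1
      · rw [e1, hσ'c1]
        calc pos n (σ c0) ≤ pos n c0 := hq1.le
        _ = pos n (σ c1) := by rw [hσc1]
        _ ≤ a c1 := hv c1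
      · rw [hσ'other c e0 e1]; exact hv c
    have hcard' : (Finset.univ.filter (fun c => σ' c ≠ c)).card ≤ k := by
      have hsub : Finset.univ.filter (fun c => σ' c ≠ c) ⊆ s.erase c0 := by
        intro c hc
        simp only [Finset.mem_filter, Finset.mem_univ, true_and] at hc
        rw [Finset.mem_erase]
        constructor
        · intro h; subst h; exact hc hσ'c0
        · by_cases e1 : c = c1
          · subst e1; exact hc1s
          · have e0 : c ≠ c0 := fun h => by subst h; exact hc hσ'c0
            rw [hσ'other c e0 e1] at hc
            simp [hs, hc]
      calc (Finset.univ.filter (fun c => σ' c ≠ c)).card ≤ (s.erase c0).card :=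
            Finset.card_le_card hsub
        _ = s.card - 1 := Finset.card_erase_of_mem hc0s
        _ ≤ k := by omega
    -- the step comparison
    have hstep : MLt (pmono n a σ') (pmono n a σ) := by
      set u : Fin N × ℕ := (c0.1, a c0 - pos n (σ c0)) with hu
      set u' : Fin N × ℕ := (c0.1, a c0 - pos n c0) with hu'
      set v : Fin N × ℕ := (c1.1, a c1 - pos n c0) with hvv
      set v' : Fin N × ℕ := (c1.1, a c1 - pos n (σ c0)) with hv'v
      have hac0 : pos n c0 ≤ a c0 := ha c0
      have hac1 : pos n c0 ≤ a c1 := by have := hv c1; rwa [hσc1] at this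
      have hfst : c0.1 ≤ c1.1 := fst_le_of_pos_lt n hp1
      have hu'u : vlt u' u := Or.inr ⟨rfl, by simp only [hu, hu']; omega⟩
      have hvu : vlt v u := by
        rcases lt_or_eq_of_le hfst with h | h
        · exact Or.inl h
        · have hlt : a c1 < a c0 := hblock h.symm hp1
          exact Or.inr ⟨h.symm, by simp only [hvv, hu]; omega⟩
      have hv'u : vlt v' u := by
        rcases lt_or_eq_of_le hfst with h | h
        · exact Or.inl h
        · have hlt : a c1 < a c0 := hblock h.symm hp1
          exact Or.inr ⟨h.symm, by simp only [hv'v, hu]; omega⟩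
      have split : ∀ (g : Idx n → ℕ), ∑ c, g c =
          (∑ c ∈ (Finset.univ.erase c0).erase c1, g c) + (g c1 + g c0) := by
        intro g
        rw [← Finset.sum_erase_add _ g (Finset.mem_univ c0),
          ← Finset.sum_erase_add _ g (Finset.mem_erase.mpr ⟨hc1ne, Finset.mem_univ c1⟩),
          add_assoc]
      have hpt : ∀ w, pmono n a σ w =
          (∑ c ∈ (Finset.univ.erase c0).erase c1,
            (if (c.1, a c - pos n (σ c)) = w then 1 else 0)) +
          ((if v = w then 1 else 0) + (if u = w then 1 else 0)) := by
        intro w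
        rw [pmono_apply, split, hσc1]
      have hpt' : ∀ w, pmono n a σ' w =
          (∑ c ∈ (Finset.univ.erase c0).erase c1,
            (if (c.1, a c - pos n (σ c)) = w then 1 else 0)) +
          ((if v' = w then 1 else 0) + (if u' = w then 1 else 0)) := by
        intro w
        rw [pmono_apply, split, hσ'c1, hσ'c0]
        have hR : ∑ c ∈ (Finset.univ.erase c0).erase c1,
            (if (c.1, a c - pos n (σ' c)) = w then 1 else 0) =
            ∑ c ∈ (Finset.univ.erase c0).erase c1,
            (if (c.1, a c - pos n (σ c)) = w then 1 else 0) := by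
          refine Finset.sum_congr rfl fun c hc => ?_
          simp only [Finset.mem_erase] at hc
          rw [hσ'other c hc.2.1 hc.1]
        rw [hR]
      refine ⟨u, fun w hw => ?_, ?_⟩
      · rw [hpt, hpt']
        have h1 : u ≠ w := vlt_ne hw
        have h2 : u' ≠ w := vlt_ne (vlt_trans hu'u hw)
        have h3 : v ≠ w := vlt_ne (vlt_trans hvu hw)
        have h4 : v' ≠ w := vlt_ne (vlt_trans hv'u hw)
        simp [h1, h2, h3, h4]
      · rw [hpt u, hpt' u]
        have h2 : u' ≠ u := vlt_ne hu'u
        have h4 : v' ≠ u := vlt_ne hv'u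
        rw [if_neg h2, if_neg h4, if_pos rfl]
        omega
    by_cases hσ'1 : σ' = 1
    · rw [← hσ'1]
      exact hstep
    · exact MLt_trans (ih σ' hcard' hv' hσ'1) hstep

open MvPolynomial

noncomputable def Dmat (a : Idx n → ℕ) : Matrix (Idx n) (Idx n) (MvPolynomial (Fin N × ℕ) ℂ) :=
  fun r c => MvPolynomial.C ((a c).choose (pos n r) : ℂ) * MvPolynomial.X (c.1, a c - pos n r)

noncomputable def bin (a : Idx n → ℕ) (σ : Equiv.Perm (Idx n)) : ℂ :=
  ∏ c, ((a c).choose (pos n (σ c)) : ℂ)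

lemma prod_monomial {ι : Type*} (t : Finset ι) (s : ι → Mon N) (b : ι → ℂ) :
    ∏ c ∈ t, (monomial (s c) (b c) : MvPolynomial (Fin N × ℕ) ℂ)
      = monomial (∑ c ∈ t, s c) (∏ c ∈ t, b c) := by
  classical
  induction t using Finset.cons_induction with
  | empty => simp [MvPolynomial.monomial_zero']
  | cons i t hit ih =>
    rw [Finset.prod_cons, Finset.sum_cons, Finset.prod_cons, ih, MvPolynomial.monomial_mul]

variable {a : Idx n → ℕ}

lemma prod_entries (σ : Equiv.Perm (Idx n)) :
    ∏ c, Dmat n a (σ c) c = monomial (pmono n a σ) (bin n a σ) := by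
  rw [pmono, bin, ← prod_monomial]
  refine Finset.prod_congr rfl fun c _ => ?_
  rw [Dmat]
  show _ * (monomial (Finsupp.single _ 1)) (1:ℂ) = _
  rw [MvPolynomial.C_mul_monomial, mul_one]

lemma coeff_det (m : Mon N) :
    coeff m (Matrix.det (Dmat n a)) =
      ∑ σ : Equiv.Perm (Idx n),
        (Equiv.Perm.sign σ : ℤ) • (if pmono n a σ = m then bin n a σ else 0) := by
  rw [Matrix.det_apply, MvPolynomial.coeff_sum]
  refine Finset.sum_congr rfl fun σ _ => ?_
  rw [Units.smul_def, MvPolynomial.coeff_smul, prod_entries, MvPolynomial.coeff_monomial]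

noncomputable def wdeg : Mon N →+ ℕ :=
  Finsupp.liftAddHom (fun v => AddMonoidHom.mulRight (v.2 + 1))

lemma wdeg_single (v : Fin N × ℕ) : wdeg (Finsupp.single v 1) = v.2 + 1 := by
  rw [wdeg, Finsupp.liftAddHom_apply_single]
  simp

lemma bin_ne_zero_iff (σ : Equiv.Perm (Idx n)) :
    bin n a σ ≠ 0 ↔ ∀ c, pos n (σ c) ≤ a c := by
  rw [bin, Finset.prod_ne_zero_iff]
  constructor
  · intro h c
    by_contra hlt
    push_neg at hlt
    exact h c (Finset.mem_univ c) (by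
      rw [Nat.choose_eq_zero_of_lt hlt]; exact Nat.cast_zero)
  · intro h c _
    exact Nat.cast_ne_zero.mpr (Nat.choose_pos (h c)).ne'

lemma wdeg_pmono (ha : ∀ c, pos n c ≤ a c) (σ : Equiv.Perm (Idx n))
    (hv : ∀ c, pos n (σ c) ≤ a c) :
    wdeg (pmono n a σ) = ∑ c, (a c + 1 - pos n c) := by
  rw [pmono, map_sum]
  have h1 : ∀ c : Idx n, wdeg (Finsupp.single (c.1, a c - pos n (σ c)) 1)
      = a c + 1 - pos n (σ c) := by
    intro c
    rw [wdeg_single]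
    have := hv c
    simp only
    omega
  rw [Finset.sum_congr rfl fun c _ => h1 c]
  rw [Finset.sum_tsub_distrib _ (fun c _ => by have := hv c; omega),
    Finset.sum_tsub_distrib _ (fun c _ => by have := ha c; omega)]
  congr 1
  exact Equiv.sum_comp σ (pos n)

lemma mem_support_det (ha : ∀ c, pos n c ≤ a c)
    (hblock : ∀ ⦃c c' : Idx n⦄, c.1 = c'.1 → pos n c < pos n c' → a c < a c')
    {m : Mon N} (hm : m ∈ (Matrix.det (Dmat n a)).support) :
    (m = pmono n a 1 ∨ MLt (pmono n a 1) m) ∧ wdeg m = ∑ c, (a c + 1 - pos n c) := by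
  have hc : coeff m (Matrix.det (Dmat n a)) ≠ 0 := MvPolynomial.mem_support_iff.mp hm
  rw [coeff_det] at hc
  obtain ⟨σ, _, hσ⟩ := Finset.exists_ne_zero_of_sum_ne_zero hc
  by_cases hps : pmono n a σ = m
  · rw [if_pos hps] at hσ
    have hbin : bin n a σ ≠ 0 := by
      intro h; rw [h, smul_zero] at hσ; exact hσ rfl
    have hv : ∀ c, pos n (σ c) ≤ a c := (bin_ne_zero_iff n σ).mp hbin
    subst hps
    constructor
    · by_cases h1 : σ = 1
      · subst h1; exact Or.inl rfl
      · exact Or.inr (key n a ha hblock _ σ le_rfl hv h1)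
    · exact wdeg_pmono n ha σ hv
  · rw [if_neg hps, smul_zero] at hσ
    exact absurd rfl hσ

lemma coeff_det_diag (ha : ∀ c, pos n c ≤ a c)
    (hblock : ∀ ⦃c c' : Idx n⦄, c.1 = c'.1 → pos n c < pos n c' → a c < a c') :
    coeff (pmono n a 1) (Matrix.det (Dmat n a)) = bin n a 1 := by
  rw [coeff_det]
  rw [Finset.sum_eq_single_of_mem 1 (Finset.mem_univ 1)]
  · rw [if_pos rfl]; simp
  · intro σ _ hσ1
    by_cases hv : ∀ c, pos n (σ c) ≤ a c
    · have := key n a ha hblock _ σ le_rfl hv hσ1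
      rw [if_neg (fun h => MLt_ne this h.symm)]
      exact smul_zero _
    · have hbin : bin n a σ = 0 := by
        by_contra h
        exact hv ((bin_ne_zero_iff n σ).mp h)
      rw [hbin]
      simp
  
lemma bin_one_ne_zero (ha : ∀ c, pos n c ≤ a c) : bin n a 1 ≠ 0 := by
  rw [bin_ne_zero_iff]
  exact fun c => ha c


/-! ### auxiliary facts about strictly monotone sequences -/

lemma strictMono_add_le {k b : ℕ} {g : Fin k → ℕ} (hg : StrictMono g)
    (hb : ∀ i, b ≤ g i) : ∀ i : Fin k, b + (i : ℕ) ≤ g i := by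
  have H : ∀ (mval : ℕ) (hm : mval < k), b + mval ≤ g ⟨mval, hm⟩ := by
    intro mval
    induction mval with
    | zero => intro hm; simpa using hb ⟨0, hm⟩
    | succ mv ih =>
      intro hm
      have h1 : mv < k := by omega
      have h2 : g ⟨mv, h1⟩ < g ⟨mv + 1, hm⟩ := hg (by simp [Fin.mk_lt_mk])
      have := ih h1
      omega
  intro i
  have := H i.1 i.2
  simpa using this

lemma strictMono_diff_le {k : ℕ} {g : Fin k → ℕ} (hg : StrictMono g)
    {t t' : Fin k} (h : (t : ℕ) ≤ (t' : ℕ)) : g t + ((t' : ℕ) - (t : ℕ)) ≤ g t' := by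
  have H : ∀ (d : ℕ) (t t' : Fin k), (t : ℕ) + d = (t' : ℕ) → g t + d ≤ g t' := by
    intro d
    induction d with
    | zero =>
      intro t t' hd
      have : t = t' := Fin.ext (by omega)
      subst this; omega
    | succ dv ih =>
      intro t t' hd
      have h1 : (t : ℕ) + dv < k := by omega
      have h2 := ih t ⟨(t : ℕ) + dv, h1⟩ (by simp)
      have h3 : g ⟨(t : ℕ) + dv, h1⟩ < g t' := hg (by simp [Fin.lt_def]; omega)
      omega
  have := H ((t' : ℕ) - (t : ℕ)) t t' (by omega)
  omega

/-! ### counting lemma for the diagonal monomial -/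

lemma count_ofFn {k : ℕ} (g : Fin k → ℕ) (l : ℕ) :
    (List.ofFn g).count l = ∑ t : Fin k, if g t = l then 1 else 0 := by
  induction k with
  | zero => simp
  | succ k ih =>
    rw [List.ofFn_succ, List.count_cons, ih, Fin.sum_univ_succ]
    simp only [beq_iff_eq]
    omega

lemma d_apply (m : Fin N → ℕ) (α : (j : Fin N) → Fin (m j) → ℕ) (j : Fin N) (l : ℕ) :
    (pmono m (fun c => α c.1 c.2) 1) (j, l)
      = (List.ofFn (fun t : Fin (m j) => α j t - pos m ⟨j, t⟩)).count l := by
  classical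
  rw [pmono_apply, count_ofFn]
  rw [← Finset.univ_sigma_univ, Finset.sum_sigma]
  rw [Finset.sum_eq_single_of_mem j (Finset.mem_univ j)]
  · refine Finset.sum_congr rfl fun t _ => ?_
    simp only [Equiv.Perm.one_apply, Prod.mk.injEq]
    congr 1
    simp
  · intro j' _ hj'
    apply Finset.sum_eq_zero
    intro t _
    simp only [Equiv.Perm.one_apply, Prod.mk.injEq]
    rw [if_neg]
    rintro ⟨h1, -⟩
    exact hj' h1


/-! ### the index set B -/

abbrev BT (N : ℕ) := {q : Σ n : Fin N → ℕ, (j : Fin N) → Fin (n j) → ℕ //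
      (∀ j, StrictMono (q.2 j)) ∧
      ∀ j i, (∑ t ∈ Finset.univ.filter (fun t => j < t), q.1 t) ≤ q.2 j i}



def av (q : BT N) : Idx q.1.1 → ℕ := fun c => q.1.2 c.1 c.2

noncomputable def dm (q : BT N) : Mon N := pmono q.1.1 (av q) 1

lemma ha_q (q : BT N) : ∀ c, pos q.1.1 c ≤ av q c := by
  rintro ⟨j, t⟩
  have h := strictMono_add_le (q.2.1 j) (q.2.2 j) t
  simpa [pos, av] using h

lemma hblock_q (q : BT N) :
    ∀ ⦃c c' : Idx q.1.1⦄, c.1 = c'.1 → pos q.1.1 c < pos q.1.1 c' → av q c < av q c' := by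
  rintro ⟨j, t⟩ ⟨j', t'⟩ hj hp
  cases hj
  simp only [pos] at hp
  have ht : t < t' := by
    rw [Fin.lt_def]; omega
  exact q.2.1 j ht

/-- the list of diagonal exponents in block `j` -/
def blockList (q : BT N) (j : Fin N) : List ℕ :=
  List.ofFn (fun t : Fin (q.1.1 j) => q.1.2 j t - pos q.1.1 ⟨j, t⟩)

lemma dm_apply (q : BT N) (j : Fin N) (l : ℕ) :
    dm q (j, l) = (blockList q j).count l :=
  d_apply q.1.1 q.1.2 j l

lemma blockList_sorted (q : BT N) (j : Fin N) :
    List.Pairwise (· ≤ ·) (blockList q j) := by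
  rw [blockList, List.pairwise_ofFn]
  intro t t' htt
  have h1 := strictMono_diff_le (q.2.1 j) (show (t:ℕ) ≤ t' from htt.le)
  have h2 := ha_q q ⟨j, t⟩
  have h3 := ha_q q ⟨j, t'⟩
  simp only [pos, av] at h2 h3 ⊢
  omega

lemma dm_inj : Function.Injective (dm : BT N → Mon N) := by
  rintro q q' h
  have hcount : ∀ j l, (blockList q j).count l = (blockList q' j).count l := by
    intro j l
    rw [← dm_apply, ← dm_apply, h]
  have hlist : ∀ j, blockList q j = blockList q' j := by
    intro j
    exact List.Perm.eq_of_pairwise' (blockList_sorted q j) (blockList_sorted q' j)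
      (List.perm_iff_count.mpr fun l => hcount j l)
  obtain ⟨⟨n1, α1⟩, hq1⟩ := q
  obtain ⟨⟨n2, α2⟩, hq2⟩ := q'
  have hn : n1 = n2 := by
    funext j
    have := congrArg List.length (hlist j)
    simpa [blockList] using this
  subst hn
  have hα : α1 = α2 := by
    funext j t
    have hg := List.ofFn_injective (hlist j)
    have := congrFun hg t
    have b1 := strictMono_add_le (hq1.1 j) (hq1.2 j) t
    have b2 := strictMono_add_le (hq2.1 j) (hq2.2 j) t
    simp only [pos] at this b1 b2
    omega
  subst hα
  rfl

lemma dm_surj : Function.Surjective (dm : BT N → Mon N) := by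
  classical
  intro m
  set L : Fin N → List ℕ := fun j => Multiset.sort (Finsupp.toMultiset (m.curry j)) (· ≤ ·)
    with hL
  set nn : Fin N → ℕ := fun j => (L j).length with hnn
  set αα : (j : Fin N) → Fin (nn j) → ℕ := fun j t =>
    (∑ t' ∈ Finset.univ.filter (fun t' => j < t'), nn t') + (t : ℕ) + (L j).get t with hαα
  have hLsorted : ∀ j, List.Pairwise (· ≤ ·) (L j) := fun j => Multiset.pairwise_sort _ _
  have hget : ∀ j (t t' : Fin (nn j)), t < t' → (L j).get t ≤ (L j).get t' := by
    intro j t t' htt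
    exact List.pairwise_iff_get.mp (hLsorted j) t t' htt
  have hsm : ∀ j, StrictMono (αα j) := by
    intro j t t' htt
    have := hget j t t' htt
    have hv : (t : ℕ) < (t' : ℕ) := htt
    simp only [hαα]
    omega
  have hbd : ∀ j (i : Fin (nn j)),
      (∑ t ∈ Finset.univ.filter (fun t => j < t), nn t) ≤ αα j i := by
    intro j i
    simp only [hαα]
    omega
  refine ⟨⟨⟨nn, αα⟩, hsm, hbd⟩, ?_⟩
  ext v
  obtain ⟨j, l⟩ := v
  rw [dm_apply]
  have hbl : blockList ⟨⟨nn, αα⟩, hsm, hbd⟩ j = L j := by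
    rw [blockList]
    have : (fun t : Fin (nn j) => αα j t - pos nn ⟨j, t⟩) = (L j).get := by
      funext t
      simp only [hαα, pos]
      omega
    rw [this, List.ofFn_get]
  rw [hbl]
  rw [← Multiset.coe_count, Multiset.sort_eq, Finsupp.count_toMultiset, Finsupp.curry_apply]


/-! ### finiteness of weight components -/

lemma wdeg_eq_sum (m : Mon N) : wdeg m = ∑ v ∈ m.support, m v * (v.2 + 1) := by
  rw [wdeg, Finsupp.liftAddHom_apply]
  rfl

lemma le_wdeg {m : Mon N} (v : Fin N × ℕ) : m v * (v.2 + 1) ≤ wdeg m := by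
  by_cases hv : v ∈ m.support
  · rw [wdeg_eq_sum]
    exact Finset.single_le_sum (f := fun v => m v * (v.2 + 1)) (fun _ _ => Nat.zero_le _) hv
  · have : m v = 0 := Finsupp.notMem_support_iff.mp hv
    simp [this]

lemma finite_wdeg (p : ℕ) : {m : Mon N | wdeg m = p}.Finite := by
  classical
  set F : Mon N → ((Fin N × Fin (p + 1)) → Fin (p + 1)) := fun m x =>
    ⟨m (x.1, (x.2 : ℕ)) % (p + 1), Nat.mod_lt _ (Nat.succ_pos p)⟩ with hF
  apply Set.Finite.of_finite_image (f := F) (Set.toFinite _)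
  intro m1 hm1 m2 hm2 hFeq
  simp only [Set.mem_setOf_eq] at hm1 hm2
  ext v
  obtain ⟨j, l⟩ := v
  have b1 : m1 (j, l) * (l + 1) ≤ p := by
    have := le_wdeg (m := m1) (j, l); rw [hm1] at this; simpa using this
  have b2 : m2 (j, l) * (l + 1) ≤ p := by
    have := le_wdeg (m := m2) (j, l); rw [hm2] at this; simpa using this
  have c1 : m1 (j, l) ≤ p := le_trans (Nat.le_mul_of_pos_right _ (Nat.succ_pos l)) b1
  have c2 : m2 (j, l) ≤ p := le_trans (Nat.le_mul_of_pos_right _ (Nat.succ_pos l)) b2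
  by_cases hl : l ≤ p
  · have := congrFun hFeq (j, ⟨l, by omega⟩)
    simp only [hF, Fin.mk.injEq] at this
    rwa [Nat.mod_eq_of_lt (by omega), Nat.mod_eq_of_lt (by omega)] at this
  · have h1 : m1 (j, l) = 0 := by
      by_contra h
      have : l + 1 ≤ m1 (j, l) * (l + 1) := Nat.le_mul_of_pos_left _ (by omega)
      omega
    have h2 : m2 (j, l) = 0 := by
      by_contra h
      have : l + 1 ≤ m2 (j, l) * (l + 1) := Nat.le_mul_of_pos_left _ (by omega)
      omega
    rw [h1, h2]

/-! ### the determinant family -/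

noncomputable def Fdet (q : BT N) : MvPolynomial (Fin N × ℕ) ℂ :=
  Matrix.det (Dmat q.1.1 (av q))

lemma coeff_Fdet_dm (q : BT N) : coeff (dm q) (Fdet q) = bin q.1.1 (av q) 1 :=
  coeff_det_diag _ (ha_q q) (hblock_q q)

lemma coeff_Fdet_dm_ne (q : BT N) : coeff (dm q) (Fdet q) ≠ 0 := by
  rw [coeff_Fdet_dm]
  exact bin_one_ne_zero _ (ha_q q)

lemma mem_support_Fdet {q : BT N} {m : Mon N} (hm : m ∈ (Fdet q).support) :
    (m = dm q ∨ MLt (dm q) m) ∧ wdeg m = wdeg (dm q) := by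
  have h := mem_support_det q.1.1 (ha_q q) (hblock_q q) hm
  refine ⟨h.1, ?_⟩
  rw [h.2, dm, wdeg_pmono q.1.1 (ha_q q) 1 (ha_q q)]

/-! ### span -/

lemma monomial_mem_span (m : Mon N) :
    (monomial m (1 : ℂ)) ∈ Submodule.span ℂ (Set.range (Fdet (N := N))) := by
  classical
  set S := Submodule.span ℂ (Set.range (Fdet (N := N))) with hS
  set T : Mon N → Set (Mon N) := fun m => {m' | wdeg m' = wdeg m ∧ MLt m m'} with hT
  have hTfin : ∀ m, (T m).Finite := fun m =>
    (finite_wdeg (wdeg m)).subset (fun m' hm' => hm'.1)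
  suffices H : ∀ (k : ℕ) (m : Mon N), (T m).ncard < k → (monomial m (1 : ℂ)) ∈ S by
    exact H ((T m).ncard + 1) m (by omega)
  intro k
  induction k with
  | zero => intro m hm; omega
  | succ k ih =>
    intro m hm
    obtain ⟨q, hq⟩ := dm_surj m
    have hcne : coeff m (Fdet q) ≠ 0 := by rw [← hq]; exact coeff_Fdet_dm_ne q
    have hmem : m ∈ (Fdet q).support := MvPolynomial.mem_support_iff.mpr hcne
    have hsplit : (monomial m) (coeff m (Fdet q)) =
        Fdet q - ∑ m' ∈ (Fdet q).support.erase m, (monomial m') (coeff m' (Fdet q)) := by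
      rw [eq_sub_iff_add_eq, add_comm, Finset.sum_erase_add _ _ hmem,
        MvPolynomial.support_sum_monomial_coeff]
    have hrest : ∀ m' ∈ (Fdet q).support.erase m,
        (monomial m') (coeff m' (Fdet q)) ∈ S := by
      intro m' hm'
      rw [Finset.mem_erase] at hm'
      obtain ⟨hne, hm's⟩ := hm'
      have hsupp := mem_support_Fdet hm's
      have hMLt : MLt m m' := by
        rcases hsupp.1 with h | h
        · exact absurd (h.trans hq) hne
        · rwa [hq] at h
      have hwd : wdeg m' = wdeg m := by rw [hsupp.2, hq]
      have hssub : T m' ⊂ T m := by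
        constructor
        · intro m'' hm''
          exact ⟨hm''.1.trans hwd, MLt_trans hMLt hm''.2⟩
        · intro hsub
          have : m' ∈ T m := ⟨hwd, hMLt⟩
          have := hsub this
          exact MLt_irrefl m' this.2
      have hlt : (T m').ncard < (T m).ncard := Set.ncard_lt_ncard hssub (hTfin m)
      have := ih m' (by omega)
      have : (monomial m') (coeff m' (Fdet q)) = (coeff m' (Fdet q)) • (monomial m') 1 := by
        rw [MvPolynomial.smul_monomial, smul_eq_mul, mul_one]
      rw [this]
      exact Submodule.smul_mem _ _ (ih m' (by omega))
    have hdet : Fdet q ∈ S := Submodule.subset_span ⟨q, rfl⟩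
    have hmono : (monomial m) (coeff m (Fdet q)) ∈ S := by
      rw [hsplit]
      exact Submodule.sub_mem _ hdet (Submodule.sum_mem _ hrest)
    have : (monomial m) (1 : ℂ) = (coeff m (Fdet q))⁻¹ • (monomial m) (coeff m (Fdet q)) := by
      rw [MvPolynomial.smul_monomial, smul_eq_mul, inv_mul_cancel₀ hcne]
    rw [this]
    exact Submodule.smul_mem _ _ hmono

lemma span_Fdet_top : Submodule.span ℂ (Set.range (Fdet (N := N))) = ⊤ := by
  rw [eq_top_iff]
  intro p _
  rw [← MvPolynomial.support_sum_monomial_coeff p]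
  apply Submodule.sum_mem
  intro v _
  have : (monomial v) (coeff v p) = (coeff v p) • (monomial v) (1 : ℂ) := by
    rw [MvPolynomial.smul_monomial, smul_eq_mul, mul_one]
  rw [this]
  exact Submodule.smul_mem _ _ (monomial_mem_span v)

/-! ### linear independence -/

lemma linearIndependent_Fdet : LinearIndependent ℂ (Fdet (N := N)) := by
  classical
  rw [linearIndependent_iff]
  intro l hl
  by_contra hl0
  have hne : l.support.Nonempty := Finsupp.support_nonempty_iff.mpr hl0
  obtain ⟨m0, hm0, hmin⟩ := exists_minimal (MLt (N := N)) MLt_trans MLt_irrefl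
    (l.support.image dm) (hne.image dm)
  obtain ⟨q0, hq0s, hq0⟩ := Finset.mem_image.mp hm0
  have hcoeff := congrArg (coeff (dm q0)) hl
  rw [Finsupp.linearCombination_apply, Finsupp.sum, MvPolynomial.coeff_sum,
    MvPolynomial.coeff_zero] at hcoeff
  rw [Finset.sum_eq_single_of_mem q0 hq0s] at hcoeff
  · rw [MvPolynomial.coeff_smul, smul_eq_mul] at hcoeff
    have := coeff_Fdet_dm_ne q0
    have hlq0 : l q0 = 0 := by
      rcases mul_eq_zero.mp hcoeff with h | h
      · exact h
      · exact absurd h this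
    exact Finsupp.mem_support_iff.mp hq0s hlq0
  · intro q hqs hqne
    rw [MvPolynomial.coeff_smul, smul_eq_mul]
    have hz : coeff (dm q0) (Fdet q) = 0 := by
      by_contra hnz
      have hsupp := mem_support_Fdet (MvPolynomial.mem_support_iff.mpr hnz)
      rcases hsupp.1 with h | h
      · exact hqne (dm_inj h).symm
      · rw [hq0] at h
        exact hmin (dm q) (Finset.mem_image_of_mem dm hqs) h
    rw [hz, mul_zero]

end Stmt19

/-- the family { det Δ_0(α) : α ∈ B^{N+} } is a basis of the
polynomial ring E = ℂ[x_{0j}^{(l)} : 1 ≤ j ≤ N, l ≥ 0] (formalized as the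
multivariate polynomial ring with variables `X (j, l)` = x_{0j}^{(l)}). Here
B^{N+} is the set of N-tuples of strictly increasing finite sequences with all
entries of α^j at least s_{j+1} = Σ_{t > j} n_t, and Δ_0(α) is the square matrix
of size Σ n_j whose column indexed by (j, t) — occupying position s_{j+1} + t —
has, at row position q, the entry binom(α^j_t, q) x_{0j}^{(α^j_t - q)}. -/
theorem stmt_19 (N : ℕ) :
    let B := {q : Σ n : Fin N → ℕ, (j : Fin N) → Fin (n j) → ℕ //
      (∀ j, StrictMono (q.2 j)) ∧
      ∀ j i, (∑ t ∈ Finset.univ.filter (fun t => j < t), q.1 t) ≤ q.2 j i}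
    let f : B → MvPolynomial (Fin N × ℕ) ℂ := fun q =>
      Matrix.det (fun r c : Σ j : Fin N, Fin (q.1.1 j) =>
        MvPolynomial.C ((q.1.2 c.1 c.2).choose
            ((∑ t ∈ Finset.univ.filter (fun t => r.1 < t), q.1.1 t) + (r.2 : ℕ)) : ℂ)
          * MvPolynomial.X (c.1, q.1.2 c.1 c.2
              - ((∑ t ∈ Finset.univ.filter (fun t => r.1 < t), q.1.1 t) + (r.2 : ℕ))))
    LinearIndependent ℂ f ∧ Submodule.span ℂ (Set.range f) = ⊤ := by
  intro B f
  have hf : f = Stmt19.Fdet (N := N) := rfl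
  rw [hf]
  exact ⟨Stmt19.linearIndependent_Fdet, Stmt19.span_Fdet_top⟩
end
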